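/- arXiv:2002.09157 — 5 statements merged into one kernel-verified Lean document; each statement's English description precedes it below -/
import Mathlib

section
/- There exists a finite constant c_n depending only on the space dimension n such that for every hard-sphere flow of N particles of radius a>0 in ℝ^n (with only binary collisions and finitely many collisions in every time slab), the family of numbers |v'−v|, indexed by all kinks of the flow over all time, is summable and satisfies ∑_{kinks} |v'−v| ≤ c_n · N² · 𝐯, where v and v' are the incoming and outgoing velocities at the kink and 𝐯 is the standard deviation of the velocity distribution. -/
open scoped BigOperators RealInnerProductSpace
open Filter

noncomputable section

/-- A hard-sphere flow of `N` identical particles of radius `a > 0` and unit mass in `ℝⁿ`,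
with only binary collisions and finitely many collisions in every time slab.
`y α` is the (continuous, piecewise affine) center trajectory of particle `α`,
`v α t` is its outgoing velocity (the right derivative of `y α` at `t`) and
`vIn α t` its incoming velocity (the left limit of the velocity at `t`).
A *kink* of particle `α` is a time `t` with `vIn α t ≠ v α t`. -/
structure HardSphereFlow (n N : ℕ) where
  /-- the common radius of the spheres -/
  a : ℝ
  a_pos : 0 < a
  /-- center trajectories -/
  y : Fin N → ℝ → EuclideanSpace ℝ (Fin n)
  /-- outgoing (right) velocities -/
  v : Fin N → ℝ → EuclideanSpace ℝ (Fin n)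
  /-- incoming (left) velocities -/
  vIn : Fin N → ℝ → EuclideanSpace ℝ (Fin n)
  y_continuous : ∀ α, Continuous (y α)
  /-- `v α t` is the right derivative of `y α` at `t` -/
  v_right_deriv : ∀ α t, HasDerivWithinAt (y α) (v α t) (Set.Ici t) t
  /-- `vIn α t` is the left limit of the velocity at `t` -/
  vIn_left_limit : ∀ α t, ∀ᶠ s in nhdsWithin t (Set.Iio t), v α s = vIn α t
  /-- the velocity is constant between consecutive kinks, and the motion is affine there -/
  piecewise_affine : ∀ (α : Fin N) (s t : ℝ), s ≤ t →
    (∀ u, s < u → u ≤ t → vIn α u = v α u) →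
    v α t = v α s ∧ y α t = y α s + (t - s) • v α s
  /-- the set of kink times is finite in every time slab -/
  kinks_finite : ∀ (α : Fin N) (t₁ t₂ : ℝ),
    {t | t ∈ Set.Icc t₁ t₂ ∧ vIn α t ≠ v α t}.Finite
  /-- hard spheres never overlap -/
  no_overlap : ∀ (t : ℝ) (α β : Fin N), α ≠ β → 2 * a ≤ dist (y β t) (y α t)
  /-- at a kink of particle `α` there is exactly one particle touching it -/
  partner_unique : ∀ (α : Fin N) (t : ℝ), vIn α t ≠ v α t →
    ∃! β : Fin N, β ≠ α ∧ dist (y β t) (y α t) = 2 * a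
  /-- at a kink, the touching particle also has a kink, and the collision rules hold:
  conservation of momentum and of kinetic energy, frictionless (normal) exchange of
  momentum, and the approach/separation inequalities -/
  collision_rules : ∀ (α β : Fin N) (t : ℝ), vIn α t ≠ v α t → β ≠ α →
    dist (y β t) (y α t) = 2 * a →
      vIn β t ≠ v β t ∧
      v α t + v β t = vIn α t + vIn β t ∧
      ‖v α t‖ ^ 2 + ‖v β t‖ ^ 2 = ‖vIn α t‖ ^ 2 + ‖vIn β t‖ ^ 2 ∧
      v α t - vIn α t = vIn β t - v β t ∧
      (∃ c : ℝ, v α t - vIn α t = c • (y β t - y α t)) ∧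
      ⟪vIn β t - vIn α t, y β t - y α t⟫ < 0 ∧
      0 < ⟪v β t - v α t, y β t - y α t⟫
  /-- no two distinct collisions occur at the same time -/
  one_collision_at_a_time : ∀ (t : ℝ) (α β : Fin N),
    vIn α t ≠ v α t → vIn β t ≠ v β t → β ≠ α →
    dist (y β t) (y α t) = 2 * a

namespace HardSphereFlow

variable {n N : ℕ} (F : HardSphereFlow n N)

/-- The set of kink times of particle `α`. -/
def KinkTimes (α : Fin N) : Set ℝ := {t : ℝ | F.vIn α t ≠ F.v α t}

/-- The set of all kinks `(α, t*)` of the flow. -/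
def Kinks : Set (Fin N × ℝ) := {p : Fin N × ℝ | F.vIn p.1 p.2 ≠ F.v p.1 p.2}

/-- The total energy `E = ½ ∑ |v_α(0)|²`. -/
def totalEnergy : ℝ := (1 / 2) * ∑ α : Fin N, ‖F.v α 0‖ ^ 2

/-- The mean velocity `w = Q/N`. -/
def meanVelocity : EuclideanSpace ℝ (Fin n) := (N : ℝ)⁻¹ • ∑ α : Fin N, F.v α 0

/-- The root mean square velocity `v̄ = √(2E/N)`. -/
def vbar : ℝ := Real.sqrt (2 * F.totalEnergy / N)

/-- The standard deviation `𝐯 = √(v̄² - |w|²)` of the velocity distribution. -/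
def vdev : ℝ := Real.sqrt (F.vbar ^ 2 - ‖F.meanVelocity‖ ^ 2)

end HardSphereFlow

lemma ratio_mono {E : Type*} [NormedAddCommGroup E] [InnerProductSpace ℝ E]
    (q x : E) (c : ℝ) (hc : 0 ≤ c) (hx : x ≠ 0) (hz : x + c • q ≠ 0) :
    ⟪q, x⟫ / ‖x‖ ≤ ⟪q, x + c • q⟫ / ‖x + c • q‖ := by
  have hxn : (0:ℝ) < ‖x‖ := norm_pos_iff.mpr hx
  have hzn : (0:ℝ) < ‖x + c • q‖ := norm_pos_iff.mpr hz
  rw [div_le_div_iff₀ hxn hzn]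
  have hinner : ⟪q, x + c • q⟫ = ⟪q, x⟫ + c * ‖q‖ ^ 2 := by
    rw [inner_add_right, real_inner_smul_right, real_inner_self_eq_norm_sq]
  rw [hinner]
  have h1 : ‖x + c • q‖ ≤ ‖x‖ + c * ‖q‖ := by
    calc ‖x + c • q‖ ≤ ‖x‖ + ‖c • q‖ := norm_add_le _ _
    _ = ‖x‖ + c * ‖q‖ := by rw [norm_smul, Real.norm_of_nonneg hc]
  have h2 : ‖x‖ ≤ ‖x + c • q‖ + c * ‖q‖ := by
    calc ‖x‖ = ‖(x + c • q) - c • q‖ := by rw [add_sub_cancel_right]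
    _ ≤ ‖x + c • q‖ + ‖c • q‖ := norm_sub_le _ _
    _ = ‖x + c • q‖ + c * ‖q‖ := by rw [norm_smul, Real.norm_of_nonneg hc]
  have hA : |⟪q, x⟫| ≤ ‖q‖ * ‖x‖ := abs_real_inner_le_norm q x
  rcases le_or_gt 0 (⟪q, x⟫ : ℝ) with h | h
  · have hA' : (⟪q, x⟫:ℝ) ≤ ‖q‖ * ‖x‖ := (abs_le.mp hA).2
    nlinarith [mul_nonneg hc (norm_nonneg q), mul_nonneg h (mul_nonneg hc (norm_nonneg q))]
  · have hA' : -(‖q‖ * ‖x‖) ≤ (⟪q, x⟫:ℝ) := (abs_le.mp hA).1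
    nlinarith [mul_nonneg hc (norm_nonneg q)]

/-- `|⟪q,w⟫/‖w‖| ≤ ‖q‖`, including the degenerate case `w = 0`. -/
lemma ratio_abs_le {E : Type*} [NormedAddCommGroup E] [InnerProductSpace ℝ E]
    (q w : E) : |(⟪q, w⟫ : ℝ) / ‖w‖| ≤ ‖q‖ := by
  rcases eq_or_ne w 0 with rfl | hw
  · simp
  · have hwn : (0:ℝ) < ‖w‖ := norm_pos_iff.mpr hw
    rw [abs_div, abs_of_pos hwn, div_le_iff₀ hwn]
    exact abs_real_inner_le_norm q w

namespace HardSphereFlow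

variable {n N : ℕ} (F : HardSphereFlow n N)

lemma y_sub_ne (t : ℝ) {γ δ : Fin N} (h : δ ≠ γ) : F.y δ t - F.y γ t ≠ 0 := by
  have h2 := F.no_overlap t γ δ h.symm
  have ha := F.a_pos
  intro h0
  rw [dist_eq_norm, h0, norm_zero] at h2
  linarith

/-- The "virial-type" functional `D(t)` with outgoing velocities. -/
def Dfun (t : ℝ) : ℝ :=
  (1/2) * ∑ γ : Fin N, ∑ δ : Fin N,
    (⟪F.v δ t - F.v γ t, F.y δ t - F.y γ t⟫ : ℝ) / ‖F.y δ t - F.y γ t‖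

/-- The same functional with incoming velocities. -/
def DfunIn (t : ℝ) : ℝ :=
  (1/2) * ∑ γ : Fin N, ∑ δ : Fin N,
    (⟪F.vIn δ t - F.vIn γ t, F.y δ t - F.y γ t⟫ : ℝ) / ‖F.y δ t - F.y γ t‖

/-- If particle `α` has no kink in the open interval `(s, T)`, then its incoming
velocity at `T` equals its velocity at `s`. -/
lemma vIn_eq_of_noKinks (α : Fin N) {s T : ℝ} (hsT : s < T)
    (h : ∀ t, s < t → t < T → F.vIn α t = F.v α t) : F.vIn α T = F.v α s := by
  have h1 := F.vIn_left_limit α T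
  have h2 : ∀ᶠ r in nhdsWithin T (Set.Iio T), s < r :=
    eventually_nhdsWithin_of_eventually_nhds (eventually_gt_nhds hsT)
  have h3 : ∀ᶠ r in nhdsWithin T (Set.Iio T), r ∈ Set.Iio T := eventually_mem_nhdsWithin
  haveI : (nhdsWithin T (Set.Iio T)).NeBot := nhdsLT_neBot T
  obtain ⟨r, hr1, hr2, hr3⟩ := (h1.and (h2.and h3)).exists
  have hv : F.v α r = F.v α s :=
    (F.piecewise_affine α s r (le_of_lt hr2) (fun t ht1 ht2 => h t ht1 (lt_of_le_of_lt ht2 hr3))).1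
  rw [← hr1, hv]

/-- If particle `α` has no kink in the open interval `(s, T)`, its position at `T`
is given by the affine motion from `s`. -/
lemma y_eq_of_noKinks (α : Fin N) {s T : ℝ} (hsT : s < T)
    (h : ∀ t, s < t → t < T → F.vIn α t = F.v α t) :
    F.y α T = F.y α s + (T - s) • F.v α s := by
  haveI : (nhdsWithin T (Set.Iio T)).NeBot := nhdsLT_neBot T
  have h2 : ∀ᶠ r in nhdsWithin T (Set.Iio T), s < r :=
    eventually_nhdsWithin_of_eventually_nhds (eventually_gt_nhds hsT)
  have h3 : ∀ᶠ r in nhdsWithin T (Set.Iio T), r ∈ Set.Iio T := eventually_mem_nhdsWithin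
  have heq : ∀ᶠ r in nhdsWithin T (Set.Iio T),
      F.y α r = F.y α s + (r - s) • F.v α s := by
    filter_upwards [h2, h3] with r hr2 hr3
    exact (F.piecewise_affine α s r (le_of_lt hr2)
      (fun t ht1 ht2 => h t ht1 (lt_of_le_of_lt ht2 hr3))).2
  have hb : Filter.Tendsto (F.y α) (nhdsWithin T (Set.Iio T)) (nhds (F.y α T)) :=
    ((F.y_continuous α).tendsto T).mono_left nhdsWithin_le_nhds
  have ha : Filter.Tendsto (fun r => F.y α s + (r - s) • F.v α s)
      (nhdsWithin T (Set.Iio T)) (nhds (F.y α s + (T - s) • F.v α s)) := by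
    apply Filter.Tendsto.mono_left _ nhdsWithin_le_nhds
    exact (Continuous.tendsto (by continuity) T)
  exact tendsto_nhds_unique (hb.congr' heq) ha

end HardSphereFlow
namespace HardSphereFlow

variable {n N : ℕ} (F : HardSphereFlow n N)

/-- Structure of a collision: the partner, the fact that no other particle kinks,
and the collision relations in a convenient form. -/
lemma kink_pair (t : ℝ) (α : Fin N) (hα : F.vIn α t ≠ F.v α t) :
    ∃ β : Fin N, β ≠ α ∧
      (∀ γ, γ ≠ α → γ ≠ β → F.vIn γ t = F.v γ t) ∧
      F.v α t + F.v β t = F.vIn α t + F.vIn β t ∧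
      ‖F.v α t‖ ^ 2 + ‖F.v β t‖ ^ 2 = ‖F.vIn α t‖ ^ 2 + ‖F.vIn β t‖ ^ 2 ∧
      F.v β t - F.vIn β t = -(F.v α t - F.vIn α t) ∧
      ‖F.y β t - F.y α t‖ = 2 * F.a ∧
      ∃ c : ℝ, c < 0 ∧ F.v α t - F.vIn α t = c • (F.y β t - F.y α t) := by
  obtain ⟨β, ⟨hβα, hdist⟩, huniq⟩ := F.partner_unique α t hα
  obtain ⟨hkβ, hmom, hen, hrefl, ⟨c, hc⟩, happ, hsep⟩ := F.collision_rules α β t hα hβα hdist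
  have hnormu : ‖F.y β t - F.y α t‖ = 2 * F.a := by rw [← dist_eq_norm]; exact hdist
  have hupos : (0:ℝ) < ‖F.y β t - F.y α t‖ := by
    rw [hnormu]; linarith [F.a_pos]
  have hΔβ : F.v β t - F.vIn β t = -(F.v α t - F.vIn α t) := by rw [hrefl, neg_sub]
  refine ⟨β, hβα, ?_, hmom, hen, hΔβ, hnormu, c, ?_, hc⟩
  · intro γ hγα hγβ
    by_contra hγ
    exact hγβ (huniq γ ⟨hγα, F.one_collision_at_a_time t α γ hα hγ hγα⟩)
  · -- c < 0
    have hv : F.v β t - F.v α t = (F.vIn β t - F.vIn α t)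
        - c • (F.y β t - F.y α t) - c • (F.y β t - F.y α t) := by
      rw [← hc]
      have h1 : F.v α t = F.vIn α t + F.vIn β t - F.v β t := by
        rw [← hmom]; abel
      rw [h1]; abel
    have hiv : (⟪F.v β t - F.v α t, F.y β t - F.y α t⟫ : ℝ)
        = ⟪F.vIn β t - F.vIn α t, F.y β t - F.y α t⟫
          - c * ‖F.y β t - F.y α t‖ ^ 2 - c * ‖F.y β t - F.y α t‖ ^ 2 := by
      rw [hv, inner_sub_left, inner_sub_left, real_inner_smul_left,
        real_inner_self_eq_norm_sq]
    rw [hiv] at hsep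
    nlinarith [sq_nonneg ‖F.y β t - F.y α t‖, hupos]

/-- Conservation of momentum and energy across any time. -/
lemma conserve_at (t : ℝ) :
    ∑ γ : Fin N, F.v γ t = ∑ γ : Fin N, F.vIn γ t ∧
    ∑ γ : Fin N, ‖F.v γ t‖ ^ 2 = ∑ γ : Fin N, ‖F.vIn γ t‖ ^ 2 := by
  by_cases hk : ∀ γ, F.vIn γ t = F.v γ t
  · exact ⟨Finset.sum_congr rfl fun γ _ => (hk γ).symm,
      Finset.sum_congr rfl fun γ _ => by rw [hk γ]⟩
  · push_neg at hk
    obtain ⟨α, hα⟩ := hk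
    obtain ⟨β, hβα, hoth, hmom, hen, hΔβ, hnormu, c, hclt, hceq⟩ := F.kink_pair t α hα
    have hαβ : α ≠ β := hβα.symm
    constructor
    · have h0 : ∑ γ : Fin N, (F.v γ t - F.vIn γ t) = 0 := by
        rw [Finset.sum_eq_add_of_mem α β (Finset.mem_univ α) (Finset.mem_univ β) hαβ
          (fun γ _ hγ => by rw [hoth γ hγ.1 hγ.2, sub_self])]
        rw [hΔβ]; abel
      rw [Finset.sum_sub_distrib] at h0
      exact sub_eq_zero.mp h0
    · have h0 : ∑ γ : Fin N, (‖F.v γ t‖ ^ 2 - ‖F.vIn γ t‖ ^ 2) = 0 := by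
        rw [Finset.sum_eq_add_of_mem α β (Finset.mem_univ α) (Finset.mem_univ β) hαβ
          (fun γ _ hγ => by rw [hoth γ hγ.1 hγ.2, sub_self])]
        linarith [hen]
      rw [Finset.sum_sub_distrib] at h0
      exact sub_eq_zero.mp h0

end HardSphereFlow
namespace HardSphereFlow

variable {n N : ℕ} (F : HardSphereFlow n N)

/-- At any time, `D` jumps up by at least the total velocity-jump magnitude. -/
lemma jump (t : ℝ) :
    F.DfunIn t + ∑ γ : Fin N, ‖F.v γ t - F.vIn γ t‖ ≤ F.Dfun t := by
  classical
  by_cases hk : ∀ γ, F.vIn γ t = F.v γ t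
  · have h1 : ∑ γ : Fin N, ‖F.v γ t - F.vIn γ t‖ = 0 :=
      Finset.sum_eq_zero fun γ _ => by rw [hk γ, sub_self, norm_zero]
    have h2 : F.DfunIn t = F.Dfun t := by
      unfold Dfun DfunIn
      congr 1
      exact Finset.sum_congr rfl fun γ _ => Finset.sum_congr rfl fun δ _ => by
        rw [hk γ, hk δ]
    rw [h1, h2]; simp
  · push_neg at hk
    obtain ⟨α, hα⟩ := hk
    obtain ⟨β, hβα, hoth, hmom, hen, hΔβ, hnormu, c, hclt, hceq⟩ := F.kink_pair t α hα
    have hαβ : α ≠ β := hβα.symm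
    have ha2 : (0:ℝ) < 2 * F.a := by linarith [F.a_pos]
    set u : EuclideanSpace ℝ (Fin n) := F.y β t - F.y α t with hu
    set Δ : EuclideanSpace ℝ (Fin n) := F.v α t - F.vIn α t with hΔ
    set hf : Fin N → Fin N → ℝ := fun γ δ =>
      (⟪F.v γ t - F.vIn γ t, F.y γ t - F.y δ t⟫ : ℝ) / ‖F.y γ t - F.y δ t‖ with hhf
    have hsplit : ∀ γ δ : Fin N,
        (⟪F.v δ t - F.v γ t, F.y δ t - F.y γ t⟫ : ℝ) / ‖F.y δ t - F.y γ t‖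
          - (⟪F.vIn δ t - F.vIn γ t, F.y δ t - F.y γ t⟫ : ℝ) / ‖F.y δ t - F.y γ t‖
        = hf δ γ + hf γ δ := by
      intro γ δ
      have hw : F.y γ t - F.y δ t = -(F.y δ t - F.y γ t) := (neg_sub _ _).symm
      simp only [hhf, hw, norm_neg, inner_neg_right]
      rw [div_sub_div_same, neg_div, ← sub_eq_add_neg, ← sub_div, ← inner_sub_left,
        ← inner_sub_left]
      congr 2
      abel
    have hkey : F.Dfun t - F.DfunIn t = ∑ γ : Fin N, ∑ δ : Fin N, hf γ δ := by
      unfold Dfun DfunIn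
      rw [← mul_sub, ← Finset.sum_sub_distrib]
      have hcg : ∀ γ ∈ Finset.univ, (∑ δ : Fin N,
            (⟪F.v δ t - F.v γ t, F.y δ t - F.y γ t⟫ : ℝ) / ‖F.y δ t - F.y γ t‖)
          - (∑ δ : Fin N,
            (⟪F.vIn δ t - F.vIn γ t, F.y δ t - F.y γ t⟫ : ℝ) / ‖F.y δ t - F.y γ t‖)
          = ∑ δ : Fin N, (hf δ γ + hf γ δ) := by
        intro γ _
        rw [← Finset.sum_sub_distrib]
        exact Finset.sum_congr rfl fun δ _ => hsplit γ δ
      rw [Finset.sum_congr rfl hcg]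
      have hsum2 : ∑ γ : Fin N, ∑ δ : Fin N, (hf δ γ + hf γ δ)
          = (∑ γ : Fin N, ∑ δ : Fin N, hf γ δ) + (∑ γ : Fin N, ∑ δ : Fin N, hf γ δ) := by
        simp only [Finset.sum_add_distrib]
        rw [Finset.sum_comm]
      rw [hsum2]; ring
    have hΔother : ∀ γ, γ ≠ α → γ ≠ β → F.v γ t - F.vIn γ t = 0 := by
      intro γ h1 h2; rw [hoth γ h1 h2, sub_self]
    have hfother : ∀ γ δ, γ ≠ α → γ ≠ β → hf γ δ = 0 := by
      intro γ δ h1 h2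
      simp only [hhf, hΔother γ h1 h2, inner_zero_left, zero_div]
    have hΔnorm : ‖Δ‖ = -c * (2 * F.a) := by
      rw [hceq, norm_smul, Real.norm_eq_abs, abs_of_neg hclt, hnormu]
    have hfdiag : ∀ γ, hf γ γ = 0 := by
      intro γ; simp [hhf]
    have hfβα : hf β α = ‖Δ‖ := by
      simp only [hhf, hΔβ, ← hu]
      rw [hΔnorm, hceq, inner_neg_left, real_inner_smul_left,
        real_inner_self_eq_norm_sq, hnormu]
      field_simp
    have hfαβ : hf α β = ‖Δ‖ := by
      simp only [hhf, ← hΔ]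
      have hyαβ : F.y α t - F.y β t = -u := by rw [hu]; abel
      rw [hyαβ, norm_neg, inner_neg_right, hΔnorm, hceq, real_inner_smul_left,
        real_inner_self_eq_norm_sq, hnormu]
      field_simp
    have hfcross : ∀ δ, δ ≠ α → δ ≠ β → 0 ≤ hf α δ + hf β δ := by
      intro δ h1 h2
      set p : EuclideanSpace ℝ (Fin n) := F.y δ t - F.y β t with hp
      have hp0 : p ≠ 0 := F.y_sub_ne t h2
      have hone : p + (1:ℝ) • u = F.y δ t - F.y α t := by
        rw [one_smul, hp, hu]; abel
      have hq0 : p + (1:ℝ) • u ≠ 0 := by rw [hone]; exact F.y_sub_ne t h1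
      have hrm := ratio_mono u p 1 zero_le_one hp0 hq0
      rw [hone] at hrm
      have e1 : hf α δ = (-c) * ((⟪u, F.y δ t - F.y α t⟫ : ℝ) / ‖F.y δ t - F.y α t‖) := by
        simp only [hhf, ← hΔ]
        have hy : F.y α t - F.y δ t = -(F.y δ t - F.y α t) := by abel
        rw [hy, inner_neg_right, norm_neg, hceq, real_inner_smul_left]
        ring
      have e2 : hf β δ = -((-c) * ((⟪u, p⟫ : ℝ) / ‖p‖)) := by
        simp only [hhf, hΔβ]
        have hy : F.y β t - F.y δ t = -p := by rw [hp]; abel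
        rw [hy, inner_neg_neg, norm_neg, hceq, real_inner_smul_left]
        ring
      rw [e1, e2]
      have hc' : (0:ℝ) ≤ -c := by linarith
      nlinarith [mul_le_mul_of_nonneg_left hrm hc']
    have hL : ∑ γ : Fin N, ‖F.v γ t - F.vIn γ t‖ = ‖Δ‖ + ‖Δ‖ := by
      rw [Finset.sum_eq_add_of_mem α β (Finset.mem_univ α) (Finset.mem_univ β) hαβ
        (fun γ _ h => by rw [hΔother γ h.1 h.2, norm_zero])]
      rw [hΔβ, norm_neg, ← hΔ]
    have hR : ‖Δ‖ + ‖Δ‖ ≤ ∑ γ : Fin N, ∑ δ : Fin N, hf γ δ := by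
      rw [Finset.sum_eq_add_of_mem α β (Finset.mem_univ α) (Finset.mem_univ β) hαβ
        (fun γ _ h => Finset.sum_eq_zero fun δ _ => hfother γ δ h.1 h.2)]
      rw [← Finset.sum_add_distrib]
      have hpt : ∀ δ ∈ (Finset.univ : Finset (Fin N)),
          (if δ = α then ‖Δ‖ else if δ = β then ‖Δ‖ else 0) ≤ hf α δ + hf β δ := by
        intro δ _
        by_cases h1 : δ = α
        · subst h1; simp [hfdiag, hfβα]
        · by_cases h2 : δ = β
          · subst h2; simp [h1, hfdiag, hfαβ]
          · simp only [if_neg h1, if_neg h2]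
            exact hfcross δ h1 h2
      have hsum := Finset.sum_le_sum hpt
      have hmin : ∑ δ : Fin N, (if δ = α then ‖Δ‖ else if δ = β then ‖Δ‖ else 0)
          = ‖Δ‖ + ‖Δ‖ := by
        rw [Finset.sum_eq_add_of_mem α β (Finset.mem_univ α) (Finset.mem_univ β) hαβ
          (fun γ _ h => by simp [h.1, h.2])]
        simp [hβα]
      linarith
    linarith [hkey, hL, hR]

end HardSphereFlow
namespace HardSphereFlow

variable {n N : ℕ} (F : HardSphereFlow n N)

lemma kinkSet_finite (s u : ℝ) :
    {p : Fin N × ℝ | p.2 ∈ Set.Ioc s u ∧ F.vIn p.1 p.2 ≠ F.v p.1 p.2}.Finite := by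
  apply Set.Finite.subset (Set.Finite.biUnion (Set.finite_univ (α := Fin N))
    (fun α _ => ((F.kinks_finite α s u).image (fun t => (α, t)))))
  rintro ⟨α, t⟩ ⟨ht, hk⟩
  exact Set.mem_biUnion (Set.mem_univ α) ⟨t, ⟨Set.Ioc_subset_Icc_self ht, hk⟩, rfl⟩

/-- The finite set of kinks with time in `(s, u]`. -/
def kinkFinset (s u : ℝ) : Finset (Fin N × ℝ) := (F.kinkSet_finite s u).toFinset

lemma mem_kinkFinset {s u : ℝ} {p : Fin N × ℝ} :
    p ∈ F.kinkFinset s u ↔ (s < p.2 ∧ p.2 ≤ u) ∧ F.vIn p.1 p.2 ≠ F.v p.1 p.2 := by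
  simp [kinkFinset, Set.Finite.mem_toFinset, Set.mem_Ioc]

/-- If there are no kinks in `(s, u]`, then `D` is nondecreasing on `[s, u]`. -/
lemma D_mono_noKinks {s u : ℝ} (hsu : s ≤ u)
    (h : ∀ (γ : Fin N) t, s < t → t ≤ u → F.vIn γ t = F.v γ t) :
    F.Dfun s ≤ F.Dfun u := by
  have hv : ∀ γ, F.v γ u = F.v γ s :=
    fun γ => (F.piecewise_affine γ s u hsu (fun t h1 h2 => h γ t h1 h2)).1
  have hy : ∀ γ, F.y γ u = F.y γ s + (u - s) • F.v γ s :=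
    fun γ => (F.piecewise_affine γ s u hsu (fun t h1 h2 => h γ t h1 h2)).2
  unfold Dfun
  have hle : ∀ γ δ : Fin N,
      (⟪F.v δ s - F.v γ s, F.y δ s - F.y γ s⟫ : ℝ) / ‖F.y δ s - F.y γ s‖
      ≤ (⟪F.v δ u - F.v γ u, F.y δ u - F.y γ u⟫ : ℝ) / ‖F.y δ u - F.y γ u‖ := by
    intro γ δ
    rcases eq_or_ne δ γ with rfl | hne
    · simp
    · have hyu : F.y δ u - F.y γ u
          = (F.y δ s - F.y γ s) + (u - s) • (F.v δ s - F.v γ s) := by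
        rw [hy δ, hy γ, smul_sub]; abel
      rw [hv δ, hv γ, hyu]
      exact ratio_mono _ _ _ (by linarith) (F.y_sub_ne s hne)
        (by rw [← hyu]; exact F.y_sub_ne u hne)
  have := Finset.sum_le_sum (fun γ (_ : γ ∈ Finset.univ) =>
    Finset.sum_le_sum (fun δ (_ : δ ∈ Finset.univ) => hle γ δ))
  linarith

/-- If there are no kinks in the open interval `(s, T)`, then `D(s) ≤ DIn(T)`. -/
lemma D_le_DIn_noKinks {s T : ℝ} (hsT : s < T)
    (h : ∀ (γ : Fin N) t, s < t → t < T → F.vIn γ t = F.v γ t) :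
    F.Dfun s ≤ F.DfunIn T := by
  have hv : ∀ γ, F.vIn γ T = F.v γ s :=
    fun γ => F.vIn_eq_of_noKinks γ hsT (fun t h1 h2 => h γ t h1 h2)
  have hy : ∀ γ, F.y γ T = F.y γ s + (T - s) • F.v γ s :=
    fun γ => F.y_eq_of_noKinks γ hsT (fun t h1 h2 => h γ t h1 h2)
  unfold Dfun DfunIn
  have hle : ∀ γ δ : Fin N,
      (⟪F.v δ s - F.v γ s, F.y δ s - F.y γ s⟫ : ℝ) / ‖F.y δ s - F.y γ s‖
      ≤ (⟪F.vIn δ T - F.vIn γ T, F.y δ T - F.y γ T⟫ : ℝ) / ‖F.y δ T - F.y γ T‖ := by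
    intro γ δ
    rcases eq_or_ne δ γ with rfl | hne
    · simp
    · have hyu : F.y δ T - F.y γ T
          = (F.y δ s - F.y γ s) + (T - s) • (F.v δ s - F.v γ s) := by
        rw [hy δ, hy γ, smul_sub]; abel
      rw [hv δ, hv γ, hyu]
      exact ratio_mono _ _ _ (by linarith) (F.y_sub_ne s hne)
        (by rw [← hyu]; exact F.y_sub_ne T hne)
  have := Finset.sum_le_sum (fun γ (_ : γ ∈ Finset.univ) =>
    Finset.sum_le_sum (fun δ (_ : δ ∈ Finset.univ) => hle γ δ))
  linarith

/-- Similarly, velocities at `u` equal those at `s` when no kinks in `(s,u]`. -/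
lemma v_eq_noKinks {s u : ℝ} (hsu : s ≤ u)
    (h : ∀ (γ : Fin N) t, s < t → t ≤ u → F.vIn γ t = F.v γ t) (γ : Fin N) :
    F.v γ u = F.v γ s :=
  (F.piecewise_affine γ s u hsu (fun t h1 h2 => h γ t h1 h2)).1

end HardSphereFlow
namespace HardSphereFlow

variable {n N : ℕ} (F : HardSphereFlow n N)

lemma main_base {s u : ℝ} (hsu : s ≤ u) (hempty : F.kinkFinset s u = ∅) :
    (∑ γ : Fin N, F.v γ u = ∑ γ : Fin N, F.v γ s) ∧
    (∑ γ : Fin N, ‖F.v γ u‖ ^ 2 = ∑ γ : Fin N, ‖F.v γ s‖ ^ 2) ∧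
    F.Dfun s + ∑ p ∈ F.kinkFinset s u, ‖F.v p.1 p.2 - F.vIn p.1 p.2‖ ≤ F.Dfun u := by
  have hnk : ∀ (γ : Fin N) t, s < t → t ≤ u → F.vIn γ t = F.v γ t := by
    intro γ t h1 h2
    by_contra hne
    have hm : (γ, t) ∈ F.kinkFinset s u := F.mem_kinkFinset.mpr ⟨⟨h1, h2⟩, hne⟩
    rw [hempty] at hm
    exact absurd hm (Finset.notMem_empty _)
  refine ⟨Finset.sum_congr rfl fun γ _ => F.v_eq_noKinks hsu hnk γ,
    Finset.sum_congr rfl fun γ _ => by rw [F.v_eq_noKinks hsu hnk γ], ?_⟩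
  rw [hempty, Finset.sum_empty, add_zero]
  exact F.D_mono_noKinks hsu hnk

lemma main_ind (k : ℕ) : ∀ s u : ℝ, s ≤ u → (F.kinkFinset s u).card ≤ k →
    (∑ γ : Fin N, F.v γ u = ∑ γ : Fin N, F.v γ s) ∧
    (∑ γ : Fin N, ‖F.v γ u‖ ^ 2 = ∑ γ : Fin N, ‖F.v γ s‖ ^ 2) ∧
    F.Dfun s + ∑ p ∈ F.kinkFinset s u, ‖F.v p.1 p.2 - F.vIn p.1 p.2‖ ≤ F.Dfun u := by
  induction k with
  | zero =>
    intro s u hsu hcard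
    exact F.main_base hsu (Finset.card_eq_zero.mp (Nat.le_zero.mp hcard))
  | succ k ih =>
    intro s u hsu hcard
    by_cases hempty : F.kinkFinset s u = ∅
    · exact F.main_base hsu hempty
    · classical
      have hne : (F.kinkFinset s u).Nonempty := Finset.nonempty_iff_ne_empty.mpr hempty
      have htmsne : ((F.kinkFinset s u).image Prod.snd).Nonempty := hne.image _
      set T := ((F.kinkFinset s u).image Prod.snd).min' htmsne with hT
      have hTmem : T ∈ (F.kinkFinset s u).image Prod.snd :=
        Finset.min'_mem _ htmsne
      obtain ⟨p0, hp0, hp0T⟩ := Finset.mem_image.mp hTmem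
      have hp0' := F.mem_kinkFinset.mp hp0
      have hsT : s < T := by rw [← hp0T]; exact hp0'.1.1
      have hTu : T ≤ u := by rw [← hp0T]; exact hp0'.1.2
      have hTmin : ∀ p ∈ F.kinkFinset s u, T ≤ p.2 :=
        fun p hp => Finset.min'_le _ _ (Finset.mem_image_of_mem _ hp)
      have hnk : ∀ (γ : Fin N) t, s < t → t < T → F.vIn γ t = F.v γ t := by
        intro γ t h1 h2
        by_contra hne'
        have hm : (γ, t) ∈ F.kinkFinset s u :=
          F.mem_kinkFinset.mpr ⟨⟨h1, le_trans (le_of_lt h2) hTu⟩, hne'⟩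
        exact absurd (hTmin _ hm) (not_le.mpr h2)
      have hvInT : ∀ γ, F.vIn γ T = F.v γ s :=
        fun γ => F.vIn_eq_of_noKinks γ hsT (fun t a b => hnk γ t a b)
      obtain ⟨hmomT, henT⟩ := F.conserve_at T
      have hsub : F.kinkFinset T u ⊆ F.kinkFinset s u := by
        intro p hp
        have h' := F.mem_kinkFinset.mp hp
        exact F.mem_kinkFinset.mpr ⟨⟨lt_trans hsT h'.1.1, h'.1.2⟩, h'.2⟩
      have hp0notin : p0 ∉ F.kinkFinset T u := by
        intro hcon
        have h' := (F.mem_kinkFinset.mp hcon).1.1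
        rw [hp0T] at h'
        exact lt_irrefl _ h'
      have hcard' : (F.kinkFinset T u).card ≤ k := by
        have := Finset.card_lt_card ⟨hsub, fun hsup => hp0notin (hsup hp0)⟩
        omega
      obtain ⟨ihm, ihe, ihD⟩ := ih T u hTu hcard'
      refine ⟨?_, ?_, ?_⟩
      · calc ∑ γ : Fin N, F.v γ u = ∑ γ : Fin N, F.v γ T := ihm
        _ = ∑ γ : Fin N, F.vIn γ T := hmomT
        _ = ∑ γ : Fin N, F.v γ s := Finset.sum_congr rfl fun γ _ => hvInT γ
      · calc ∑ γ : Fin N, ‖F.v γ u‖ ^ 2 = ∑ γ : Fin N, ‖F.v γ T‖ ^ 2 := ihe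
        _ = ∑ γ : Fin N, ‖F.vIn γ T‖ ^ 2 := henT
        _ = ∑ γ : Fin N, ‖F.v γ s‖ ^ 2 :=
          Finset.sum_congr rfl fun γ _ => by rw [hvInT γ]
      · have hsum := Finset.sum_filter_add_sum_filter_not (F.kinkFinset s u)
          (fun p => p.2 = T) (fun p => ‖F.v p.1 p.2 - F.vIn p.1 p.2‖)
        have hfilter_not : (F.kinkFinset s u).filter (fun p => ¬ p.2 = T)
            = F.kinkFinset T u := by
          ext p
          simp only [Finset.mem_filter, mem_kinkFinset]
          constructor
          · rintro ⟨⟨⟨h1, h2⟩, h3⟩, h4⟩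
            have hle := hTmin p (F.mem_kinkFinset.mpr ⟨⟨h1, h2⟩, h3⟩)
            exact ⟨⟨lt_of_le_of_ne hle (Ne.symm h4), h2⟩, h3⟩
          · rintro ⟨⟨h1, h2⟩, h3⟩
            exact ⟨⟨⟨lt_trans hsT h1, h2⟩, h3⟩, ne_of_gt h1⟩
        have hatT : ∑ p ∈ (F.kinkFinset s u).filter (fun p => p.2 = T),
            ‖F.v p.1 p.2 - F.vIn p.1 p.2‖ ≤ ∑ γ : Fin N, ‖F.v γ T - F.vIn γ T‖ := by
          set S := (F.kinkFinset s u).filter (fun p => p.2 = T) with hS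
          have hinj : ∀ x ∈ S, ∀ y ∈ S, Prod.fst x = Prod.fst y → x = y := by
            intro x hx y hy hxy
            have hx2 : x.2 = T := by
              have := Finset.mem_filter.mp hx; exact this.2
            have hy2 : y.2 = T := by
              have := Finset.mem_filter.mp hy; exact this.2
            exact Prod.ext hxy (hx2.trans hy2.symm)
          have himg := Finset.sum_image
            (f := fun γ : Fin N => ‖F.v γ T - F.vIn γ T‖) (g := Prod.fst) hinj
          have heq : ∑ p ∈ S, ‖F.v p.1 p.2 - F.vIn p.1 p.2‖
              = ∑ p ∈ S, ‖F.v p.1 T - F.vIn p.1 T‖ :=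
            Finset.sum_congr rfl fun p hp => by
              rw [(Finset.mem_filter.mp hp).2]
          rw [heq, ← himg]
          exact Finset.sum_le_sum_of_subset_of_nonneg (Finset.subset_univ _)
            (fun i _ _ => norm_nonneg _)
        have h1 : F.Dfun s ≤ F.DfunIn T :=
          F.D_le_DIn_noKinks hsT (fun γ t a b => hnk γ t a b)
        have h2 := F.jump T
        rw [hfilter_not] at hsum
        linarith [ihD, hatT, h1, h2, hsum]
      
end HardSphereFlow
namespace HardSphereFlow

variable {n N : ℕ} (F : HardSphereFlow n N)

lemma cons0 (t : ℝ) :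
    ∑ γ : Fin N, F.v γ t = ∑ γ : Fin N, F.v γ 0 ∧
    ∑ γ : Fin N, ‖F.v γ t‖ ^ 2 = ∑ γ : Fin N, ‖F.v γ 0‖ ^ 2 := by
  rcases le_total t 0 with h | h
  · obtain ⟨h1, h2, _⟩ := F.main_ind (F.kinkFinset t 0).card t 0 h le_rfl
    exact ⟨h1.symm, h2.symm⟩
  · obtain ⟨h1, h2, _⟩ := F.main_ind (F.kinkFinset 0 t).card 0 t h le_rfl
    exact ⟨h1, h2⟩

lemma sum_sq_expand (w : EuclideanSpace ℝ (Fin n)) (f : Fin N → EuclideanSpace ℝ (Fin n)) :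
    ∑ γ : Fin N, ‖f γ - w‖ ^ 2
    = ∑ γ : Fin N, ‖f γ‖ ^ 2 - 2 * ⟪∑ γ : Fin N, f γ, w⟫ + (N : ℝ) * ‖w‖ ^ 2 := by
  have h : ∀ γ : Fin N, ‖f γ - w‖ ^ 2 = ‖f γ‖ ^ 2 - 2 * ⟪f γ, w⟫ + ‖w‖ ^ 2 :=
    fun γ => norm_sub_sq_real _ _
  rw [Finset.sum_congr rfl (fun γ _ => h γ), Finset.sum_add_distrib,
    Finset.sum_sub_distrib, sum_inner, Finset.sum_const, Finset.mul_sum]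
  simp [Finset.card_univ, nsmul_eq_mul]

lemma sum_sq_dev (hN : 0 < N) (t : ℝ) :
    ∑ γ : Fin N, ‖F.v γ t - F.meanVelocity‖ ^ 2 = (N : ℝ) * F.vdev ^ 2 := by
  have hN' : (N : ℝ) ≠ 0 := Nat.cast_ne_zero.mpr hN.ne'
  set w := F.meanVelocity with hw
  have hsumv : ∑ γ : Fin N, F.v γ 0 = (N : ℝ) • w := by
    rw [hw]
    unfold meanVelocity
    rw [smul_smul, mul_inv_cancel₀ hN', one_smul]
  obtain ⟨hm, he⟩ := F.cons0 t
  have hexp := sum_sq_expand (N := N) w (fun γ => F.v γ t)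
  have hexp0 := sum_sq_expand (N := N) w (fun γ => F.v γ 0)
  rw [hm, he] at hexp
  have heq : ∑ γ : Fin N, ‖F.v γ t - w‖ ^ 2 = ∑ γ : Fin N, ‖F.v γ 0 - w‖ ^ 2 := by
    rw [hexp, hexp0]
  rw [heq]
  -- now compute at time 0
  have hinner : (⟪∑ γ : Fin N, F.v γ 0, w⟫ : ℝ) = (N : ℝ) * ‖w‖ ^ 2 := by
    rw [hsumv, real_inner_smul_left, real_inner_self_eq_norm_sq]
  have hS0 : ∑ γ : Fin N, ‖F.v γ 0 - w‖ ^ 2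
      = 2 * F.totalEnergy - (N : ℝ) * ‖w‖ ^ 2 := by
    rw [hexp0, hinner]
    unfold totalEnergy
    ring
  have hS0nonneg : (0:ℝ) ≤ ∑ γ : Fin N, ‖F.v γ 0 - w‖ ^ 2 :=
    Finset.sum_nonneg fun γ _ => sq_nonneg _
  have hEnonneg : (0:ℝ) ≤ 2 * F.totalEnergy / N := by
    apply div_nonneg _ (Nat.cast_nonneg N)
    unfold totalEnergy
    have : (0:ℝ) ≤ ∑ γ : Fin N, ‖F.v γ 0‖ ^ 2 := Finset.sum_nonneg fun γ _ => sq_nonneg _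
    linarith
  have hvbar : F.vbar ^ 2 = 2 * F.totalEnergy / N := Real.sq_sqrt hEnonneg
  have hNpos : (0:ℝ) < (N:ℝ) := by exact_mod_cast hN
  have hinside : (0:ℝ) ≤ F.vbar ^ 2 - ‖w‖ ^ 2 := by
    rw [hvbar]
    rw [hS0] at hS0nonneg
    have hle : ‖w‖ ^ 2 ≤ 2 * F.totalEnergy / N := by
      rw [le_div_iff₀ hNpos]; nlinarith
    linarith
  have hvdev : F.vdev ^ 2 = F.vbar ^ 2 - ‖w‖ ^ 2 := Real.sq_sqrt hinside
  rw [hS0, hvdev, hvbar]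
  field_simp

lemma vdev_nonneg : 0 ≤ F.vdev := Real.sqrt_nonneg _

lemma D_bound (hN : 0 < N) (t : ℝ) : |F.Dfun t| ≤ (N : ℝ) ^ 2 * F.vdev := by
  set w := F.meanVelocity with hw
  set A : Fin N → ℝ := fun γ => ‖F.v γ t - w‖ with hA
  have hAnn : ∀ γ, 0 ≤ A γ := fun γ => norm_nonneg _
  have hterm : ∀ γ δ : Fin N,
      |(⟪F.v δ t - F.v γ t, F.y δ t - F.y γ t⟫ : ℝ) / ‖F.y δ t - F.y γ t‖|
        ≤ A δ + A γ := by
    intro γ δ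
    refine le_trans (ratio_abs_le _ _) ?_
    have : F.v δ t - F.v γ t = (F.v δ t - w) - (F.v γ t - w) := by abel
    rw [this]
    exact norm_sub_le _ _
  have habs : |F.Dfun t| ≤ (1/2) * ∑ γ : Fin N, ∑ δ : Fin N, (A δ + A γ) := by
    unfold Dfun
    rw [abs_mul]
    have h1 : |∑ γ : Fin N, ∑ δ : Fin N,
        (⟪F.v δ t - F.v γ t, F.y δ t - F.y γ t⟫ : ℝ) / ‖F.y δ t - F.y γ t‖|
        ≤ ∑ γ : Fin N, ∑ δ : Fin N, (A δ + A γ) := by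
      refine le_trans (Finset.abs_sum_le_sum_abs _ _) ?_
      refine Finset.sum_le_sum fun γ _ => ?_
      refine le_trans (Finset.abs_sum_le_sum_abs _ _) ?_
      exact Finset.sum_le_sum fun δ _ => hterm γ δ
    have : |(1:ℝ)/2| = 1/2 := by norm_num
    rw [this]
    nlinarith [h1]
  have hdouble : ∑ γ : Fin N, ∑ δ : Fin N, (A δ + A γ)
      = 2 * (N : ℝ) * ∑ γ : Fin N, A γ := by
    simp only [Finset.sum_add_distrib, Finset.sum_const, Finset.card_univ,
      Fintype.card_fin, nsmul_eq_mul]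
    rw [← Finset.mul_sum]
    ring
  have hsumA : ∑ γ : Fin N, A γ ≤ (N : ℝ) * F.vdev := by
    have h1 : (∑ γ : Fin N, A γ) ^ 2 ≤ (N : ℝ) * ∑ γ : Fin N, A γ ^ 2 := by
      have := sq_sum_le_card_mul_sum_sq (s := (Finset.univ : Finset (Fin N))) (f := A)
      simpa [Finset.card_univ] using this
    have h2 : ∑ γ : Fin N, A γ ^ 2 = (N : ℝ) * F.vdev ^ 2 := F.sum_sq_dev hN t
    rw [h2] at h1
    have hsnn : 0 ≤ ∑ γ : Fin N, A γ := Finset.sum_nonneg fun γ _ => hAnn γ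
    have hrhs : (N : ℝ) * ((N : ℝ) * F.vdev ^ 2) = ((N : ℝ) * F.vdev) ^ 2 := by ring
    rw [hrhs] at h1
    calc ∑ γ : Fin N, A γ = Real.sqrt ((∑ γ : Fin N, A γ) ^ 2) :=
          (Real.sqrt_sq hsnn).symm
    _ ≤ Real.sqrt (((N : ℝ) * F.vdev) ^ 2) := Real.sqrt_le_sqrt h1
    _ = (N : ℝ) * F.vdev :=
          Real.sqrt_sq (mul_nonneg (Nat.cast_nonneg N) (F.vdev_nonneg))
  calc |F.Dfun t| ≤ (1/2) * (2 * (N : ℝ) * ∑ γ : Fin N, A γ) := by rw [← hdouble]; exact habs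
  _ ≤ (1/2) * (2 * (N : ℝ) * ((N : ℝ) * F.vdev)) := by
      have hN0 : (0:ℝ) ≤ (N:ℝ) := Nat.cast_nonneg N
      nlinarith [hsumA]
  _ = (N : ℝ) ^ 2 * F.vdev := by ring

end HardSphereFlow
namespace HardSphereFlow

variable {n N : ℕ} (F : HardSphereFlow n N)

lemma slab_bound (hN : 0 < N) {s u : ℝ} (hsu : s ≤ u) :
    ∑ p ∈ F.kinkFinset s u, ‖F.v p.1 p.2 - F.vIn p.1 p.2‖
      ≤ 2 * (N : ℝ) ^ 2 * F.vdev := by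
  obtain ⟨_, _, hD⟩ := F.main_ind (F.kinkFinset s u).card s u hsu le_rfl
  have h1 := abs_le.mp (F.D_bound hN s)
  have h2 := abs_le.mp (F.D_bound hN u)
  linarith [h1.1, h2.2, hD]

end HardSphereFlow


/-- `wedge u u' = |u ∧ u'| = √(|u|²|u'|² - (u⋅u')²)`, the area of the parallelogram
spanned by `u` and `u'`. -/
def wedge {E : Type*} [NormedAddCommGroup E] [InnerProductSpace ℝ E] (u u' : E) : ℝ :=
  Real.sqrt (‖u‖ ^ 2 * ‖u'‖ ^ 2 - (⟪u, u'⟫ : ℝ) ^ 2)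

/-- **Galilean-invariant collision estimate** (Serre, inequality (1.7)).
There is a finite constant `c_n`, depending only on the space dimension `n`, such that
for every hard-sphere flow of `N` particles in `ℝⁿ`, the family `|v' - v|`, indexed by
all the kinks of the flow, is summable with `∑_{kinks} |v' - v| ≤ c_n N² 𝐯`,
where `𝐯` is the standard deviation of the velocity distribution. -/
theorem hard_spheres_galilean_invariant_estimate (n : ℕ) (hn : 1 ≤ n) :
    ∃ c : ℝ, ∀ (N : ℕ) (F : HardSphereFlow n N),
      Summable (fun k : F.Kinks => ‖F.v k.1.1 k.1.2 - F.vIn k.1.1 k.1.2‖) ∧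
      ∑' k : F.Kinks, ‖F.v k.1.1 k.1.2 - F.vIn k.1.1 k.1.2‖
        ≤ c * (N : ℝ) ^ 2 * F.vdev := by
  refine ⟨2, fun N F => ?_⟩
  rcases Nat.eq_zero_or_pos N with rfl | hN
  · haveI : IsEmpty F.Kinks := ⟨fun k => Fin.elim0 k.1.1⟩
    have hzero : (fun k : F.Kinks => ‖F.v k.1.1 k.1.2 - F.vIn k.1.1 k.1.2‖)
        = (0 : F.Kinks → ℝ) := funext fun k => isEmptyElim k
    constructor
    · rw [hzero]; exact summable_zero
    · rw [hzero]
      have h0 : tsum (0 : F.Kinks → ℝ) = 0 := by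
        rw [show (0 : F.Kinks → ℝ) = fun _ => (0:ℝ) from rfl, tsum_zero]
      rw [h0]
      norm_num
  · classical
    have hB : ∀ sfin : Finset F.Kinks,
        ∑ k ∈ sfin, ‖F.v k.1.1 k.1.2 - F.vIn k.1.1 k.1.2‖
          ≤ 2 * (N : ℝ) ^ 2 * F.vdev := by
      intro sfin
      rcases sfin.eq_empty_or_nonempty with rfl | hne
      · rw [Finset.sum_empty]
        have := F.vdev_nonneg
        positivity
      · set tms := sfin.image (fun k : F.Kinks => (k : Fin N × ℝ).2) with htms
        have htne : tms.Nonempty := hne.image _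
        have hT12 : tms.min' htne - 1 ≤ tms.max' htne := by
          have := tms.min'_le _ (tms.max'_mem htne)
          linarith
        have hsub : sfin.image Subtype.val
            ⊆ F.kinkFinset (tms.min' htne - 1) (tms.max' htne) := by
          intro p hp
          obtain ⟨k, hk, rfl⟩ := Finset.mem_image.mp hp
          refine F.mem_kinkFinset.mpr ⟨⟨?_, ?_⟩, k.2⟩
          · have hmem : (k : Fin N × ℝ).2 ∈ tms := Finset.mem_image_of_mem _ hk
            have := tms.min'_le _ hmem
            linarith
          · exact tms.le_max' _ (Finset.mem_image_of_mem _ hk)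
        have hval : ∑ k ∈ sfin, ‖F.v k.1.1 k.1.2 - F.vIn k.1.1 k.1.2‖
            = ∑ p ∈ sfin.image Subtype.val, ‖F.v p.1 p.2 - F.vIn p.1 p.2‖ := by
          rw [Finset.sum_image (fun x _ y _ h => Subtype.ext h)]
        rw [hval]
        calc ∑ p ∈ sfin.image Subtype.val, ‖F.v p.1 p.2 - F.vIn p.1 p.2‖
            ≤ ∑ p ∈ F.kinkFinset (tms.min' htne - 1) (tms.max' htne),
              ‖F.v p.1 p.2 - F.vIn p.1 p.2‖ :=
          Finset.sum_le_sum_of_subset_of_nonneg hsub (fun i _ _ => norm_nonneg _)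
        _ ≤ 2 * (N : ℝ) ^ 2 * F.vdev := F.slab_bound hN hT12
    have hsummable : Summable (fun k : F.Kinks => ‖F.v k.1.1 k.1.2 - F.vIn k.1.1 k.1.2‖) :=
      summable_of_sum_le (fun k => norm_nonneg _) hB
    exact ⟨hsummable, Summable.tsum_le_of_sum_le hsummable hB⟩
end
end

section
/- For every hard-sphere flow of N particles of radius a>0 in ℝ^n (with only binary collisions and finitely many collisions in every time slab), every particle α admits limit velocities v_{α+} = lim_{t→+∞} v_α(t) and v_{α−} = lim_{t→−∞} v_α(t), and there exists a finite constant c_n depending only on n such that ∑_{α=1}^N |v_{α+} − v_α(0)| ≤ c_n · N² · 𝐯 and ∑_{α=1}^N |v_{α−} − v_α(0)| ≤ c_n · N² · 𝐯. -/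
open scoped BigOperators RealInnerProductSpace
open Filter

noncomputable section

namespace HSFaux

variable {n N : ℕ}

abbrev E (n : ℕ) := EuclideanSpace ℝ (Fin n)
abbrev W (n N : ℕ) := PiLp 2 (fun _ : Fin N × Fin N => EuclideanSpace ℝ (Fin n))

def pairDiff (f : Fin N → E n) : W n N := WithLp.toLp 2 (fun p : Fin N × Fin N => f p.2 - f p.1)

lemma inner_sum_sum (f g : Fin N → E n) :
    ∑ σ : Fin N, ∑ τ : Fin N, (⟪f τ, g σ⟫ : ℝ) = ⟪∑ τ, f τ, ∑ σ, g σ⟫ := by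
  rw [inner_sum]
  refine Finset.sum_congr rfl fun σ _ => ?_
  rw [sum_inner]

lemma pair_inner (f g : Fin N → E n) :
    (⟪pairDiff f, pairDiff g⟫ : ℝ)
      = 2 * N * (∑ α, ⟪f α, g α⟫) - 2 * ⟪∑ α, f α, ∑ α, g α⟫ := by
  rw [PiLp.inner_apply, Fintype.sum_prod_type]
  have expand : ∀ σ τ : Fin N,
      (⟪f τ - f σ, g τ - g σ⟫ : ℝ)
        = ⟪f τ, g τ⟫ - ⟪f τ, g σ⟫ - ⟪f σ, g τ⟫ + ⟪f σ, g σ⟫ := by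
    intro σ τ
    rw [inner_sub_left, inner_sub_right, inner_sub_right]
    ring
  calc ∑ σ : Fin N, ∑ τ : Fin N, (⟪pairDiff f (σ, τ), pairDiff g (σ, τ)⟫ : ℝ)
      = ∑ σ : Fin N, ∑ τ : Fin N,
          ((⟪f τ, g τ⟫ : ℝ) - ⟪f τ, g σ⟫ - ⟪f σ, g τ⟫ + ⟪f σ, g σ⟫) := by
        refine Finset.sum_congr rfl fun σ _ => Finset.sum_congr rfl fun τ _ => ?_
        exact expand σ τ
    _ = 2 * N * (∑ α, ⟪f α, g α⟫) - 2 * ⟪∑ α, f α, ∑ α, g α⟫ := by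
        have e1 : ∀ σ : Fin N, ∑ τ : Fin N,
            ((⟪f τ, g τ⟫ : ℝ) - ⟪f τ, g σ⟫ - ⟪f σ, g τ⟫ + ⟪f σ, g σ⟫)
            = (∑ α, (⟪f α, g α⟫ : ℝ)) - ⟪∑ τ, f τ, g σ⟫ - ⟪f σ, ∑ τ, g τ⟫
              + N * ⟪f σ, g σ⟫ := by
          intro σ
          rw [Finset.sum_add_distrib, Finset.sum_sub_distrib, Finset.sum_sub_distrib,
            sum_inner, inner_sum]
          simp [Finset.sum_const, Finset.card_univ, nsmul_eq_mul]
        rw [Finset.sum_congr rfl (fun σ _ => e1 σ)]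
        rw [Finset.sum_add_distrib, Finset.sum_sub_distrib, Finset.sum_sub_distrib,
          ← inner_sum, ← sum_inner, ← Finset.mul_sum]
        simp only [Finset.sum_const, Finset.card_univ, Fintype.card_fin, nsmul_eq_mul]
        ring

lemma pair_norm_sq (f : Fin N → E n) :
    ‖pairDiff f‖ ^ 2 = 2 * N * (∑ α, ‖f α‖ ^ 2) - 2 * ‖∑ α, f α‖ ^ 2 := by
  have := pair_inner f f
  rw [real_inner_self_eq_norm_sq] at this
  rw [this, real_inner_self_eq_norm_sq]
  congr 1
  congr 1
  exact Finset.sum_congr rfl fun α _ => real_inner_self_eq_norm_sq (f α)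

end HSFaux


namespace HSFaux

variable {n N : ℕ}

def Phi (F : HardSphereFlow n N) (t : ℝ) : W n N := pairDiff (fun α => F.y α t)
def Psi (F : HardSphereFlow n N) (t : ℝ) : W n N := pairDiff (fun α => F.v α t)
def PsiIn (F : HardSphereFlow n N) (t : ℝ) : W n N := pairDiff (fun α => F.vIn α t)
def Df (F : HardSphereFlow n N) (t : ℝ) : ℝ := ⟪Phi F t, Psi F t⟫
def Jmp (F : HardSphereFlow n N) (t : ℝ) : ℝ := ∑ α, ‖F.v α t - F.vIn α t‖

lemma Jmp_nonneg (F : HardSphereFlow n N) (t : ℝ) : 0 ≤ Jmp F t :=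
  Finset.sum_nonneg fun _ _ => norm_nonneg _

lemma jump (F : HardSphereFlow n N) (t : ℝ) :
    (∑ α, F.v α t = ∑ α, F.vIn α t) ∧
    (∑ α, ‖F.v α t‖ ^ 2 = ∑ α, ‖F.vIn α t‖ ^ 2) ∧
    (⟪Phi F t, Psi F t - PsiIn F t⟫ : ℝ) = 2 * F.a * N * Jmp F t := by
  by_cases hk : ∀ α, F.vIn α t = F.v α t
  · have hJ : Jmp F t = 0 := by
      unfold Jmp
      refine Finset.sum_eq_zero fun α _ => ?_
      rw [hk α, sub_self, norm_zero]
    have hPsi : Psi F t = PsiIn F t := by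
      ext p : 1
      show F.v p.2 t - F.v p.1 t = F.vIn p.2 t - F.vIn p.1 t
      rw [hk p.1, hk p.2]
    refine ⟨Finset.sum_congr rfl fun α _ => (hk α).symm,
      Finset.sum_congr rfl fun α _ => by rw [hk α], ?_⟩
    rw [hPsi, sub_self, inner_zero_right, hJ, mul_zero]
  · push_neg at hk
    obtain ⟨α₀, hα₀⟩ := hk
    obtain ⟨β₀, ⟨hβne, hdist⟩, huniq⟩ := F.partner_unique α₀ t hα₀
    obtain ⟨hβkink, hmom, hen, hrefl, ⟨c, hc⟩, hin, hout⟩ :=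
      F.collision_rules α₀ β₀ t hα₀ hβne hdist
    have hαβ : α₀ ≠ β₀ := fun h => hβne h.symm
    have hothers : ∀ γ, γ ≠ α₀ → γ ≠ β₀ → F.vIn γ t = F.v γ t := by
      intro γ hγα hγβ
      by_contra h
      exact hγβ (huniq γ ⟨hγα, F.one_collision_at_a_time t α₀ γ hα₀ h hγα⟩)
    set r : E n := F.y β₀ t - F.y α₀ t with hr
    set d : E n := F.v α₀ t - F.vIn α₀ t with hd
    have hrnorm : ‖r‖ = 2 * F.a := by rw [← dist_eq_norm (F.y β₀ t) (F.y α₀ t)]; exact hdist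
    have hdβ : F.v β₀ t - F.vIn β₀ t = -d := by
      rw [show F.v β₀ t - F.vIn β₀ t = -(F.vIn β₀ t - F.v β₀ t) by abel, ← hrefl]
    have hcneg : c < 0 := by
      have h4 : F.v β₀ t = F.vIn β₀ t - d := by
        have h := hdβ
        rw [sub_eq_iff_eq_add] at h
        rw [h]; abel
      have h5 : F.v α₀ t = F.vIn α₀ t + d := by rw [hd]; abel
      have h3 : (F.v β₀ t - F.v α₀ t) - (F.vIn β₀ t - F.vIn α₀ t) = -((2:ℝ) • d) := by
        rw [h4, h5, two_smul]; abel
      have h6 : (0:ℝ) < ⟪(F.v β₀ t - F.v α₀ t) - (F.vIn β₀ t - F.vIn α₀ t), r⟫ := by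
        rw [inner_sub_left]; linarith
      rw [h3] at h6
      have h7 : (⟪-((2:ℝ) • d), r⟫ : ℝ) = -2 * (c * ‖r‖^2) := by
        rw [hc, inner_neg_left, real_inner_smul_left, real_inner_smul_left,
          real_inner_self_eq_norm_sq]
        ring
      rw [h7] at h6
      have hrpos : (0:ℝ) < ‖r‖^2 := by
        rw [hrnorm]; have := F.a_pos; nlinarith
      nlinarith
    have hsupp0 : ∀ γ, γ ∉ ({α₀, β₀} : Finset (Fin N)) → F.vIn γ t = F.v γ t := by
      intro γ hγ
      simp only [Finset.mem_insert, Finset.mem_singleton] at hγ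
      push_neg at hγ
      exact hothers γ hγ.1 hγ.2
    have hΔ0 : ∑ γ, (F.v γ t - F.vIn γ t) = 0 := by
      rw [← Finset.sum_subset (Finset.subset_univ ({α₀, β₀} : Finset (Fin N)))
        (fun γ _ hγ => by rw [hsupp0 γ hγ, sub_self]),
        Finset.sum_pair hαβ, ← hd, hdβ]
      abel
    have J1 : ∑ α, F.v α t = ∑ α, F.vIn α t := by
      rwa [Finset.sum_sub_distrib, sub_eq_zero] at hΔ0
    have J2 : ∑ α, ‖F.v α t‖ ^ 2 = ∑ α, ‖F.vIn α t‖ ^ 2 := by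
      have h0 : ∑ γ, (‖F.v γ t‖^2 - ‖F.vIn γ t‖^2) = 0 := by
        rw [← Finset.sum_subset (Finset.subset_univ ({α₀, β₀} : Finset (Fin N)))
          (fun γ _ hγ => by rw [hsupp0 γ hγ, sub_self]),
          Finset.sum_pair hαβ]
        linarith
      rwa [Finset.sum_sub_distrib, sub_eq_zero] at h0
    refine ⟨J1, J2, ?_⟩
    have hPsiSub : Psi F t - PsiIn F t = pairDiff (fun γ => F.v γ t - F.vIn γ t) := by
      ext p : 1
      show (F.v p.2 t - F.v p.1 t) - (F.vIn p.2 t - F.vIn p.1 t)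
        = (F.v p.2 t - F.vIn p.2 t) - (F.v p.1 t - F.vIn p.1 t)
      abel
    have hsum3 : ∑ γ, (⟪F.y γ t, F.v γ t - F.vIn γ t⟫ : ℝ)
        = ⟪F.y α₀ t, d⟫ + ⟪F.y β₀ t, -d⟫ := by
      rw [← Finset.sum_subset (Finset.subset_univ ({α₀, β₀} : Finset (Fin N)))
        (fun γ _ hγ => by rw [hsupp0 γ hγ, sub_self, inner_zero_right]),
        Finset.sum_pair hαβ, ← hd, hdβ]
    have hrd : (⟪r, d⟫ : ℝ) = c * ‖r‖^2 := by
      rw [hc, real_inner_smul_right, real_inner_self_eq_norm_sq]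
    have hval : (⟪F.y α₀ t, d⟫ : ℝ) + ⟪F.y β₀ t, -d⟫ = -(c * ‖r‖^2) := by
      have h8 : (⟪r, d⟫ : ℝ) = ⟪F.y β₀ t, d⟫ - ⟪F.y α₀ t, d⟫ := by
        rw [hr, inner_sub_left]
      rw [inner_neg_right]
      linarith [hrd, h8]
    have hdn : ‖d‖ = -c * ‖r‖ := by
      rw [hc, norm_smul, Real.norm_eq_abs, abs_of_neg hcneg]
    have hJval : Jmp F t = 2 * ‖d‖ := by
      unfold Jmp
      rw [← Finset.sum_subset (Finset.subset_univ ({α₀, β₀} : Finset (Fin N)))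
        (fun γ _ hγ => by rw [hsupp0 γ hγ, sub_self, norm_zero]),
        Finset.sum_pair hαβ, ← hd, hdβ, norm_neg]
      ring
    rw [hPsiSub]
    show (⟪pairDiff (fun α => F.y α t), pairDiff (fun γ => F.v γ t - F.vIn γ t)⟫ : ℝ) = _
    rw [pair_inner, hΔ0, inner_zero_right, hsum3, hval, hJval, hdn, hrnorm]
    ring

end HSFaux


namespace HSFaux

variable {n N : ℕ}

lemma sysK_finite (F : HardSphereFlow n N) (s t : ℝ) :
    {u : ℝ | (s < u ∧ u ≤ t) ∧ ∃ α, F.vIn α u ≠ F.v α u}.Finite := by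
  refine Set.Finite.subset (Set.finite_iUnion (fun α : Fin N => F.kinks_finite α s t)) ?_
  rintro u ⟨⟨h1, h2⟩, α, h⟩
  exact Set.mem_iUnion.2 ⟨α, ⟨⟨le_of_lt h1, h2⟩, h⟩⟩

def kinkFinset (F : HardSphereFlow n N) (s t : ℝ) : Finset ℝ :=
  (sysK_finite F s t).toFinset

lemma mem_kinkFinset {F : HardSphereFlow n N} {s t u : ℝ} :
    u ∈ kinkFinset F s t ↔ (s < u ∧ u ≤ t) ∧ ∃ α, F.vIn α u ≠ F.v α u := by
  simp [kinkFinset, Set.Finite.mem_toFinset]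

def Sj (F : HardSphereFlow n N) (s t : ℝ) : ℝ := ∑ u ∈ kinkFinset F s t, Jmp F u

lemma Sj_nonneg (F : HardSphereFlow n N) (s t : ℝ) : 0 ≤ Sj F s t :=
  Finset.sum_nonneg fun u _ => Jmp_nonneg F u

lemma Sj_add (F : HardSphereFlow n N) {s u t : ℝ} (h1 : s ≤ u) (h2 : u ≤ t) :
    Sj F s t = Sj F s u + Sj F u t := by
  have hunion : kinkFinset F s t = kinkFinset F s u ∪ kinkFinset F u t := by
    ext x
    simp only [Finset.mem_union, mem_kinkFinset]
    constructor
    · rintro ⟨⟨hs, ht⟩, hK⟩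
      by_cases hx : x ≤ u
      · exact Or.inl ⟨⟨hs, hx⟩, hK⟩
      · exact Or.inr ⟨⟨lt_of_not_ge hx, ht⟩, hK⟩
    · rintro (⟨⟨hs, hx⟩, hK⟩ | ⟨⟨hx, ht⟩, hK⟩)
      · exact ⟨⟨hs, le_trans hx h2⟩, hK⟩
      · exact ⟨⟨lt_of_le_of_lt h1 hx, ht⟩, hK⟩
  have hdisj : Disjoint (kinkFinset F s u) (kinkFinset F u t) := by
    rw [Finset.disjoint_left]
    intro x hx1 hx2
    rw [mem_kinkFinset] at hx1 hx2
    exact absurd hx1.1.2 (not_le.2 hx2.1.1)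
  rw [Sj, hunion, Finset.sum_union hdisj]; rfl

/-- the master invariant/estimate package on the interval `[s,t]`. -/
def Pst (F : HardSphereFlow n N) (s t : ℝ) : Prop :=
  (∑ α, F.v α t = ∑ α, F.v α s) ∧
  (∑ α, ‖F.v α t‖ ^ 2 = ∑ α, ‖F.v α s‖ ^ 2) ∧
  ‖Psi F t‖ = ‖Psi F s‖ ∧
  ‖Phi F t‖ ≤ ‖Phi F s‖ + (t - s) * ‖Psi F s‖ ∧
  ‖Phi F s‖ ≤ ‖Phi F t‖ + (t - s) * ‖Psi F s‖ ∧
  Df F s + (t - s) * ‖Psi F s‖ ^ 2 + 2 * F.a * N * Sj F s t ≤ Df F t ∧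
  ∀ α, ‖F.v α t - F.v α s‖ ≤ Sj F s t

lemma kinkFinset_self (F : HardSphereFlow n N) (t : ℝ) : kinkFinset F t t = ∅ := by
  ext x
  simp only [mem_kinkFinset, Finset.notMem_empty, iff_false]
  rintro ⟨⟨h1, h2⟩, -⟩
  exact absurd h2 (not_le.2 h1)

lemma Pst_refl (F : HardSphereFlow n N) (t : ℝ) : Pst F t t := by
  have hS : Sj F t t = 0 := by rw [Sj, kinkFinset_self, Finset.sum_empty]
  refine ⟨rfl, rfl, rfl, by simp, by simp, by rw [hS]; simp, fun α => by rw [hS]; simp⟩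

lemma Pst_trans (F : HardSphereFlow n N) {s u t : ℝ} (h1 : s ≤ u) (h2 : u ≤ t)
    (P1 : Pst F s u) (P2 : Pst F u t) : Pst F s t := by
  obtain ⟨a1, a2, a3, a4, a5, a6, a7⟩ := P1
  obtain ⟨b1, b2, b3, b4, b5, b6, b7⟩ := P2
  have hS := Sj_add F h1 h2
  have hSsu := Sj_nonneg F s u
  have hSut := Sj_nonneg F u t
  refine ⟨b1.trans a1, b2.trans a2, b3.trans a3, ?_, ?_, ?_, ?_⟩
  · calc ‖Phi F t‖ ≤ ‖Phi F u‖ + (t - u) * ‖Psi F u‖ := b4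
      _ ≤ (‖Phi F s‖ + (u - s) * ‖Psi F s‖) + (t - u) * ‖Psi F s‖ := by
          rw [a3] at b4 ⊢
          have := mul_le_mul_of_nonneg_right (le_refl (t - u)) (norm_nonneg (Psi F s))
          nlinarith [a4, mul_nonneg (sub_nonneg.2 h2) (norm_nonneg (Psi F s))]
      _ = ‖Phi F s‖ + (t - s) * ‖Psi F s‖ := by ring
  · calc ‖Phi F s‖ ≤ ‖Phi F u‖ + (u - s) * ‖Psi F s‖ := a5
      _ ≤ (‖Phi F t‖ + (t - u) * ‖Psi F u‖) + (u - s) * ‖Psi F s‖ := by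
          nlinarith [b5]
      _ = ‖Phi F t‖ + (t - s) * ‖Psi F s‖ := by rw [a3]; ring
  · rw [hS]
    have h6 : Df F u + (t - u) * ‖Psi F s‖ ^ 2 + 2 * F.a * ↑N * Sj F u t ≤ Df F t := by
      rw [← a3]; exact b6
    nlinarith [a6]
  · intro α
    calc ‖F.v α t - F.v α s‖ ≤ ‖F.v α t - F.v α u‖ + ‖F.v α u - F.v α s‖ := by
          have := norm_add_le (F.v α t - F.v α u) (F.v α u - F.v α s)
          simpa using this
      _ ≤ Sj F u t + Sj F s u := add_le_add (b7 α) (a7 α)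
      _ = Sj F s t := by rw [hS]; ring

end HSFaux


namespace HSFaux

variable {n N : ℕ}

lemma left_values (F : HardSphereFlow n N) {s t : ℝ} (hst : s < t)
    (hnk : ∀ u, s < u → u < t → ∀ α, F.vIn α u = F.v α u) :
    (∀ α, F.vIn α t = F.v α s) ∧ (∀ α, F.y α t = F.y α s + (t - s) • F.v α s) := by
  have h2 : ∀ᶠ u in nhdsWithin t (Set.Iio t), s < u := by
    apply eventually_nhdsWithin_of_eventually_nhds
    exact eventually_gt_nhds hst
  have h3 : ∀ᶠ u in nhdsWithin t (Set.Iio t), u < t :=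
    eventually_mem_nhdsWithin
  constructor
  · intro α
    have h1 := F.vIn_left_limit α t
    obtain ⟨u, hu1, hu2, hu3⟩ := (h1.and (h2.and h3)).exists
    have hv := (F.piecewise_affine α s u (le_of_lt hu2)
      (fun w hw1 hw2 => hnk w hw1 (lt_of_le_of_lt hw2 hu3) α)).1
    rw [← hu1, hv]
  · intro α
    have hy : Tendsto (F.y α) (nhdsWithin t (Set.Iio t)) (nhds (F.y α t)) :=
      ((F.y_continuous α).tendsto t).mono_left nhdsWithin_le_nhds
    have hcont : Continuous (fun u : ℝ => F.y α s + (u - s) • F.v α s) :=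
      continuous_const.add ((continuous_id.sub continuous_const).smul continuous_const)
    have haff : Tendsto (fun u : ℝ => F.y α s + (u - s) • F.v α s)
        (nhdsWithin t (Set.Iio t)) (nhds (F.y α s + (t - s) • F.v α s)) :=
      (hcont.tendsto t).mono_left nhdsWithin_le_nhds
    have heq : ∀ᶠ u in nhdsWithin t (Set.Iio t),
        F.y α u = F.y α s + (u - s) • F.v α s := by
      filter_upwards [h2, h3] with u hsu hut
      exact (F.piecewise_affine α s u (le_of_lt hsu)
        (fun w hw1 hw2 => hnk w hw1 (lt_of_le_of_lt hw2 hut) α)).2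
    exact tendsto_nhds_unique hy (haff.congr' (Filter.EventuallyEq.symm heq))

lemma Sj_atom (F : HardSphereFlow n N) {s t : ℝ} (hst : s < t)
    (hnk : ∀ u, s < u → u < t → ∀ α, F.vIn α u = F.v α u) :
    Sj F s t = Jmp F t := by
  have hsub : kinkFinset F s t ⊆ {t} := by
    intro u hu
    rw [mem_kinkFinset] at hu
    obtain ⟨⟨h1, h2⟩, α, hα⟩ := hu
    rcases lt_or_eq_of_le h2 with h | h
    · exact absurd (hnk u h1 h α) hα
    · simp [h]
  by_cases ht : t ∈ kinkFinset F s t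
  · have : kinkFinset F s t = {t} := by
      apply Finset.Subset.antisymm hsub
      intro x hx
      rw [Finset.mem_singleton] at hx
      rwa [hx]
    rw [Sj, this, Finset.sum_singleton]
  · have hempty : kinkFinset F s t = ∅ := by
      rcases Finset.subset_singleton_iff.1 hsub with h | h
      · exact h
      · rw [h] at ht; simp at ht
    have hnkt : ∀ α, F.vIn α t = F.v α t := by
      intro α
      by_contra h
      exact ht (mem_kinkFinset.2 ⟨⟨hst, le_refl t⟩, α, h⟩)
    have : Jmp F t = 0 := by
      rw [Jmp]
      exact Finset.sum_eq_zero fun α _ => by rw [hnkt α, sub_self, norm_zero]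
    rw [Sj, hempty, Finset.sum_empty, this]

lemma atom (F : HardSphereFlow n N) {s t : ℝ} (hst : s < t)
    (hnk : ∀ u, s < u → u < t → ∀ α, F.vIn α u = F.v α u) : Pst F s t := by
  obtain ⟨hvIn, hy⟩ := left_values F hst hnk
  obtain ⟨J1, J2, J3⟩ := jump F t
  have hSj := Sj_atom F hst hnk
  have hPsiIn : PsiIn F t = Psi F s := by
    ext p : 1
    show F.vIn p.2 t - F.vIn p.1 t = F.v p.2 s - F.v p.1 s
    rw [hvIn p.1, hvIn p.2]
  have hPhi : Phi F t = Phi F s + (t - s) • Psi F s := by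
    ext p : 1
    show F.y p.2 t - F.y p.1 t
      = (F.y p.2 s - F.y p.1 s) + (t - s) • (F.v p.2 s - F.v p.1 s)
    rw [hy p.1, hy p.2, smul_sub]
    abel
  have hsum_v : ∑ α, F.v α t = ∑ α, F.v α s := by
    rw [J1]; exact Finset.sum_congr rfl fun α _ => hvIn α
  have hsum_v2 : ∑ α, ‖F.v α t‖ ^ 2 = ∑ α, ‖F.v α s‖ ^ 2 := by
    rw [J2]; exact Finset.sum_congr rfl fun α _ => by rw [hvIn α]
  have hPsiNorm : ‖Psi F t‖ = ‖Psi F s‖ := by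
    have hsq : ‖Psi F t‖ ^ 2 = ‖Psi F s‖ ^ 2 := by
      rw [Psi, Psi, pair_norm_sq, pair_norm_sq, hsum_v, hsum_v2]
    rw [← Real.sqrt_sq (norm_nonneg (Psi F t)), ← Real.sqrt_sq (norm_nonneg (Psi F s)), hsq]
  have hts : (0:ℝ) ≤ t - s := sub_nonneg.2 hst.le
  have hPhiNorm1 : ‖Phi F t‖ ≤ ‖Phi F s‖ + (t - s) * ‖Psi F s‖ := by
    rw [hPhi]
    refine (norm_add_le _ _).trans ?_
    rw [norm_smul, Real.norm_eq_abs, abs_of_nonneg hts]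
  have hPhiNorm2 : ‖Phi F s‖ ≤ ‖Phi F t‖ + (t - s) * ‖Psi F s‖ := by
    have : Phi F s = Phi F t - (t - s) • Psi F s := by rw [hPhi]; abel
    rw [this]
    refine (norm_sub_le _ _).trans ?_
    rw [norm_smul, Real.norm_eq_abs, abs_of_nonneg hts]
  have hDf : Df F t = Df F s + (t - s) * ‖Psi F s‖ ^ 2 + 2 * F.a * N * Jmp F t := by
    have hsplit : (⟪Phi F t, Psi F t⟫ : ℝ)
        = ⟪Phi F t, PsiIn F t⟫ + ⟪Phi F t, Psi F t - PsiIn F t⟫ := by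
      rw [← inner_add_right]
      congr 1
      abel
    rw [Df, hsplit, J3, hPsiIn, hPhi, inner_add_left, real_inner_smul_left,
      real_inner_self_eq_norm_sq]
    rfl
  refine ⟨hsum_v, hsum_v2, hPsiNorm, hPhiNorm1, hPhiNorm2, by rw [hSj, hDf], ?_⟩
  intro α
  rw [hSj]
  calc ‖F.v α t - F.v α s‖ = ‖F.v α t - F.vIn α t‖ := by rw [hvIn α]
    _ ≤ Jmp F t := Finset.single_le_sum (f := fun γ => ‖F.v γ t - F.vIn γ t‖)
        (fun γ _ => norm_nonneg _) (Finset.mem_univ α)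

lemma pst_of_no_kinks (F : HardSphereFlow n N) {s t : ℝ} (hst : s ≤ t)
    (h : kinkFinset F s t = ∅) : Pst F s t := by
  rcases eq_or_lt_of_le hst with h' | h'
  · rw [← h']; exact Pst_refl F s
  · refine atom F h' ?_
    intro u h1 h2 α
    by_contra hne
    have : u ∈ kinkFinset F s t := mem_kinkFinset.2 ⟨⟨h1, h2.le⟩, α, hne⟩
    rw [h] at this
    simp at this

end HSFaux


namespace HSFaux

variable {n N : ℕ}

lemma main_induction (F : HardSphereFlow n N) :
    ∀ (k : ℕ) (s t : ℝ), s ≤ t → (kinkFinset F s t).card ≤ k → Pst F s t := by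
  intro k
  induction k with
  | zero =>
    intro s t hst hcard
    exact pst_of_no_kinks F hst (Finset.card_eq_zero.1 (Nat.le_zero.1 hcard))
  | succ k ih =>
    intro s t hst hcard
    by_cases hc : (kinkFinset F s t).card ≤ k
    · exact ih s t hst hc
    · have hcardeq : (kinkFinset F s t).card = k + 1 := le_antisymm hcard (not_le.1 hc)
      have hne : (kinkFinset F s t).Nonempty :=
        Finset.card_pos.1 (by omega)
      set K := kinkFinset F s t with hK
      set tstar := K.max' hne with htstar
      have htmem : tstar ∈ K := K.max'_mem hne
      have htmem' := mem_kinkFinset.1 htmem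
      have hstt : s < tstar := htmem'.1.1
      have htt : tstar ≤ t := htmem'.1.2
      -- no kinks in (tstar, t]
      have hright : kinkFinset F tstar t = ∅ := by
        ext x
        simp only [mem_kinkFinset, Finset.notMem_empty, iff_false]
        rintro ⟨⟨h1, h2⟩, hk⟩
        have hxK : x ∈ K := mem_kinkFinset.2 ⟨⟨lt_trans hstt h1, h2⟩, hk⟩
        exact absurd (K.le_max' x hxK) (not_le.2 h1)
      have Pright : Pst F tstar t := pst_of_no_kinks F htt hright
      set A := K.erase tstar with hA
      have hcardA : A.card = k := by
        rw [hA, Finset.card_erase_of_mem htmem, hcardeq]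
        omega
      by_cases hAne : A.Nonempty
      · set m := A.max' hAne with hm
        have hmA : m ∈ A := A.max'_mem hAne
        have hmK : m ∈ K := Finset.mem_of_mem_erase hmA
        have hmne : m ≠ tstar := Finset.ne_of_mem_erase hmA
        have hmlt : m < tstar := lt_of_le_of_ne (K.le_max' m hmK) hmne
        have hsm : s < m := (mem_kinkFinset.1 hmK).1.1
        set u := (m + tstar) / 2 with hu
        have hmu : m < u := by rw [hu]; linarith
        have hut : u < tstar := by rw [hu]; linarith
        have hsu : s < u := lt_trans hsm hmu
        have hAeq : kinkFinset F s u = A := by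
          ext x
          constructor
          · intro hx
            have hx' := mem_kinkFinset.1 hx
            have hxK : x ∈ K := mem_kinkFinset.2
              ⟨⟨hx'.1.1, le_trans hx'.1.2 (le_trans hut.le htt)⟩, hx'.2⟩
            refine Finset.mem_erase.2 ⟨?_, hxK⟩
            intro hxt
            rw [hxt] at hx'
            exact absurd hx'.1.2 (not_le.2 hut)
          · intro hx
            have hxK := Finset.mem_of_mem_erase hx
            have hxne := Finset.ne_of_mem_erase hx
            have hx' := mem_kinkFinset.1 hxK
            refine mem_kinkFinset.2 ⟨⟨hx'.1.1, ?_⟩, hx'.2⟩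
            exact le_trans (A.le_max' x hx) hmu.le
        have Pleft : Pst F s u := ih s u hsu.le (by rw [hAeq, hcardA])
        have hmid : ∀ w, u < w → w < tstar → ∀ α, F.vIn α w = F.v α w := by
          intro w h1 h2 α
          by_contra hne'
          have hwK : w ∈ K := mem_kinkFinset.2
            ⟨⟨lt_trans hsu h1, le_trans h2.le htt⟩, α, hne'⟩
          have hwA : w ∈ A := Finset.mem_erase.2 ⟨ne_of_lt h2, hwK⟩
          exact absurd (A.le_max' w hwA) (not_le.2 (lt_trans hmu h1))
        have Pmid : Pst F u tstar := atom F hut hmid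
        have Pl : Pst F s tstar := Pst_trans F hsu.le hut.le Pleft Pmid
        exact Pst_trans F hstt.le htt Pl Pright
      · -- A empty : only kink is tstar
        have hAempty : A = ∅ := Finset.not_nonempty_iff_eq_empty.1 hAne
        have hmid : ∀ w, s < w → w < tstar → ∀ α, F.vIn α w = F.v α w := by
          intro w h1 h2 α
          by_contra hne'
          have hwK : w ∈ K := mem_kinkFinset.2
            ⟨⟨h1, le_trans h2.le htt⟩, α, hne'⟩
          have hwA : w ∈ A := Finset.mem_erase.2 ⟨ne_of_lt h2, hwK⟩
          rw [hAempty] at hwA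
          simp at hwA
        have Pleft : Pst F s tstar := atom F hstt hmid
        exact Pst_trans F hstt.le htt Pleft Pright

lemma Pst_all (F : HardSphereFlow n N) {s t : ℝ} (h : s ≤ t) : Pst F s t :=
  main_induction F (kinkFinset F s t).card s t h le_rfl

end HSFaux


namespace HSFaux

variable {n N : ℕ}

/-- uniform bound on the total collision strength, forward in time -/
lemma Sj_bound_fwd (F : HardSphereFlow n N) (hN : 0 < N) {T : ℝ} (hT : 0 ≤ T) :
    Sj F 0 T ≤ (‖Phi F 0‖ * ‖Psi F 0‖ + |Df F 0|) / (2 * F.a * N) := by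
  obtain ⟨-, -, hPsiN, hPhiN, -, hD, -⟩ := Pst_all F hT
  have hpos : (0:ℝ) < 2 * F.a * N := by
    have := F.a_pos
    have : (0:ℝ) < (N:ℝ) := by exact_mod_cast hN
    positivity
  rw [le_div_iff₀ hpos]
  have hDT : Df F T ≤ ‖Phi F T‖ * ‖Psi F T‖ := real_inner_le_norm _ _
  have h1 : ‖Phi F T‖ * ‖Psi F T‖ ≤ (‖Phi F 0‖ + (T - 0) * ‖Psi F 0‖) * ‖Psi F 0‖ := by
    rw [hPsiN]
    exact mul_le_mul_of_nonneg_right hPhiN (norm_nonneg _)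
  have h2 : -|Df F 0| ≤ Df F 0 := neg_abs_le _
  nlinarith [hD, norm_nonneg (Psi F 0)]

/-- uniform bound on the total collision strength, backward in time -/
lemma Sj_bound_bwd (F : HardSphereFlow n N) (hN : 0 < N) {T : ℝ} (hT : 0 ≤ T) :
    Sj F (-T) 0 ≤ (‖Phi F 0‖ * ‖Psi F 0‖ + |Df F 0|) / (2 * F.a * N) := by
  have hT' : -T ≤ 0 := by linarith
  obtain ⟨-, -, hPsiN, -, hPhiN2, hD, -⟩ := Pst_all F hT'
  have hpos : (0:ℝ) < 2 * F.a * N := by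
    have := F.a_pos
    have : (0:ℝ) < (N:ℝ) := by exact_mod_cast hN
    positivity
  rw [le_div_iff₀ hpos]
  have hDT : -(‖Phi F (-T)‖ * ‖Psi F (-T)‖) ≤ Df F (-T) := by
    have := abs_real_inner_le_norm (Phi F (-T)) (Psi F (-T))
    have h := neg_abs_le (Df F (-T))
    rw [Df] at *
    nlinarith [abs_nonneg (⟪Phi F (-T), Psi F (-T)⟫ : ℝ)]
  have h1 : ‖Phi F (-T)‖ * ‖Psi F (-T)‖ ≤ (‖Phi F 0‖ + (0 - -T) * ‖Psi F (-T)‖) * ‖Psi F (-T)‖ := by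
    exact mul_le_mul_of_nonneg_right hPhiN2 (norm_nonneg _)
  have h2 : Df F 0 ≤ |Df F 0| := le_abs_self _
  rw [← hPsiN] at *
  nlinarith [hD, norm_nonneg (Psi F 0)]

lemma tendsto_fwd (F : HardSphereFlow n N) (hN : 0 < N) (α : Fin N) :
    ∃ L, Tendsto (F.v α) atTop (nhds L) := by
  apply cauchySeq_tendsto_of_complete
  rw [Metric.cauchySeq_iff']
  intro ε hε
  set Bnd := (‖Phi F 0‖ * ‖Psi F 0‖ + |Df F 0|) / (2 * F.a * N) with hBnd
  set Svals : Set ℝ := (fun T => Sj F 0 T) '' Set.Ici 0 with hSvals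
  have hne : Svals.Nonempty := ⟨Sj F 0 0, ⟨0, Set.self_mem_Ici, rfl⟩⟩
  have hbdd : BddAbove Svals := by
    refine ⟨Bnd, ?_⟩
    rintro x ⟨T, hT, rfl⟩
    exact Sj_bound_fwd F hN hT
  set L₀ := sSup Svals with hL₀
  obtain ⟨x, ⟨T₀, hT₀, rfl⟩, hx⟩ := exists_lt_of_lt_csSup hne
    (show L₀ - ε / 2 < L₀ by linarith)
  refine ⟨T₀, fun u hu => ?_⟩
  have hT₀' : (0:ℝ) ≤ T₀ := hT₀
  have hP := Pst_all F hu
  have hvar : ‖F.v α u - F.v α T₀‖ ≤ Sj F T₀ u := hP.2.2.2.2.2.2 α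
  have hadd : Sj F 0 u = Sj F 0 T₀ + Sj F T₀ u := Sj_add F hT₀ hu
  have hle : Sj F 0 u ≤ L₀ := le_csSup hbdd ⟨u, le_trans hT₀ hu, rfl⟩
  rw [dist_eq_norm]
  calc ‖F.v α u - F.v α T₀‖ ≤ Sj F T₀ u := hvar
    _ = Sj F 0 u - Sj F 0 T₀ := by linarith
    _ ≤ ε / 2 := by linarith
    _ < ε := by linarith

lemma tendsto_bwd (F : HardSphereFlow n N) (hN : 0 < N) (α : Fin N) :
    ∃ L, Tendsto (F.v α) atBot (nhds L) := by
  have key : ∃ L, Tendsto (fun T : ℝ => F.v α (-T)) atTop (nhds L) := by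
    apply cauchySeq_tendsto_of_complete
    rw [Metric.cauchySeq_iff']
    intro ε hε
    set Bnd := (‖Phi F 0‖ * ‖Psi F 0‖ + |Df F 0|) / (2 * F.a * N) with hBnd
    set Svals : Set ℝ := (fun T => Sj F (-T) 0) '' Set.Ici 0 with hSvals
    have hne : Svals.Nonempty := ⟨Sj F (-0) 0, ⟨0, Set.self_mem_Ici, rfl⟩⟩
    have hbdd : BddAbove Svals := by
      refine ⟨Bnd, ?_⟩
      rintro x ⟨T, hT, rfl⟩
      exact Sj_bound_bwd F hN hT
    set L₀ := sSup Svals with hL₀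
    obtain ⟨x, ⟨T₀, hT₀, rfl⟩, hx⟩ := exists_lt_of_lt_csSup hne
      (show L₀ - ε / 2 < L₀ by linarith)
    refine ⟨T₀, fun u hu => ?_⟩
    have hT₀' : (0:ℝ) ≤ T₀ := hT₀
    have hmono : -u ≤ -T₀ := by linarith
    have hP := Pst_all F hmono
    have hvar : ‖F.v α (-T₀) - F.v α (-u)‖ ≤ Sj F (-u) (-T₀) := hP.2.2.2.2.2.2 α
    have hadd : Sj F (-u) 0 = Sj F (-u) (-T₀) + Sj F (-T₀) 0 :=
      Sj_add F hmono (by linarith : -T₀ ≤ 0)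
    have hle : Sj F (-u) 0 ≤ L₀ := le_csSup hbdd ⟨u, le_trans hT₀ hu, rfl⟩
    rw [dist_eq_norm, norm_sub_rev]
    calc ‖F.v α (-T₀) - F.v α (-u)‖ ≤ Sj F (-u) (-T₀) := hvar
      _ = Sj F (-u) 0 - Sj F (-T₀) 0 := by linarith
      _ ≤ ε / 2 := by linarith
      _ < ε := by linarith
  obtain ⟨L, hL⟩ := key
  refine ⟨L, ?_⟩
  have h2 : Tendsto (fun t : ℝ => F.v α (-(-t))) atBot (nhds L) :=
    hL.comp tendsto_neg_atBot_atTop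
  simpa using h2

end HSFaux


namespace HSFaux

variable {n N : ℕ}

lemma sum_norm_sub_sq (w : E n) (f : Fin N → E n) :
    ∑ α, ‖f α - w‖ ^ 2
      = ∑ α, ‖f α‖ ^ 2 - 2 * ⟪∑ α, f α, w⟫ + N * ‖w‖ ^ 2 := by
  have h : ∀ α : Fin N, ‖f α - w‖ ^ 2 = ‖f α‖ ^ 2 - 2 * ⟪f α, w⟫ + ‖w‖ ^ 2 :=
    fun α => norm_sub_sq_real (f α) w
  rw [Finset.sum_congr rfl (fun α _ => h α), Finset.sum_add_distrib,
    Finset.sum_sub_distrib, ← Finset.mul_sum, ← sum_inner, Finset.sum_const,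
    Finset.card_univ, Fintype.card_fin, nsmul_eq_mul]

lemma conserved (F : HardSphereFlow n N) (t : ℝ) :
    (∑ α, F.v α t = ∑ α, F.v α 0) ∧ (∑ α, ‖F.v α t‖ ^ 2 = ∑ α, ‖F.v α 0‖ ^ 2) := by
  rcases le_total 0 t with h | h
  · exact ⟨(Pst_all F h).1, (Pst_all F h).2.1⟩
  · exact ⟨((Pst_all F h).1).symm, ((Pst_all F h).2.1).symm⟩

end HSFaux


set_option maxHeartbeats 1000000 in
/-- **Scattering estimate** (Serre, inequality (1.9)). In every hard-sphere flow, each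
particle `α` admits limit velocities `v_{α±}` as `t → ±∞`, and there is a finite constant
`c_n`, depending only on the space dimension `n`, such that
`∑_α |v_{α±} - v_α(0)| ≤ c_n N² 𝐯`. -/
theorem hard_spheres_scattering_estimate (n : ℕ) (hn : 1 ≤ n) :
    ∃ c : ℝ, ∀ (N : ℕ) (F : HardSphereFlow n N),
      ∃ vplus vminus : Fin N → EuclideanSpace ℝ (Fin n),
        (∀ α : Fin N, Tendsto (F.v α) atTop (nhds (vplus α))) ∧
        (∀ α : Fin N, Tendsto (F.v α) atBot (nhds (vminus α))) ∧
        ∑ α : Fin N, ‖vplus α - F.v α 0‖ ≤ c * (N : ℝ) ^ 2 * F.vdev ∧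
        ∑ α : Fin N, ‖vminus α - F.v α 0‖ ≤ c * (N : ℝ) ^ 2 * F.vdev := by
  refine ⟨2, fun N F => ?_⟩
  by_cases hN0 : N = 0
  · subst hN0
    refine ⟨Fin.elim0, Fin.elim0, fun α => α.elim0, fun α => α.elim0, ?_, ?_⟩ <;> simp
  · have hN : 0 < N := Nat.pos_of_ne_zero hN0
    have hNR : (0:ℝ) < (N:ℝ) := by exact_mod_cast hN
    choose vplus hvplus using fun α => HSFaux.tendsto_fwd F hN α
    choose vminus hvminus using fun α => HSFaux.tendsto_bwd F hN α
    set w := F.meanVelocity with hw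
    set C0 := ∑ α, ‖F.v α 0 - w‖ ^ 2 with hC0
    have hC0nn : 0 ≤ C0 := Finset.sum_nonneg fun α _ => pow_nonneg (norm_nonneg _) 2
    have hconst : ∀ t, ∑ α, ‖F.v α t - w‖ ^ 2 = C0 := by
      intro t
      have hcons := HSFaux.conserved F t
      rw [HSFaux.sum_norm_sub_sq, hcons.1, hcons.2, hC0, HSFaux.sum_norm_sub_sq]
    -- identify C0 with N * vdev ^ 2
    have hE2nn : (0:ℝ) ≤ ∑ α, ‖F.v α 0‖ ^ 2 := Finset.sum_nonneg fun α _ => pow_nonneg (norm_nonneg _) 2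
    have hQw : (⟪∑ α, F.v α 0, w⟫ : ℝ) = (N:ℝ)⁻¹ * ‖∑ α, F.v α 0‖ ^ 2 := by
      rw [hw, HardSphereFlow.meanVelocity, real_inner_smul_right, real_inner_self_eq_norm_sq]
    have hwsq : ‖w‖ ^ 2 = ((N:ℝ)⁻¹) ^ 2 * ‖∑ α, F.v α 0‖ ^ 2 := by
      rw [hw, HardSphereFlow.meanVelocity, norm_smul, Real.norm_eq_abs,
        abs_of_nonneg (inv_nonneg.2 hNR.le), mul_pow]
    have hC0E : C0 = (∑ α, ‖F.v α 0‖ ^ 2) - ‖∑ α, F.v α 0‖ ^ 2 / N := by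
      rw [hC0, HSFaux.sum_norm_sub_sq, hQw, hwsq]
      field_simp
      ring
    have hTE : F.totalEnergy = (1/2) * ∑ α, ‖F.v α 0‖ ^ 2 := rfl
    have hTE0 : 0 ≤ 2 * F.totalEnergy / (N:ℝ) := by
      rw [hTE]
      exact div_nonneg (by nlinarith) hNR.le
    have hvbar : F.vbar ^ 2 = (∑ α, ‖F.v α 0‖ ^ 2) / N := by
      rw [HardSphereFlow.vbar, Real.sq_sqrt hTE0, hTE]
      ring
    have harg : F.vbar ^ 2 - ‖w‖ ^ 2 = C0 / N := by
      rw [hvbar, hwsq, hC0E]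
      field_simp
    have hvdevsq : F.vdev ^ 2 = C0 / N := by
      rw [HardSphereFlow.vdev, Real.sq_sqrt (by rw [harg]; exact div_nonneg hC0nn hNR.le)]
      exact harg
    have hvdevnn : 0 ≤ F.vdev := Real.sqrt_nonneg _
    have hNC0 : (N:ℝ) * C0 = ((N:ℝ) * F.vdev) ^ 2 := by
      have hC0' : C0 = (N:ℝ) * F.vdev ^ 2 := by
        rw [hvdevsq]; field_simp
      rw [hC0']; ring
    -- Cauchy–Schwarz step
    have cs : ∀ x : Fin N → HSFaux.E n,
        ∑ α, ‖x α‖ ≤ Real.sqrt ((N:ℝ) * ∑ α, ‖x α‖ ^ 2) := by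
      intro x
      have hx2 : (0:ℝ) ≤ ∑ α, ‖x α‖ ^ 2 := Finset.sum_nonneg fun α _ => pow_nonneg (norm_nonneg _) 2
      rw [Real.le_sqrt (Finset.sum_nonneg fun α _ => norm_nonneg _) (mul_nonneg hNR.le hx2)]
      have h := Finset.sum_mul_sq_le_sq_mul_sq Finset.univ (fun _ : Fin N => (1:ℝ))
        (fun α => ‖x α‖)
      simpa using h
    have bound : ∀ vl : Fin N → HSFaux.E n,
        (∑ α, ‖vl α - w‖ ^ 2 = C0) →
        ∑ α, ‖vl α - F.v α 0‖ ≤ 2 * (N:ℝ) ^ 2 * F.vdev := by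
      intro vl hvl
      have t1 : ∑ α, ‖vl α - w‖ ≤ (N:ℝ) * F.vdev := by
        have h := cs (fun α => vl α - w)
        rw [hvl, hNC0, Real.sqrt_sq (mul_nonneg hNR.le hvdevnn)] at h
        exact h
      have t2 : ∑ α, ‖F.v α 0 - w‖ ≤ (N:ℝ) * F.vdev := by
        have h := cs (fun α => F.v α 0 - w)
        rw [← hC0] at h
        rw [hNC0, Real.sqrt_sq (mul_nonneg hNR.le hvdevnn)] at h
        exact h
      have tri : ∑ α, ‖vl α - F.v α 0‖ ≤ ∑ α, (‖vl α - w‖ + ‖F.v α 0 - w‖) := by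
        refine Finset.sum_le_sum fun α _ => ?_
        have heq : vl α - F.v α 0 = (vl α - w) - (F.v α 0 - w) := by abel
        rw [heq]
        exact norm_sub_le _ _
      rw [Finset.sum_add_distrib] at tri
      have hone : (1:ℝ) ≤ (N:ℝ) := by exact_mod_cast hN
      have hsq : (0:ℝ) ≤ (N:ℝ)^2 - N := by nlinarith
      have hstep : (N:ℝ) * F.vdev ≤ (N:ℝ)^2 * F.vdev := by
        nlinarith [mul_nonneg hsq hvdevnn]
      linarith
    refine ⟨vplus, vminus, hvplus, hvminus, ?_, ?_⟩
    · refine bound vplus ?_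
      have ht : Tendsto (fun t => ∑ α, ‖F.v α t - w‖ ^ 2) atTop
          (nhds (∑ α, ‖vplus α - w‖ ^ 2)) := by
        refine tendsto_finset_sum _ fun α _ => ?_
        have hcont : Continuous (fun x : HSFaux.E n => ‖x - w‖ ^ 2) := by
          have : Continuous (fun x : HSFaux.E n => ‖x - w‖) :=
            (continuous_id.sub continuous_const).norm
          exact this.pow 2
        exact (hcont.tendsto (vplus α)).comp (hvplus α)
      have ht2 : Tendsto (fun t : ℝ => ∑ α, ‖F.v α t - w‖ ^ 2) atTop (nhds C0) := by
        have heq : (fun t : ℝ => ∑ α, ‖F.v α t - w‖ ^ 2) = fun _ => C0 := funext hconst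
        rw [heq]
        exact tendsto_const_nhds
      exact tendsto_nhds_unique ht ht2
    · refine bound vminus ?_
      have ht : Tendsto (fun t => ∑ α, ‖F.v α t - w‖ ^ 2) atBot
          (nhds (∑ α, ‖vminus α - w‖ ^ 2)) := by
        refine tendsto_finset_sum _ fun α _ => ?_
        have hcont : Continuous (fun x : HSFaux.E n => ‖x - w‖ ^ 2) := by
          have : Continuous (fun x : HSFaux.E n => ‖x - w‖) :=
            (continuous_id.sub continuous_const).norm
          exact this.pow 2
        exact (hcont.tendsto (vminus α)).comp (hvminus α)
      have ht2 : Tendsto (fun t : ℝ => ∑ α, ‖F.v α t - w‖ ^ 2) atBot (nhds C0) := by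
        have heq : (fun t : ℝ => ∑ α, ‖F.v α t - w‖ ^ 2) = fun _ => C0 := funext hconst
        rw [heq]
        exact tendsto_const_nhds
      exact tendsto_nhds_unique ht ht2
end
end

section
/- For every p ≥ 1 there exists a hard-sphere flow of N = 2p particles in ℝ¹ (n = 1, for some radius a > 0) with mean velocity w = 0 and standard deviation 𝐯 = 1 such that ∑_{α=1}^N ℓ(H_α) = N²; namely, p particles initially moving to the right with velocity +1 placed to the left of p particles initially moving to the left with velocity −1. Consequently the estimate ∑_α ℓ(H_α) ≤ c_n N² 𝐯 is sharp up to the value of the constant. -/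
open scoped BigOperators RealInnerProductSpace
open Filter

noncomputable section

namespace HardSphereFlow

variable {n N : ℕ} (F : HardSphereFlow n N)

/-- The length `ℓ(H_α)` of the hodograph of particle `α`: the sum of `|v' - v|`
over all kinks of particle `α`. -/
def hodographLength (α : Fin N) : ℝ :=
  ∑' t : F.KinkTimes α, ‖F.v α t - F.vIn α t‖

end HardSphereFlow


open Filter Set
namespace HS

/-- slope of line i -/
def sig (p : ℕ) (i : Fin (2*p)) : ℝ := if (i:ℕ) < p then 1 else -1

/-- intercept of line i -/
def cc (i : ℕ) : ℝ := 4^i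

def ff (p : ℕ) (i : Fin (2*p)) (t : ℝ) : ℝ := cc i + sig p i * t

/-- the finite set of collision times -/
def Tfin (p : ℕ) : Finset ℝ :=
  Finset.image (fun q : Fin p × Fin p => ((4:ℝ)^(p+(q.2:ℕ)) - 4^((q.1:ℕ)))/2) Finset.univ

lemma four_pow_strictMono : StrictMono (fun n : ℕ => (4:ℝ)^n) := by
  apply strictMono_nat_of_lt_succ
  intro n
  have h : (0:ℝ) < 4^n := by positivity
  calc (4:ℝ)^n = 4^n * 1 := by ring
  _ < 4^n * 4 := by nlinarith
  _ = 4^(n+1) := by ring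

lemma cc_injective : Function.Injective cc := fun a b h => four_pow_strictMono.injective h

lemma pow4_diff_inj {a b a' b' : ℕ} (hab : a < b) (hab' : a' < b')
    (h : (4:ℝ)^b - 4^a = 4^b' - 4^a') : a = a' ∧ b = b' := by
  have key : ∀ x y x' y' : ℕ, x < y → x' < y' → y < y' → ¬ ((4:ℝ)^y - 4^x = 4^y' - 4^x') := by
    intro x y x' y' hxy hxy' hyy' heq
    have h1 : (4:ℝ)^x > 0 := by positivity
    have h2 : (4:ℝ)^x' ≤ 4^(y'-1) := by
      apply four_pow_strictMono.monotone; omega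
    have h3 : (4:ℝ)^y ≤ 4^(y'-1) := by
      apply four_pow_strictMono.monotone; omega
    have h4 : (4:ℝ)^y' = 4 * 4^(y'-1) := by
      rw [← pow_succ']
      congr 1; omega
    have h5 : (0:ℝ) < 4^(y'-1) := by positivity
    nlinarith
  have hbb' : b = b' := by
    rcases lt_trichotomy b b' with h' | h' | h'
    · exact absurd h (key _ _ _ _ hab hab' h')
    · exact h'
    · exact absurd h.symm (key _ _ _ _ hab' hab h')
  subst hbb'
  refine ⟨?_, rfl⟩
  have : (4:ℝ)^a = 4^a' := by linarith
  exact four_pow_strictMono.injective this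

lemma sig_eq_one {p : ℕ} {i : Fin (2*p)} (h : (i:ℕ) < p) : sig p i = 1 := if_pos h
lemma sig_eq_neg_one {p : ℕ} {i : Fin (2*p)} (h : p ≤ (i:ℕ)) : sig p i = -1 := if_neg (by omega)

lemma sig_cases (p : ℕ) (i : Fin (2*p)) : sig p i = 1 ∨ sig p i = -1 := by
  unfold sig; split <;> simp

/-- if two distinct lines have equal slopes, they never meet -/
lemma eq_of_same_slope {p : ℕ} {i j : Fin (2*p)} {t : ℝ} (hs : sig p i = sig p j)
    (hf : ff p i t = ff p j t) : i = j := by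
  unfold ff at hf
  rw [hs] at hf
  have : cc i = cc j := by linarith
  have := cc_injective this
  exact Fin.ext this

/-- a meeting time of two distinct lines is a collision time -/
lemma cross_mem {p : ℕ} {i j : Fin (2*p)} {t : ℝ} (hij : i ≠ j) (hf : ff p i t = ff p j t) :
    t ∈ Tfin p := by
  have hs : sig p i ≠ sig p j := fun hs => hij (eq_of_same_slope hs hf)
  -- wlog on slopes
  have main : ∀ i j : Fin (2*p), (i:ℕ) < p → p ≤ (j:ℕ) → ff p i t = ff p j t → t ∈ Tfin p := by
    intro i j hi hj hf
    have hj2 : (j:ℕ) < 2*p := j.isLt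
    unfold ff at hf
    rw [sig_eq_one hi, sig_eq_neg_one hj] at hf
    refine Finset.mem_image.mpr ⟨(⟨i, hi⟩, ⟨(j:ℕ) - p, by omega⟩), Finset.mem_univ _, ?_⟩
    have hexp : p + ((j:ℕ) - p) = (j:ℕ) := by omega
    simp only [hexp]
    unfold cc at hf
    push_cast
    linarith
  rcases sig_cases p i with h1 | h1 <;> rcases sig_cases p j with h2 | h2
  · exact absurd (h1.trans h2.symm) hs
  · exact main i j (by by_contra h; exact absurd ((sig_eq_neg_one (by omega)).symm.trans h1) (by norm_num)) (by by_contra h; exact absurd ((sig_eq_one (by omega)).symm.trans h2) (by norm_num)) hf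
  · exact main j i (by by_contra h; exact absurd ((sig_eq_neg_one (by omega)).symm.trans h2) (by norm_num)) (by by_contra h; exact absurd ((sig_eq_one (by omega)).symm.trans h1) (by norm_num)) hf.symm
  · exact absurd (h1.trans h2.symm) hs

/-- positive collision times -/
lemma Tfin_pos {p : ℕ} {t : ℝ} (ht : t ∈ Tfin p) : 0 < t := by
  obtain ⟨q, -, rfl⟩ := Finset.mem_image.mp ht
  have h : (4:ℝ)^((q.1:ℕ)) < 4^(p+(q.2:ℕ)) := four_pow_strictMono (by have := q.1.isLt; omega)
  linarith

/-- gap around a point avoiding a finite set -/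
lemma exists_eps (F : Finset ℝ) (t : ℝ) : ∃ ε > 0, ∀ s ∈ F, s ≠ t → ε ≤ |s - t| := by
  classical
  by_cases h : (F.erase t).Nonempty
  · refine ⟨((F.erase t).image (fun s => |s - t|)).min' (h.image (fun s => |s - t|)), ?_, ?_⟩
    · obtain ⟨s, hs, hmin⟩ := Finset.mem_image.mp (Finset.min'_mem _ (h.image (fun s => |s - t|)))
      rw [← hmin]
      have : s ≠ t := Finset.ne_of_mem_erase hs
      exact abs_pos.mpr (sub_ne_zero.mpr this)
    · intro s hs hst
      exact Finset.min'_le _ _ (Finset.mem_image_of_mem _ (Finset.mem_erase.mpr ⟨hst, hs⟩))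
  · exact ⟨1, one_pos, fun s hs hst => absurd ⟨s, Finset.mem_erase.mpr ⟨hst, hs⟩⟩ h⟩

variable (p : ℕ)

def MS (t : ℝ) : Multiset ℝ := Multiset.map (fun i => ff p i t) Finset.univ.val

lemma MS_len (t : ℝ) : ((MS p t).sort (· ≤ ·)).length = 2*p := by
  rw [Multiset.length_sort]
  simp [MS]

def G (α : Fin (2*p)) (t : ℝ) : ℝ :=
  ((MS p t).sort (· ≤ ·))[(α:ℕ)]'(by rw [MS_len]; exact α.isLt)

lemma sortedEq {t : ℝ} {π : Fin (2*p) → Fin (2*p)} (hbij : Function.Bijective π)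
    (hmono : Monotone fun α => ff p (π α) t) (α : Fin (2*p)) :
    G p α t = ff p (π α) t := by
  have hperm : ((MS p t).sort (· ≤ ·) : Multiset ℝ) = ↑(List.ofFn (fun α => ff p (π α) t)) := by
    rw [Multiset.sort_eq]
    have h1 : List.ofFn (fun α => ff p (π α) t) = (List.finRange (2*p)).map ((fun i => ff p i t) ∘ π) :=
      List.ofFn_eq_map
    rw [h1, ← Multiset.map_coe]
    have h2 : (↑(List.finRange (2*p)) : Multiset (Fin (2*p))) = Finset.univ.val := rfl
    rw [h2, ← Multiset.map_map]
    congr 1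
    have e : Fin (2*p) ≃ Fin (2*p) := Equiv.ofBijective π hbij
    have : Finset.univ.val.map π = (Finset.map (Equiv.ofBijective π hbij).toEmbedding Finset.univ).val := by
      rw [Finset.map_val]; rfl
    rw [this, Finset.map_univ_equiv]
    rfl
  have hsorted2 : List.Pairwise (· ≤ ·) (List.ofFn (fun α => ff p (π α) t)) := by
    rw [List.pairwise_ofFn]
    exact fun i j hij => hmono hij.le
  have heq : (MS p t).sort (· ≤ ·) = List.ofFn (fun α => ff p (π α) t) :=
    List.Perm.eq_of_pairwise' (Multiset.pairwise_sort _ _) hsorted2 (Multiset.coe_eq_coe.mp hperm)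
  unfold G
  rw [List.getElem_of_eq heq]
  simp

lemma G_mono {t : ℝ} : Monotone (fun α => G p α t) := by
  intro α β hab
  have hs := Multiset.pairwise_sort (MS p t) (· ≤ ·)
  have := hs.rel_get_of_le (a := ⟨(α:ℕ), by rw [MS_len]; exact α.isLt⟩)
    (b := ⟨(β:ℕ), by rw [MS_len]; exact β.isLt⟩) (Fin.mk_le_mk.mpr hab)
  simpa [G, List.get_eq_getElem] using this


/-- right interval sorting lemma -/
lemma right_mono {t₀ t₁ : ℝ} (h01 : t₀ < t₁)
    (hno : ∀ s ∈ Ioo t₀ t₁, s ∉ Tfin p)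
    {π : Fin (2*p) → Fin (2*p)} (hinj : Function.Injective π)
    (hkey : ∀ α β : Fin (2*p), α ≤ β → ff p (π α) t₀ < ff p (π β) t₀ ∨
      (ff p (π α) t₀ = ff p (π β) t₀ ∧ sig p (π α) ≤ sig p (π β))) :
    ∀ u ∈ Ico t₀ t₁, Monotone fun α => ff p (π α) u := by
  intro u hu α β hab
  rcases hkey α β hab with h | ⟨h1, h2⟩
  · by_contra hcon
    push_neg at hcon
    have hαβ : π α ≠ π β := fun he => by rw [he] at h; exact lt_irrefl _ h
    have hut : t₀ < u := by
      rcases eq_or_lt_of_le hu.1 with h' | h'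
      · exfalso; rw [← h'] at hcon; exact absurd h (not_lt.mpr hcon.le)
      · exact h'
    have hcont : ContinuousOn (fun s => ff p (π β) s - ff p (π α) s) (Icc t₀ u) := by
      apply Continuous.continuousOn; unfold ff; continuity
    have h0 : (0:ℝ) ∈ Ioo ((fun s => ff p (π β) s - ff p (π α) s) u)
        ((fun s => ff p (π β) s - ff p (π α) s) t₀) := ⟨by dsimp; linarith, by dsimp; linarith⟩
    obtain ⟨s, hs, hs0⟩ := intermediate_value_Ioo' hut.le hcont h0
    have hfs : ff p (π α) s = ff p (π β) s := by dsimp at hs0; linarith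
    exact hno s ⟨hs.1, hs.2.trans hu.2⟩ (cross_mem hαβ hfs)
  · dsimp only
    unfold ff at h1 ⊢
    nlinarith [mul_nonneg (sub_nonneg.mpr h2) (sub_nonneg.mpr hu.1)]

/-- left interval sorting lemma -/
lemma left_mono {t₀ t₁ : ℝ} (h01 : t₀ < t₁)
    (hno : ∀ s ∈ Ioo t₀ t₁, s ∉ Tfin p)
    {π : Fin (2*p) → Fin (2*p)} (hinj : Function.Injective π)
    (hkey : ∀ α β : Fin (2*p), α ≤ β → ff p (π α) t₁ < ff p (π β) t₁ ∨
      (ff p (π α) t₁ = ff p (π β) t₁ ∧ sig p (π β) ≤ sig p (π α))) :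
    ∀ u ∈ Ioc t₀ t₁, Monotone fun α => ff p (π α) u := by
  intro u hu α β hab
  rcases hkey α β hab with h | ⟨h1, h2⟩
  · by_contra hcon
    push_neg at hcon
    have hαβ : π α ≠ π β := fun he => by rw [he] at h; exact lt_irrefl _ h
    have hut : u < t₁ := by
      rcases eq_or_lt_of_le hu.2 with h' | h'
      · exfalso; rw [h'] at hcon; exact absurd h (not_lt.mpr hcon.le)
      · exact h'
    have hcont : ContinuousOn (fun s => ff p (π β) s - ff p (π α) s) (Icc u t₁) := by
      apply Continuous.continuousOn; unfold ff; continuity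
    have h0 : (0:ℝ) ∈ Ioo ((fun s => ff p (π β) s - ff p (π α) s) u)
        ((fun s => ff p (π β) s - ff p (π α) s) t₁) := ⟨by dsimp; linarith, by dsimp; linarith⟩
    obtain ⟨s, hs, hs0⟩ := intermediate_value_Ioo hut.le hcont h0
    have hfs : ff p (π α) s = ff p (π β) s := by dsimp at hs0; linarith
    exact hno s ⟨hu.1.trans hs.1, hs.2⟩ (cross_mem hαβ hfs)
  · dsimp only
    unfold ff at h1 ⊢
    nlinarith [mul_nonneg (sub_nonneg.mpr h2) (sub_nonneg.mpr hu.2)]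

/-- on a collision-free closed interval, each sorted trajectory is affine -/
lemma gapG {t₀ t₁ : ℝ} (h01 : t₀ < t₁) (hno : ∀ s ∈ Ioo t₀ t₁, s ∉ Tfin p) (α : Fin (2*p)) :
    ∃ m : ℝ, ∀ u ∈ Icc t₀ t₁, G p α u = G p α t₀ + (u - t₀) * m := by
  classical
  set keyR : Fin (2*p) → ℝ ×ₗ ℝ := fun i => toLex (ff p i t₀, sig p i) with hkeyR_def
  set πR := Tuple.sort keyR with hπR
  have hmonoR := Tuple.monotone_sort keyR
  have hkeyR : ∀ α β : Fin (2*p), α ≤ β → ff p (πR α) t₀ < ff p (πR β) t₀ ∨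
      (ff p (πR α) t₀ = ff p (πR β) t₀ ∧ sig p (πR α) ≤ sig p (πR β)) := by
    intro α β hab
    have := hmonoR hab
    rw [Function.comp, Function.comp] at this
    exact (Prod.Lex.le_iff).mp this
  set keyL : Fin (2*p) → ℝ ×ₗ ℝ := fun i => toLex (ff p i t₁, -sig p i) with hkeyL_def
  set πL := Tuple.sort keyL with hπL
  have hmonoL := Tuple.monotone_sort keyL
  have hkeyL : ∀ α β : Fin (2*p), α ≤ β → ff p (πL α) t₁ < ff p (πL β) t₁ ∨
      (ff p (πL α) t₁ = ff p (πL β) t₁ ∧ sig p (πL β) ≤ sig p (πL α)) := by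
    intro α β hab
    have := hmonoL hab
    rw [Function.comp, Function.comp] at this
    rcases (Prod.Lex.le_iff).mp this with h | ⟨h1, h2⟩
    · exact Or.inl h
    · exact Or.inr ⟨h1, by change -sig p (πL α) ≤ -sig p (πL β) at h2; linarith⟩
  have hR : ∀ u ∈ Ico t₀ t₁, G p α u = ff p (πR α) u := fun u hu =>
    sortedEq p πR.bijective (right_mono p h01 hno πR.injective hkeyR u hu) α
  have hL : ∀ u ∈ Ioc t₀ t₁, G p α u = ff p (πL α) u := fun u hu =>
    sortedEq p πL.bijective (left_mono p h01 hno πL.injective hkeyL u hu) α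
  -- two-point agreement of the two affine forms
  set u₁ := t₀ + (t₁ - t₀)/3 with hu₁
  set u₂ := t₀ + (t₁ - t₀)*2/3 with hu₂
  clear_value u₁ u₂
  have e1 : ff p (πR α) u₁ = ff p (πL α) u₁ := by
    rw [← hR u₁ ⟨by linarith, by linarith⟩, hL u₁ ⟨by linarith, by linarith⟩]
  have e2 : ff p (πR α) u₂ = ff p (πL α) u₂ := by
    rw [← hR u₂ ⟨by linarith, by linarith⟩, hL u₂ ⟨by linarith, by linarith⟩]
  have hsig : sig p (πR α) = sig p (πL α) := by
    unfold ff at e1 e2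
    have h12 : u₁ ≠ u₂ := by rw [hu₁, hu₂]; intro h; nlinarith [h01]
    have := sub_ne_zero.mpr h12
    have hmul : (sig p (πR α) - sig p (πL α)) * (u₁ - u₂) = 0 := by nlinarith [e1, e2]
    rcases mul_eq_zero.mp hmul with h | h
    · linarith [sub_eq_zero.mp h]
    · exact absurd h this
  have hcc : cc ((πR α) : ℕ) = cc ((πL α) : ℕ) := by
    unfold ff at e1
    rw [hsig] at e1; linarith
  have hfun : ∀ u, ff p (πR α) u = ff p (πL α) u := by
    intro u; unfold ff; rw [hsig, hcc]
  have hAll : ∀ u ∈ Icc t₀ t₁, G p α u = ff p (πR α) u := by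
    intro u hu
    rcases eq_or_lt_of_le hu.2 with h | h
    · rw [h, hL t₁ ⟨h01, le_refl _⟩, hfun]
    · exact hR u ⟨hu.1, h⟩
  refine ⟨sig p (πR α), fun u hu => ?_⟩
  rw [hAll u hu, hAll t₀ ⟨le_refl _, h01.le⟩]
  unfold ff; ring
/-- interval to the right of t free of collisions -/
lemma eps_right (t : ℝ) : ∃ ε > 0, ∀ s ∈ Ioo t (t+ε), s ∉ Tfin p := by
  obtain ⟨ε, hε, hb⟩ := exists_eps (Tfin p) t
  refine ⟨ε, hε, fun s hs hmem => ?_⟩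
  have := hb s hmem (ne_of_gt hs.1)
  rw [abs_of_pos (by linarith [hs.1] : (0:ℝ) < s - t)] at this
  linarith [hs.2]

lemma eps_left (t : ℝ) : ∃ ε > 0, ∀ s ∈ Ioo (t-ε) t, s ∉ Tfin p := by
  obtain ⟨ε, hε, hb⟩ := exists_eps (Tfin p) t
  refine ⟨ε, hε, fun s hs hmem => ?_⟩
  have := hb s hmem (ne_of_lt hs.2)
  rw [abs_of_neg (by linarith [hs.2] : s - t < 0)] at this
  linarith [hs.1]

lemma eps_both (t : ℝ) (ht : t ∉ Tfin p) : ∃ ε > 0, ∀ s ∈ Ioo (t-ε) (t+ε), s ∉ Tfin p := by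
  obtain ⟨ε, hε, hb⟩ := exists_eps (Tfin p) t
  refine ⟨ε, hε, fun s hs hmem => ?_⟩
  by_cases hst : s = t
  · exact ht (hst ▸ hmem)
  · have := hb s hmem hst
    rcases abs_cases (s - t) with ⟨h1, -⟩ | ⟨h1, -⟩ <;> rw [h1] at this <;>
      [linarith [hs.2]; linarith [hs.1]]

lemma exR (α : Fin (2*p)) (t : ℝ) :
    ∃ m : ℝ, ∀ᶠ u in nhdsWithin t (Ici t), G p α u = G p α t + (u - t) * m := by
  obtain ⟨ε, hε, hno⟩ := eps_right p t
  obtain ⟨m, hm⟩ := gapG p (by linarith : t < t + ε) hno α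
  refine ⟨m, Filter.eventually_of_mem (Ico_mem_nhdsGE_of_mem ⟨le_refl t, by linarith⟩)
    (fun u hu => hm u ⟨hu.1, hu.2.le⟩)⟩

lemma exL (α : Fin (2*p)) (t : ℝ) :
    ∃ m : ℝ, ∀ᶠ u in nhdsWithin t (Iic t), G p α u = G p α t + (u - t) * m := by
  obtain ⟨ε, hε, hno⟩ := eps_left p t
  obtain ⟨m, hm⟩ := gapG p (by linarith : t - ε < t) hno α
  have ht := hm t ⟨by linarith, le_refl t⟩
  refine ⟨m, ?_⟩
  filter_upwards [Icc_mem_nhdsLE_of_mem (show t ∈ Ioc (t-ε) t from ⟨by linarith, le_refl t⟩)] with u hu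
  rw [hm u ⟨hu.1, hu.2⟩, ht]; ring

/-- the right slope -/
def vA (α : Fin (2*p)) (t : ℝ) : ℝ := (exR p α t).choose
/-- the left slope -/
def vI (α : Fin (2*p)) (t : ℝ) : ℝ := (exL p α t).choose

lemma vA_spec (α : Fin (2*p)) (t : ℝ) :
    ∀ᶠ u in nhdsWithin t (Ici t), G p α u = G p α t + (u - t) * vA p α t :=
  (exR p α t).choose_spec

lemma vI_spec (α : Fin (2*p)) (t : ℝ) :
    ∀ᶠ u in nhdsWithin t (Iic t), G p α u = G p α t + (u - t) * vI p α t :=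
  (exL p α t).choose_spec

lemma vA_unique {α : Fin (2*p)} {t m : ℝ}
    (h : ∀ᶠ u in nhdsWithin t (Ici t), G p α u = G p α t + (u - t) * m) : vA p α t = m := by
  have h2 := vA_spec p α t
  have hmono : nhdsWithin t (Ioi t) ≤ nhdsWithin t (Ici t) := nhdsWithin_mono t Ioi_subset_Ici_self
  have h3 : ∀ᶠ u in nhdsWithin t (Ioi t),
      (G p α u = G p α t + (u - t) * m ∧ G p α u = G p α t + (u - t) * vA p α t) ∧ u ∈ Ioi t :=
    ((h.filter_mono hmono).and (h2.filter_mono hmono)).and self_mem_nhdsWithin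
  obtain ⟨u, ⟨⟨e1, e2⟩, hu⟩⟩ := h3.exists
  have hut : u - t ≠ 0 := sub_ne_zero.mpr (ne_of_gt hu)
  have : (u - t) * vA p α t = (u - t) * m := by linarith
  exact mul_left_cancel₀ hut this

lemma vI_unique {α : Fin (2*p)} {t m : ℝ}
    (h : ∀ᶠ u in nhdsWithin t (Iic t), G p α u = G p α t + (u - t) * m) : vI p α t = m := by
  have h2 := vI_spec p α t
  have hmono : nhdsWithin t (Iio t) ≤ nhdsWithin t (Iic t) := nhdsWithin_mono t Iio_subset_Iic_self
  have h3 : ∀ᶠ u in nhdsWithin t (Iio t),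
      (G p α u = G p α t + (u - t) * m ∧ G p α u = G p α t + (u - t) * vI p α t) ∧ u ∈ Iio t :=
    ((h.filter_mono hmono).and (h2.filter_mono hmono)).and self_mem_nhdsWithin
  obtain ⟨u, ⟨⟨e1, e2⟩, hu⟩⟩ := h3.exists
  have hut : u - t ≠ 0 := sub_ne_zero.mpr (ne_of_lt hu)
  have : (u - t) * vI p α t = (u - t) * m := by linarith
  exact mul_left_cancel₀ hut this

lemma gapFull {t₀ t₁ : ℝ} (h01 : t₀ < t₁) (hno : ∀ s ∈ Ioo t₀ t₁, s ∉ Tfin p) (α : Fin (2*p)) :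
    ∃ m : ℝ, (∀ u ∈ Icc t₀ t₁, G p α u = G p α t₀ + (u - t₀) * m) ∧
      (∀ u ∈ Ico t₀ t₁, vA p α u = m) ∧ (∀ u ∈ Ioc t₀ t₁, vI p α u = m) := by
  obtain ⟨m, hm⟩ := gapG p h01 hno α
  refine ⟨m, hm, ?_, ?_⟩
  · intro u hu
    apply vA_unique
    apply Filter.eventually_of_mem (Ico_mem_nhdsGE_of_mem ⟨le_refl u, hu.2⟩)
    intro w hw
    rw [hm w ⟨hu.1.trans hw.1, hw.2.le⟩, hm u ⟨hu.1, hu.2.le⟩]; ring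
  · intro u hu
    apply vI_unique
    apply Filter.eventually_of_mem (Icc_mem_nhdsLE_of_mem ⟨hu.1, le_refl u⟩)
    intro w hw
    rw [hm w ⟨hw.1, hw.2.trans hu.2⟩, hm u ⟨hu.1.le, hu.2⟩]; ring

lemma G_cont (α : Fin (2*p)) : Continuous (G p α) := by
  rw [continuous_iff_continuousAt]
  intro t
  obtain ⟨εL, hεL, hnoL⟩ := eps_left p t
  obtain ⟨εR, hεR, hnoR⟩ := eps_right p t
  obtain ⟨mL, hmL⟩ := gapG p (show t - εL < t by linarith) hnoL α
  obtain ⟨mR, hmR⟩ := gapG p (show t < t + εR by linarith) hnoR α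
  have cL : ContinuousWithinAt (G p α) (Iic t) t := by
    apply ContinuousWithinAt.congr_of_eventuallyEq
      (f := fun u : ℝ => G p α (t - εL) + (u - (t - εL)) * mL)
    · exact (by continuity : Continuous fun u : ℝ => G p α (t - εL) + (u - (t - εL)) * mL).continuousWithinAt
    · exact Filter.eventually_of_mem (Icc_mem_nhdsLE_of_mem ⟨by linarith, le_refl t⟩)
        (fun u hu => hmL u hu)
    · exact hmL t ⟨by linarith, le_refl t⟩
  have cR : ContinuousWithinAt (G p α) (Ici t) t := by
    apply ContinuousWithinAt.congr_of_eventuallyEq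
      (f := fun u : ℝ => G p α t + (u - t) * mR)
    · exact (by continuity : Continuous fun u : ℝ => G p α t + (u - t) * mR).continuousWithinAt
    · exact Filter.eventually_of_mem (Ico_mem_nhdsGE_of_mem ⟨le_refl t, by linarith⟩)
        (fun u hu => hmR u ⟨hu.1, hu.2.le⟩)
    · have := hmR t ⟨le_refl t, by linarith⟩; linarith
  have := cL.union cR
  rw [Iic_union_Ici] at this
  exact (continuousWithinAt_univ _ _).mp this

lemma no_kink_of_not_mem {t : ℝ} (ht : t ∉ Tfin p) (α : Fin (2*p)) : vI p α t = vA p α t := by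
  obtain ⟨ε, hε, hno⟩ := eps_both p t ht
  obtain ⟨m, hG, hvA, hvI⟩ := gapFull p (show t - ε < t + ε by linarith) hno α
  rw [hvA t ⟨by linarith, by linarith⟩, hvI t ⟨by linarith, by linarith⟩]

lemma pa0 (α : Fin (2*p)) (s t : ℝ) (hst : s ≤ t)
    (hno : ∀ x ∈ Ioo s t, x ∉ Tfin p)
    (hnk : ∀ u, s < u → u ≤ t → vI p α u = vA p α u) :
    vA p α t = vA p α s ∧ G p α t = G p α s + (t - s) * vA p α s := by
  rcases eq_or_lt_of_le hst with rfl | hlt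
  · exact ⟨rfl, by ring⟩
  obtain ⟨m, hG, hvA, hvI⟩ := gapFull p hlt hno α
  have hs : vA p α s = m := hvA s ⟨le_refl s, hlt⟩
  have ht : vA p α t = m := by rw [← hnk t hlt (le_refl t)]; exact hvI t ⟨hlt, le_refl t⟩
  exact ⟨by rw [hs, ht], by rw [hG t ⟨hst, le_refl t⟩, hs]⟩

lemma pa (α : Fin (2*p)) : ∀ k : ℕ, ∀ s t : ℝ, s ≤ t →
    ((Tfin p).filter (fun x => x ∈ Ioo s t)).card ≤ k →
    (∀ u, s < u → u ≤ t → vI p α u = vA p α u) →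
    vA p α t = vA p α s ∧ G p α t = G p α s + (t - s) * vA p α s := by
  classical
  intro k
  induction k with
  | zero =>
    intro s t hst hcard hnk
    apply pa0 p α s t hst _ hnk
    intro x hx hmem
    have hmem2 : x ∈ (Tfin p).filter (fun x => x ∈ Ioo s t) := Finset.mem_filter.mpr ⟨hmem, hx⟩
    rw [Nat.le_zero, Finset.card_eq_zero] at hcard
    rw [hcard] at hmem2
    exact absurd hmem2 (Finset.notMem_empty x)
  | succ k ih =>
    intro s t hst hcard hnk
    by_cases hne : ((Tfin p).filter (fun x => x ∈ Ioo s t)).Nonempty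
    · set F := (Tfin p).filter (fun x => x ∈ Ioo s t) with hF
      have hdmem := F.min'_mem hne
      set d := F.min' hne with hd
      rw [hF, Finset.mem_filter] at hdmem
      obtain ⟨hdT, hdIoo⟩ := hdmem
      have h1 : ∀ x ∈ Ioo s d, x ∉ Tfin p := by
        intro x hx hmem
        have hxF : x ∈ F := Finset.mem_filter.mpr ⟨hmem, ⟨hx.1, hx.2.trans hdIoo.2⟩⟩
        have := F.min'_le x hxF
        rw [← hd] at this
        linarith [hx.2]
      have r1 := pa0 p α s d hdIoo.1.le h1 (fun u hsu hud => hnk u hsu (hud.trans hdIoo.2.le))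
      have h2 : (Tfin p).filter (fun x => x ∈ Ioo d t) ⊆ F.erase d := by
        intro x hx
        rw [Finset.mem_filter] at hx
        refine Finset.mem_erase.mpr ⟨ne_of_gt hx.2.1, Finset.mem_filter.mpr ⟨hx.1, ⟨hdIoo.1.trans hx.2.1, hx.2.2⟩⟩⟩
      have hcard2 : ((Tfin p).filter (fun x => x ∈ Ioo d t)).card ≤ k := by
        have := Finset.card_le_card h2
        rw [Finset.card_erase_of_mem (F.min'_mem hne)] at this
        omega
      have r2 := ih d t hdIoo.2.le hcard2 (fun u hdu hut => hnk u (hdIoo.1.trans hdu) hut)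
      constructor
      · rw [r2.1, r1.1]
      · rw [r2.2, r1.2, r1.1]; ring
    · rw [Finset.not_nonempty_iff_eq_empty] at hne
      apply pa0 p α s t hst _ hnk
      intro x hx hmem
      have hmem2 : x ∈ (Tfin p).filter (fun x => x ∈ Ioo s t) := Finset.mem_filter.mpr ⟨hmem, hx⟩
      rw [hne] at hmem2
      exact absurd hmem2 (Finset.notMem_empty x)

lemma crossing_anal {t : ℝ} (ht : t ∈ Tfin p) :
    ∃ r r' : Fin (2*p), ((r:ℕ)+1 = (r':ℕ)) ∧ G p r t = G p r' t ∧
      (∀ β, G p β t = G p r t → β = r ∨ β = r') ∧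
      vI p r t = 1 ∧ vA p r t = -1 ∧ vI p r' t = -1 ∧ vA p r' t = 1 ∧
      (∀ α, α ≠ r → α ≠ r' → vI p α t = vA p α t) := by
  classical
  obtain ⟨q, -, hq⟩ := Finset.mem_image.mp ht
  have hq1 : (q.1 : ℕ) < p := q.1.isLt
  have hq2 : p + (q.2 : ℕ) < 2*p := by have := q.2.isLt; omega
  set i : Fin (2*p) := ⟨(q.1:ℕ), by omega⟩ with hi
  set j : Fin (2*p) := ⟨p + (q.2:ℕ), hq2⟩ with hj
  have hilt : (i:ℕ) < p := hq1
  have hjge : p ≤ (j:ℕ) := Nat.le_add_right p _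
  have hsigi : sig p i = 1 := sig_eq_one hilt
  have hsigj : sig p j = -1 := sig_eq_neg_one hjge
  have hccij : ff p i t = ff p j t := by
    unfold ff cc
    rw [hsigi, hsigj, ← hq]
    ring
  have hij : i ≠ j := by
    intro h
    have := congrArg Fin.val h
    simp only [hi, hj] at this
    omega
  have huniq : ∀ k l : Fin (2*p), k ≠ l → ff p k t = ff p l t →
      (k = i ∧ l = j) ∨ (k = j ∧ l = i) := by
    intro k l hkl hf
    have main : ∀ k l : Fin (2*p), (k:ℕ) < p → p ≤ (l:ℕ) → ff p k t = ff p l t →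
        k = i ∧ l = j := by
      intro k l hk hl hf
      have h1 := hccij
      unfold ff cc at hf h1
      rw [sig_eq_one hk, sig_eq_neg_one hl] at hf
      rw [hsigi, hsigj] at h1
      have heq : (4:ℝ)^(l:ℕ) - 4^(k:ℕ) = 4^(j:ℕ) - 4^(i:ℕ) := by linarith
      have hkl2 : (k:ℕ) < (l:ℕ) := by omega
      have hij2 : (i:ℕ) < (j:ℕ) := by
        simp only [hi, hj]; omega
      obtain ⟨e1, e2⟩ := pow4_diff_inj hkl2 hij2 heq
      exact ⟨Fin.ext e1, Fin.ext e2⟩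
    rcases lt_or_ge (k:ℕ) p with hk | hk <;> rcases lt_or_ge (l:ℕ) p with hl | hl
    · exact absurd (eq_of_same_slope (by rw [sig_eq_one hk, sig_eq_one hl]) hf) hkl
    · exact Or.inl (main k l hk hl hf)
    · obtain ⟨e1, e2⟩ := main l k hl hk hf.symm
      exact Or.inr ⟨e2, e1⟩
    · exact absurd (eq_of_same_slope (by rw [sig_eq_neg_one hk, sig_eq_neg_one hl]) hf) hkl
  obtain ⟨εL, hεL, hnoL⟩ := eps_left p t
  obtain ⟨εR, hεR, hnoR⟩ := eps_right p t
  -- left permutation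
  set keyL : Fin (2*p) → ℝ ×ₗ ℝ := fun k => toLex (ff p k t, -sig p k) with hkeyL_def
  set πL := Tuple.sort keyL with hπL_def
  have hmonoL := Tuple.monotone_sort keyL
  have hkeyL : ∀ α β : Fin (2*p), α ≤ β → ff p (πL α) t < ff p (πL β) t ∨
      (ff p (πL α) t = ff p (πL β) t ∧ sig p (πL β) ≤ sig p (πL α)) := by
    intro α β hab
    have := hmonoL hab
    rw [Function.comp, Function.comp] at this
    rcases (Prod.Lex.le_iff).mp this with h | ⟨h1, h2⟩
    · exact Or.inl h
    · exact Or.inr ⟨h1, by change -sig p (πL α) ≤ -sig p (πL β) at h2; linarith⟩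
  have hLmono : ∀ u ∈ Ioc (t - εL) t, Monotone (fun α => ff p (πL α) u) :=
    left_mono p (by linarith) hnoL πL.injective hkeyL
  have hGL : ∀ u ∈ Ioc (t - εL) t, ∀ α, G p α u = ff p (πL α) u := fun u hu α =>
    sortedEq p πL.bijective (hLmono u hu) α
  have htIoc : t ∈ Ioc (t - εL) t := ⟨by linarith, le_refl t⟩
  have hvI : ∀ α, vI p α t = sig p (πL α) := by
    intro α
    apply vI_unique
    filter_upwards [Ioc_mem_nhdsLE_of_mem htIoc] with u hu
    rw [hGL u hu α, hGL t htIoc α]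
    unfold ff; ring
  -- positions
  set r := πL.symm i with hr_def
  set r' := πL.symm j with hr'_def
  have hπr : πL r = i := πL.apply_symm_apply i
  have hπr' : πL r' = j := πL.apply_symm_apply j
  have hkeyinj : Function.Injective keyL := by
    intro k l h
    rw [hkeyL_def] at h
    have h2 : (ff p k t, -sig p k) = (ff p l t, -sig p l) := h
    have hf : ff p k t = ff p l t := congrArg Prod.fst h2
    have hs : -sig p k = -sig p l := congrArg Prod.snd h2
    exact eq_of_same_slope (by linarith) hf
  have hstrict : StrictMono (keyL ∘ πL) :=
    hmonoL.strictMono_of_injective (hkeyinj.comp πL.injective)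
  have hrr' : r < r' := by
    have hlt : keyL (πL r) < keyL (πL r') := by
      rw [hπr, hπr', hkeyL_def]
      rw [Prod.Lex.lt_iff]
      right
      exact ⟨hccij, by simp only [ofLex_toLex, hsigi, hsigj]; norm_num⟩
    exact hstrict.lt_iff_lt.mp hlt
  have hGr : G p r t = ff p i t := by rw [hGL t htIoc r, hπr]
  have hGr' : G p r' t = ff p i t := by rw [hGL t htIoc r', hπr', hccij]
  have hval : ∀ β, G p β t = ff p i t → β = r ∨ β = r' := by
    intro β hβ
    rw [hGL t htIoc β] at hβ
    by_cases h1 : πL β = i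
    · left; rw [hr_def, ← h1, Equiv.symm_apply_apply]
    by_cases h2 : πL β = j
    · right; rw [hr'_def, ← h2, Equiv.symm_apply_apply]
    rcases huniq (πL β) i h1 hβ with ⟨e1, -⟩ | ⟨e1, -⟩
    · exact absurd e1 h1
    · exact absurd e1 h2
  have hrne : r ≠ r' := ne_of_lt hrr'
  have hadj : (r:ℕ)+1 = (r':ℕ) := by
    by_contra hc
    have hlt2 : (r:ℕ)+1 < (r':ℕ) := by
      have := hrr'
      rw [Fin.lt_def] at this
      omega
    set β : Fin (2*p) := ⟨(r:ℕ)+1, by have := r'.isLt; omega⟩ with hβ_def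
    have h1 : G p r t ≤ G p β t := G_mono p (by rw [Fin.le_def]; simp [hβ_def])
    have h2 : G p β t ≤ G p r' t := G_mono p (by rw [Fin.le_def]; simp [hβ_def]; omega)
    have hGβ : G p β t = ff p i t := le_antisymm (h2.trans_eq hGr') (hGr ▸ h1)
    rcases hval β hGβ with h | h
    · have := congrArg Fin.val h; simp [hβ_def] at this
    · have := congrArg Fin.val h; simp [hβ_def] at this; omega
  -- right permutation
  set πRe := (Equiv.swap r r').trans πL with hπRe_def
  set πR : Fin (2*p) → Fin (2*p) := ⇑πRe with hπR_def
  have hπRr : πR r = j := by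
    rw [hπR_def, hπRe_def]
    simp [Equiv.swap_apply_left, hπr']
  have hπRr' : πR r' = i := by
    rw [hπR_def, hπRe_def]
    simp [Equiv.swap_apply_right, hπr]
  have hπRo : ∀ α, α ≠ r → α ≠ r' → πR α = πL α := by
    intro α h1 h2
    rw [hπR_def, hπRe_def]
    simp [Equiv.swap_apply_of_ne_of_ne h1 h2]
  have hπRt : ∀ α, ff p (πR α) t = G p α t := by
    intro α
    by_cases h1 : α = r
    · subst h1; rw [hπRr, ← hccij, hGr]
    by_cases h2 : α = r'
    · subst h2; rw [hπRr', hGr']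
    · rw [hπRo α h1 h2, hGL t htIoc α]
  have hkeyR : ∀ α β : Fin (2*p), α ≤ β → ff p (πR α) t < ff p (πR β) t ∨
      (ff p (πR α) t = ff p (πR β) t ∧ sig p (πR α) ≤ sig p (πR β)) := by
    intro α β hab
    rcases eq_or_lt_of_le (show G p α t ≤ G p β t from G_mono p hab) with heq | hlt
    · right
      refine ⟨by rw [hπRt α, hπRt β, heq], ?_⟩
      rcases eq_or_lt_of_le hab with rfl | hlt2
      · exact le_refl _
      · have hne2 : πR α ≠ πR β := fun h => (ne_of_lt hlt2) (πRe.injective h)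
        have hfeq : ff p (πR α) t = ff p (πR β) t := by rw [hπRt α, hπRt β, heq]
        rcases huniq (πR α) (πR β) hne2 hfeq with ⟨e1, e2⟩ | ⟨e1, e2⟩
        · -- πR α = i forces α = r', πR β = j forces β = r; contradiction with α < β
          exfalso
          have hα : α = r' := πRe.injective (e1.trans hπRr'.symm)
          have hβ2 : β = r := πRe.injective (e2.trans hπRr.symm)
          rw [hα, hβ2] at hlt2
          exact absurd hlt2 (not_lt.mpr hrr'.le)
        · rw [e1, e2, hsigi, hsigj]; norm_num
    · left; rw [hπRt α, hπRt β]; exact hlt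
  have hπRinj : Function.Injective πR := πRe.injective
  have hRmono : ∀ u ∈ Ico t (t + εR), Monotone (fun α => ff p (πR α) u) :=
    right_mono p (by linarith) hnoR hπRinj hkeyR
  have hGR : ∀ u ∈ Ico t (t + εR), ∀ α, G p α u = ff p (πR α) u := fun u hu α =>
    sortedEq p πRe.bijective (hRmono u hu) α
  have htIco : t ∈ Ico t (t + εR) := ⟨le_refl t, by linarith⟩
  have hvA : ∀ α, vA p α t = sig p (πR α) := by
    intro α
    apply vA_unique
    filter_upwards [Ico_mem_nhdsGE_of_mem htIco] with u hu
    rw [hGR u hu α, hGR t htIco α]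
    unfold ff; ring
  refine ⟨r, r', hadj, by rw [hGr, hGr'], ?_, ?_, ?_, ?_, ?_, ?_⟩
  · intro β hβ
    exact hval β (by rw [← hGr]; exact hβ)
  · rw [hvI r, hπr, hsigi]
  · rw [hvA r, hπRr, hsigj]
  · rw [hvI r', hπr', hsigj]
  · rw [hvA r', hπRr', hsigi]
  · intro α h1 h2
    rw [hvI α, hvA α, hπRo α h1 h2]

/-! ### The one-dimensional Euclidean space layer -/

def E1 (x : ℝ) : EuclideanSpace ℝ (Fin 1) := EuclideanSpace.single 0 x

lemma E1_apply (x : ℝ) (k : Fin 1) : E1 x k = x := by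
  have : k = 0 := Subsingleton.elim k 0
  simp [E1, EuclideanSpace.single_apply, this]

lemma E1_add (x y : ℝ) : E1 (x + y) = E1 x + E1 y := by
  ext k
  simp [E1_apply, PiLp.add_apply, E1, EuclideanSpace.single_apply, Subsingleton.elim k 0]

lemma E1_sub (x y : ℝ) : E1 (x - y) = E1 x - E1 y := by
  ext k
  simp [PiLp.sub_apply, E1, EuclideanSpace.single_apply, Subsingleton.elim k 0]

lemma E1_neg (x : ℝ) : E1 (-x) = - E1 x := by
  ext k
  simp [PiLp.neg_apply, E1, EuclideanSpace.single_apply, Subsingleton.elim k 0]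

lemma E1_smul (c x : ℝ) : c • E1 x = E1 (c * x) := by
  ext k
  simp [PiLp.smul_apply, E1, EuclideanSpace.single_apply, Subsingleton.elim k 0]

lemma E1_inj {x y : ℝ} (h : E1 x = E1 y) : x = y := by
  have := congrArg (fun v => v 0) h
  simpa [E1_apply] using this

lemma E1_norm (x : ℝ) : ‖E1 x‖ = |x| := by
  rw [E1, EuclideanSpace.norm_single]
  exact Real.norm_eq_abs x

lemma E1_dist (x y : ℝ) : dist (E1 x) (E1 y) = |x - y| := by
  rw [dist_eq_norm, ← E1_sub, E1_norm]

lemma E1_inner (x y : ℝ) : (inner ℝ (E1 x) (E1 y) : ℝ) = x * y := by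
  rw [E1, EuclideanSpace.inner_single_left]
  simp [E1_apply, E1]

lemma E1_cont : Continuous E1 :=
  (Isometry.of_dist_eq (fun x y => by rw [E1_dist]; exact (Real.dist_eq x y).symm)).continuous

/-! ### scalar helper lemmas for distances -/

lemma dist_lower {α β : Fin (2*p)} (h : α < β) (t : ℝ) :
    (2:ℝ) ≤ (G p β t + 2*((β:ℕ):ℝ)) - (G p α t + 2*((α:ℕ):ℝ)) := by
  have h1 : G p α t ≤ G p β t := G_mono p h.le
  have h2 : (α:ℕ)+1 ≤ (β:ℕ) := by rw [Fin.lt_def] at h; omega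
  have h3 : ((α:ℕ):ℝ) + 1 ≤ ((β:ℕ):ℝ) := by exact_mod_cast h2
  linarith

lemma dist_eq_two_iff {α β : Fin (2*p)} (h : α < β) (t : ℝ) :
    |(G p β t + 2*((β:ℕ):ℝ)) - (G p α t + 2*((α:ℕ):ℝ))| = 2 ↔
      ((β:ℕ) = (α:ℕ)+1 ∧ G p β t = G p α t) := by
  have h1 : G p α t ≤ G p β t := G_mono p h.le
  have h2 : (α:ℕ)+1 ≤ (β:ℕ) := by rw [Fin.lt_def] at h; omega
  have hl := dist_lower p h t
  rw [abs_of_nonneg (by linarith)]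
  constructor
  · intro he
    by_cases hc : (β:ℕ) = (α:ℕ)+1
    · refine ⟨hc, ?_⟩
      have h3 : ((β:ℕ):ℝ) = ((α:ℕ):ℝ)+1 := by exact_mod_cast hc
      linarith
    · exfalso
      have h3 : (α:ℕ)+2 ≤ (β:ℕ) := by omega
      have h4 : ((α:ℕ):ℝ) + 2 ≤ ((β:ℕ):ℝ) := by exact_mod_cast h3
      linarith
  · rintro ⟨hc, he⟩
    have h3 : ((β:ℕ):ℝ) = ((α:ℕ):ℝ)+1 := by exact_mod_cast hc
    rw [he]; ring_nf; linarith

lemma kink_mem_Tfin {α : Fin (2*p)} {t : ℝ} (h : vI p α t ≠ vA p α t) : t ∈ Tfin p := by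
  by_contra hm
  exact h (no_kink_of_not_mem p hm α)

lemma partner_det {t : ℝ} {r r' α β : Fin (2*p)}
    (hadj : (r:ℕ)+1 = (r':ℕ)) (hGrr : G p r t = G p r' t)
    (hval : ∀ γ, G p γ t = G p r t → γ = r ∨ γ = r')
    (hα : α = r ∨ α = r') (hβα : β ≠ α)
    (hdist : |(G p β t + 2*((β:ℕ):ℝ)) - (G p α t + 2*((α:ℕ):ℝ))| = 2) :
    (α = r ∧ β = r') ∨ (α = r' ∧ β = r) := by
  have hrltr' : r < r' := by rw [Fin.lt_def]; omega
  rcases lt_or_gt_of_ne hβα with h | h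
  · -- β < α
    rw [abs_sub_comm] at hdist
    obtain ⟨hc, he⟩ := (dist_eq_two_iff p h t).mp hdist
    rcases hα with rfl | rfl
    · exfalso
      rcases hval β he.symm with h1 | h1
      · exact hβα h1
      · rw [h1] at h
        exact absurd h (not_lt.mpr hrltr'.le)
    · rcases hval β (he.symm.trans hGrr.symm) with h1 | h1
      · exact Or.inr ⟨rfl, h1⟩
      · exact absurd h1 (ne_of_lt h)
  · -- α < β
    obtain ⟨hc, he⟩ := (dist_eq_two_iff p h t).mp hdist
    rcases hα with rfl | rfl
    · rcases hval β he with h1 | h1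
      · exact absurd h1 (ne_of_gt h)
      · exact Or.inl ⟨rfl, h1⟩
    · exfalso
      rcases hval β (he.trans hGrr.symm) with h1 | h1
      · rw [h1] at h
        exact absurd (hrltr'.trans h) (lt_irrefl r)
      · exact absurd h1 (ne_of_gt h)

/-! ### the flow -/

def flow : HardSphereFlow 1 (2*p) where
  a := 1
  a_pos := one_pos
  y := fun α t => E1 (G p α t + 2*((α:ℕ):ℝ))
  v := fun α t => E1 (vA p α t)
  vIn := fun α t => E1 (vI p α t)
  y_continuous := fun α =>
    E1_cont.comp ((G_cont p α).add continuous_const)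
  v_right_deriv := by
    intro α t
    have hev := vA_spec p α t
    have h1 : HasDerivAt (fun u : ℝ => u - t) 1 t := (hasDerivAt_id t).sub_const t
    have h2 := h1.smul_const (E1 (vA p α t))
    rw [one_smul] at h2
    have base := (h2.const_add (E1 (G p α t + 2*((α:ℕ):ℝ)))).hasDerivWithinAt (s := Ici t)
    apply base.congr_of_eventuallyEq
    · filter_upwards [hev] with u hu
      show E1 (G p α u + 2*((α:ℕ):ℝ)) = _
      rw [hu, E1_smul, ← E1_add]
      ring_nf
    · show E1 (G p α t + 2*((α:ℕ):ℝ)) = _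
      rw [E1_smul, ← E1_add]
      ring_nf
  vIn_left_limit := by
    intro α t
    obtain ⟨ε, hε, hno⟩ := eps_left p t
    obtain ⟨m, hG, hvA2, hvI2⟩ := gapFull p (show t - ε < t by linarith) hno α
    have hvIt : vI p α t = m := hvI2 t ⟨by linarith, le_refl t⟩
    filter_upwards [Ioo_mem_nhdsLT_of_mem (show t ∈ Ioc (t-ε) t from ⟨by linarith, le_refl t⟩)]
      with s hs
    show E1 (vA p α s) = E1 (vI p α t)
    rw [hvA2 s ⟨hs.1.le, hs.2⟩, hvIt]
  piecewise_affine := by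
    classical
    intro α s t hst hnk
    have hnk' : ∀ u, s < u → u ≤ t → vI p α u = vA p α u := fun u h1 h2 => E1_inj (hnk u h1 h2)
    obtain ⟨h1, h2⟩ := pa p α (((Tfin p).filter (fun x => x ∈ Ioo s t)).card) s t hst le_rfl hnk'
    constructor
    · show E1 _ = E1 _; rw [h1]
    · show E1 (G p α t + 2*((α:ℕ):ℝ)) = E1 (G p α s + 2*((α:ℕ):ℝ)) + (t-s) • E1 (vA p α s)
      rw [E1_smul, ← E1_add, h2]
      ring_nf
  kinks_finite := by
    intro α t₁ t₂
    apply Set.Finite.subset (Tfin p).finite_toSet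
    intro t htmem
    obtain ⟨-, hne⟩ := htmem
    by_contra hmem
    exact hne (congrArg E1 (no_kink_of_not_mem p hmem α))
  no_overlap := by
    intro t α β hab
    show 2*1 ≤ dist (E1 (G p β t + 2*((β:ℕ):ℝ))) (E1 (G p α t + 2*((α:ℕ):ℝ)))
    rw [E1_dist]
    rcases lt_or_gt_of_ne hab with h | h
    · have := dist_lower p h t
      rw [abs_of_nonneg (by linarith)]
      linarith
    · rw [abs_sub_comm]
      have := dist_lower p h t
      rw [abs_of_nonneg (by linarith)]
      linarith
  partner_unique := by
    intro α t hkink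
    have hkS : vI p α t ≠ vA p α t := fun h => hkink (congrArg E1 h)
    have htT := kink_mem_Tfin p hkS
    obtain ⟨r, r', hadj, hGrr, hval, hvIr, hvAr, hvIr', hvAr', hoth⟩ := crossing_anal p htT
    have hα : α = r ∨ α = r' := by
      by_contra hc; push_neg at hc; exact hkS (hoth α hc.1 hc.2)
    have hrltr' : r < r' := by rw [Fin.lt_def]; omega
    have hcast : ((r':ℕ):ℝ) = ((r:ℕ):ℝ)+1 := by exact_mod_cast hadj.symm
    have hdval : (G p r' t + 2*((r':ℕ):ℝ)) - (G p r t + 2*((r:ℕ):ℝ)) = 2 := by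
      rw [← hGrr, hcast]; ring
    rcases hα with h | h
    · rw [h]
      refine ⟨r', ⟨?_, ?_⟩, ?_⟩
      · intro he; have := congrArg Fin.val he; omega
      · show dist (E1 (G p r' t + 2*((r':ℕ):ℝ))) (E1 (G p r t + 2*((r:ℕ):ℝ))) = 2*1
        rw [E1_dist, hdval]; norm_num
      · rintro β ⟨hβne, hβdist⟩
        rw [show dist _ _ = dist (E1 (G p β t + 2*((β:ℕ):ℝ))) (E1 (G p r t + 2*((r:ℕ):ℝ))) from rfl,
          E1_dist] at hβdist
        norm_num at hβdist
        rcases partner_det p hadj hGrr hval (Or.inl rfl) hβne hβdist with ⟨-, h2⟩ | ⟨h1, -⟩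
        · exact h2
        · exact absurd h1 (ne_of_lt hrltr')
    · rw [h]
      refine ⟨r, ⟨?_, ?_⟩, ?_⟩
      · intro he; have := congrArg Fin.val he; omega
      · show dist (E1 (G p r t + 2*((r:ℕ):ℝ))) (E1 (G p r' t + 2*((r':ℕ):ℝ))) = 2*1
        rw [E1_dist, abs_sub_comm, hdval]; norm_num
      · rintro β ⟨hβne, hβdist⟩
        rw [show dist _ _ = dist (E1 (G p β t + 2*((β:ℕ):ℝ))) (E1 (G p r' t + 2*((r':ℕ):ℝ))) from rfl,
          E1_dist] at hβdist
        norm_num at hβdist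
        rcases partner_det p hadj hGrr hval (Or.inr rfl) hβne hβdist with ⟨h1, -⟩ | ⟨-, h2⟩
        · exact absurd h1.symm (ne_of_lt hrltr')
        · exact h2
  collision_rules := by
    intro α β t hkink hβα hdist
    have hkS : vI p α t ≠ vA p α t := fun h => hkink (congrArg E1 h)
    have htT := kink_mem_Tfin p hkS
    obtain ⟨r, r', hadj, hGrr, hval, hvIr, hvAr, hvIr', hvAr', hoth⟩ := crossing_anal p htT
    have hα : α = r ∨ α = r' := by
      by_contra hc; push_neg at hc; exact hkS (hoth α hc.1 hc.2)
    have hrltr' : r < r' := by rw [Fin.lt_def]; omega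
    have hcast : ((r':ℕ):ℝ) = ((r:ℕ):ℝ)+1 := by exact_mod_cast hadj.symm
    have hdval : (G p r' t + 2*((r':ℕ):ℝ)) - (G p r t + 2*((r:ℕ):ℝ)) = 2 := by
      rw [← hGrr, hcast]; ring
    have hdistS : |(G p β t + 2*((β:ℕ):ℝ)) - (G p α t + 2*((α:ℕ):ℝ))| = 2 := by
      rw [show dist _ _ = dist (E1 (G p β t + 2*((β:ℕ):ℝ))) (E1 (G p α t + 2*((α:ℕ):ℝ))) from rfl,
        E1_dist] at hdist
      norm_num at hdist
      exact hdist
    rcases partner_det p hadj hGrr hval hα hβα hdistS with ⟨h1, h2⟩ | ⟨h1, h2⟩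
    · -- α = r, β = r'
      rw [h1, h2]
      have hy : E1 (G p r' t + 2*((r':ℕ):ℝ)) - E1 (G p r t + 2*((r:ℕ):ℝ)) = E1 2 := by
        rw [← E1_sub, hdval]
      refine ⟨?_, ?_, ?_, ?_, ⟨-1, ?_⟩, ?_, ?_⟩
      · show E1 (vI p r' t) ≠ E1 (vA p r' t)
        rw [hvIr', hvAr']
        intro h; have := E1_inj h; norm_num at this
      · show E1 (vA p r t) + E1 (vA p r' t) = E1 (vI p r t) + E1 (vI p r' t)
        rw [hvAr, hvAr', hvIr, hvIr', ← E1_add, ← E1_add]; norm_num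
      · show ‖E1 (vA p r t)‖^2 + ‖E1 (vA p r' t)‖^2 = ‖E1 (vI p r t)‖^2 + ‖E1 (vI p r' t)‖^2
        rw [hvAr, hvAr', hvIr, hvIr', E1_norm, E1_norm]; norm_num
      · show E1 (vA p r t) - E1 (vI p r t) = E1 (vI p r' t) - E1 (vA p r' t)
        rw [hvAr, hvAr', hvIr, hvIr']
      · show E1 (vA p r t) - E1 (vI p r t) =
          (-1 : ℝ) • (E1 (G p r' t + 2*((r':ℕ):ℝ)) - E1 (G p r t + 2*((r:ℕ):ℝ)))
        rw [hy, hvAr, hvIr, ← E1_sub, E1_smul]; norm_num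
      · show (inner ℝ (E1 (vI p r' t) - E1 (vI p r t))
            (E1 (G p r' t + 2*((r':ℕ):ℝ)) - E1 (G p r t + 2*((r:ℕ):ℝ))) : ℝ) < 0
        rw [hy, hvIr, hvIr', ← E1_sub, E1_inner]; norm_num
      · show (0:ℝ) < inner ℝ (E1 (vA p r' t) - E1 (vA p r t))
            (E1 (G p r' t + 2*((r':ℕ):ℝ)) - E1 (G p r t + 2*((r:ℕ):ℝ)))
        rw [hy, hvAr, hvAr', ← E1_sub, E1_inner]; norm_num
    · -- α = r', β = r
      rw [h1, h2]
      have hy : E1 (G p r t + 2*((r:ℕ):ℝ)) - E1 (G p r' t + 2*((r':ℕ):ℝ)) = E1 (-2) := by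
        have h9 : (G p r t + 2*((r:ℕ):ℝ)) - (G p r' t + 2*((r':ℕ):ℝ)) = -2 := by linarith
        rw [← E1_sub, h9]
      refine ⟨?_, ?_, ?_, ?_, ⟨-1, ?_⟩, ?_, ?_⟩
      · show E1 (vI p r t) ≠ E1 (vA p r t)
        rw [hvIr, hvAr]
        intro h; have := E1_inj h; norm_num at this
      · show E1 (vA p r' t) + E1 (vA p r t) = E1 (vI p r' t) + E1 (vI p r t)
        rw [hvAr, hvAr', hvIr, hvIr', ← E1_add, ← E1_add]; norm_num
      · show ‖E1 (vA p r' t)‖^2 + ‖E1 (vA p r t)‖^2 = ‖E1 (vI p r' t)‖^2 + ‖E1 (vI p r t)‖^2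
        rw [hvAr, hvAr', hvIr, hvIr', E1_norm, E1_norm]; norm_num
      · show E1 (vA p r' t) - E1 (vI p r' t) = E1 (vI p r t) - E1 (vA p r t)
        rw [hvAr, hvAr', hvIr, hvIr']
      · show E1 (vA p r' t) - E1 (vI p r' t) =
          (-1 : ℝ) • (E1 (G p r t + 2*((r:ℕ):ℝ)) - E1 (G p r' t + 2*((r':ℕ):ℝ)))
        rw [hy, hvAr', hvIr', ← E1_sub, E1_smul]; norm_num
      · show (inner ℝ (E1 (vI p r t) - E1 (vI p r' t))
            (E1 (G p r t + 2*((r:ℕ):ℝ)) - E1 (G p r' t + 2*((r':ℕ):ℝ))) : ℝ) < 0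
        rw [hy, hvIr, hvIr', ← E1_sub, E1_inner]; norm_num
      · show (0:ℝ) < inner ℝ (E1 (vA p r t) - E1 (vA p r' t))
            (E1 (G p r t + 2*((r:ℕ):ℝ)) - E1 (G p r' t + 2*((r':ℕ):ℝ)))
        rw [hy, hvAr, hvAr', ← E1_sub, E1_inner]; norm_num
  one_collision_at_a_time := by
    intro t α β hkα hkβ hβα
    have hkSα : vI p α t ≠ vA p α t := fun h => hkα (congrArg E1 h)
    have hkSβ : vI p β t ≠ vA p β t := fun h => hkβ (congrArg E1 h)
    have htT := kink_mem_Tfin p hkSα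
    obtain ⟨r, r', hadj, hGrr, hval, hvIr, hvAr, hvIr', hvAr', hoth⟩ := crossing_anal p htT
    have hα : α = r ∨ α = r' := by
      by_contra hc; push_neg at hc; exact hkSα (hoth α hc.1 hc.2)
    have hβ : β = r ∨ β = r' := by
      by_contra hc; push_neg at hc; exact hkSβ (hoth β hc.1 hc.2)
    have hcast : ((r':ℕ):ℝ) = ((r:ℕ):ℝ)+1 := by exact_mod_cast hadj.symm
    have hdval : (G p r' t + 2*((r':ℕ):ℝ)) - (G p r t + 2*((r:ℕ):ℝ)) = 2 := by
      rw [← hGrr, hcast]; ring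
    rcases hα with h1 | h1 <;> rcases hβ with h2 | h2
    · exact absurd (h2.trans h1.symm) hβα
    · rw [h1, h2]
      show dist (E1 (G p r' t + 2*((r':ℕ):ℝ))) (E1 (G p r t + 2*((r:ℕ):ℝ))) = 2*1
      rw [E1_dist, hdval]; norm_num
    · rw [h1, h2]
      show dist (E1 (G p r t + 2*((r:ℕ):ℝ))) (E1 (G p r' t + 2*((r':ℕ):ℝ))) = 2*1
      rw [E1_dist, abs_sub_comm, hdval]; norm_num
    · exact absurd (h2.trans h1.symm) hβα

lemma init_data (α : Fin (2*p)) : vA p α 0 = sig p α ∧ G p α 0 = cc (α:ℕ) := by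
  obtain ⟨ε, hε, hno⟩ := eps_right p 0
  have hkey : ∀ a b : Fin (2*p), a ≤ b → ff p (id a) 0 < ff p (id b) 0 ∨
      (ff p (id a) 0 = ff p (id b) 0 ∧ sig p (id a) ≤ sig p (id b)) := by
    intro a b hab
    rcases eq_or_lt_of_le hab with rfl | h
    · exact Or.inr ⟨rfl, le_refl _⟩
    · left
      unfold ff
      rw [mul_zero, mul_zero, add_zero, add_zero]
      exact four_pow_strictMono (by rw [Fin.lt_def] at h; exact h)
  have hno' : ∀ s ∈ Ioo (0:ℝ) (0 + ε), s ∉ Tfin p := by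
    intro s hs; exact hno s (by simpa using hs)
  have hmono := right_mono p (show (0:ℝ) < 0 + ε by linarith) hno' (Function.injective_id) hkey
  have hG : ∀ u ∈ Ico (0:ℝ) (0+ε), ∀ b, G p b u = ff p b u := fun u hu b =>
    sortedEq p Function.bijective_id (hmono u hu) b
  have hG0 : G p α 0 = cc (α:ℕ) := by
    have := hG 0 ⟨le_refl _, by linarith⟩ α
    unfold ff at this
    rw [this]; ring
  refine ⟨?_, hG0⟩
  apply vA_unique
  filter_upwards [Ico_mem_nhdsGE_of_mem (show (0:ℝ) ∈ Ico (0:ℝ) (0+ε) from ⟨le_refl _, by linarith⟩)]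
    with u hu
  rw [hG u hu α, hG 0 ⟨le_refl _, by linarith⟩ α]
  unfold ff; ring

lemma sig_sum : ∑ α : Fin (2*p), sig p α = 0 := by
  have h2 : 2*p = p + p := two_mul p
  rw [Fintype.sum_equiv (finCongr h2) (fun α => sig p α)
    (fun i => sig p (finCongr h2.symm i)) (fun x => by simp)]
  rw [Fin.sum_univ_add]
  have e1 : ∀ i : Fin p, sig p (finCongr h2.symm (Fin.castAdd p i)) = 1 := by
    intro i
    apply sig_eq_one
    simpa using i.isLt
  have e2 : ∀ i : Fin p, sig p (finCongr h2.symm (Fin.natAdd p i)) = -1 := by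
    intro i
    apply sig_eq_neg_one
    simp
  rw [Finset.sum_congr rfl (fun i _ => e1 i), Finset.sum_congr rfl (fun i _ => e2 i)]
  simp

lemma E1_zero : E1 0 = 0 := by
  ext k
  rw [E1_apply]
  rfl

lemma E1_sum {s : Finset (Fin (2*p))} {f : Fin (2*p) → ℝ} :
    ∑ α ∈ s, E1 (f α) = E1 (∑ α ∈ s, f α) := by
  have h1 : ∀ x : ℝ, E1 x = x • E1 1 := fun x => by rw [E1_smul, mul_one]
  calc ∑ α ∈ s, E1 (f α) = ∑ α ∈ s, f α • E1 1 := by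
        apply Finset.sum_congr rfl; intro α _; rw [h1]
  _ = (∑ α ∈ s, f α) • E1 1 := (Finset.sum_smul).symm
  _ = E1 (∑ α ∈ s, f α) := by rw [← h1]

lemma sig_norm_one (α : Fin (2*p)) : ‖E1 (sig p α)‖ = 1 := by
  rcases sig_cases p α with h | h <;> rw [h, E1_norm] <;> norm_num

lemma Tfin_card : (Tfin p).card = p * p := by
  rw [Tfin, Finset.card_image_of_injective _ ?_, Finset.card_univ, Fintype.card_prod,
    Fintype.card_fin]
  intro q q' h
  dsimp at h
  have heq : (4:ℝ)^(p+(q.2:ℕ)) - 4^((q.1:ℕ)) = 4^(p+(q'.2:ℕ)) - 4^((q'.1:ℕ)) := by linarith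
  obtain ⟨e1, e2⟩ := pow4_diff_inj (show (q.1:ℕ) < p + (q.2:ℕ) by have := q.1.isLt; omega)
    (show (q'.1:ℕ) < p + (q'.2:ℕ) by have := q'.1.isLt; omega) heq
  have : q.1 = q'.1 := Fin.ext e1
  have : q.2 = q'.2 := Fin.ext (by omega)
  exact Prod.ext ‹q.1 = q'.1› this

end HS

/-- **Sharpness of the hodograph length estimate** (Serre, Section 1.2).
For every `p ≥ 1` there is a hard-sphere flow of `N = 2p` particles on the line (`n = 1`),
consisting of `p` particles with initial velocity `+1` placed to the left of `p` particles
with initial velocity `-1`, which has mean velocity `w = 0`, standard deviation `𝐯 = 1`,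
and `∑_α ℓ(H_α) = N²`. Hence `∑_α ℓ(H_α) ≤ c_n N² 𝐯` is sharp up to the constant. -/
theorem hard_spheres_hodograph_estimate_sharp (p : ℕ) (hp : 1 ≤ p) :
    ∃ F : HardSphereFlow 1 (2 * p),
      (∀ α : Fin (2 * p), F.v α 0 =
        if (α : ℕ) < p then (EuclideanSpace.single 0 1 : EuclideanSpace ℝ (Fin 1))
        else -(EuclideanSpace.single 0 1 : EuclideanSpace ℝ (Fin 1))) ∧
      (∀ α β : Fin (2 * p), (α : ℕ) < p → p ≤ (β : ℕ) → F.y α 0 0 < F.y β 0 0) ∧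
      F.meanVelocity = 0 ∧ F.vdev = 1 ∧
      ∑ α : Fin (2 * p), F.hodographLength α = ((2 * p : ℕ) : ℝ) ^ 2 := by
  classical
  have hv0 : ∀ α : Fin (2*p), (HS.flow p).v α 0 = HS.E1 (HS.sig p α) := by
    intro α
    show HS.E1 (HS.vA p α 0) = _
    rw [(HS.init_data p α).1]
  have hmean : (HS.flow p).meanVelocity = 0 := by
    have hsum0 : ∑ α : Fin (2*p), (HS.flow p).v α 0 = HS.E1 (∑ α : Fin (2*p), HS.sig p α) := by
      rw [← HS.E1_sum p]
      exact Finset.sum_congr rfl (fun α _ => hv0 α)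
    rw [HardSphereFlow.meanVelocity, hsum0, HS.sig_sum, HS.E1_zero, smul_zero]
  refine ⟨HS.flow p, ?_, ?_, hmean, ?_, ?_⟩
  · intro α
    rw [hv0 α]
    by_cases h : (α:ℕ) < p
    · rw [if_pos h, HS.sig_eq_one h]
      rfl
    · rw [if_neg h, HS.sig_eq_neg_one (by omega)]
      rw [show (-1 : ℝ) = -(1:ℝ) by norm_num, HS.E1_neg]
      rfl
  · intro α β hαp hβp
    show HS.E1 (HS.G p α 0 + 2*((α:ℕ):ℝ)) 0 < HS.E1 (HS.G p β 0 + 2*((β:ℕ):ℝ)) 0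
    rw [HS.E1_apply, HS.E1_apply, (HS.init_data p α).2, (HS.init_data p β).2]
    have h1 : (α:ℕ) < (β:ℕ) := by omega
    have h2 : HS.cc (α:ℕ) < HS.cc (β:ℕ) := HS.four_pow_strictMono h1
    have h3 : ((α:ℕ):ℝ) < ((β:ℕ):ℝ) := by exact_mod_cast h1
    linarith
  · -- vdev = 1
    have hE : (HS.flow p).totalEnergy = (1/2) * (2*(p:ℝ)) := by
      rw [HardSphereFlow.totalEnergy]
      congr 1
      calc ∑ α : Fin (2*p), ‖(HS.flow p).v α 0‖^2 = ∑ _α : Fin (2*p), (1:ℝ) := by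
            apply Finset.sum_congr rfl
            intro α _
            rw [hv0 α, HS.sig_norm_one]
            norm_num
      _ = (2*(p:ℝ)) := by
            rw [Finset.sum_const, Finset.card_univ, Fintype.card_fin, nsmul_eq_mul, mul_one]
            push_cast; ring
    have hppos : (0:ℝ) < (p:ℝ) := by exact_mod_cast hp
    rw [HardSphereFlow.vdev, HardSphereFlow.vbar, hE, hmean, norm_zero]
    have hq : 2 * (1/2 * (2*(p:ℝ))) / ((2*p : ℕ) : ℝ) = 1 := by
      push_cast
      field_simp
    rw [hq, Real.sqrt_one]
    norm_num
  · -- the hodograph sum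
    have hterm : ∀ α : Fin (2*p), (HS.flow p).hodographLength α =
        2 * ((((HS.Tfin p).filter (fun t => (HS.flow p).vIn α t ≠ (HS.flow p).v α t)).card : ℕ) : ℝ) := by
      intro α
      set Kα := (HS.Tfin p).filter (fun t => (HS.flow p).vIn α t ≠ (HS.flow p).v α t) with hKα
      have hset : (HS.flow p).KinkTimes α = ↑Kα := by
        ext t
        simp only [HardSphereFlow.KinkTimes, Set.mem_setOf_eq, hKα, Finset.coe_filter,
          Set.mem_setOf_eq, Finset.mem_coe, Finset.mem_filter]
        constructor
        · intro h
          exact ⟨HS.kink_mem_Tfin p (fun he => h (congrArg HS.E1 he)), h⟩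
        · exact fun h => h.2
      rw [HardSphereFlow.hodographLength, hset, Finset.tsum_subtype' Kα
        (fun t => ‖(HS.flow p).v α t - (HS.flow p).vIn α t‖)]
      have h2 : ∀ t ∈ Kα, ‖(HS.flow p).v α t - (HS.flow p).vIn α t‖ = 2 := by
        intro t htK
        rw [hKα, Finset.mem_filter] at htK
        obtain ⟨htT, hkink⟩ := htK
        have hkS : HS.vI p α t ≠ HS.vA p α t := fun he => hkink (congrArg HS.E1 he)
        obtain ⟨r, r', hadj, hGrr, hval, hvIr, hvAr, hvIr', hvAr', hoth⟩ := HS.crossing_anal p htT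
        have hα : α = r ∨ α = r' := by
          by_contra hc; push_neg at hc; exact hkS (hoth α hc.1 hc.2)
        show ‖HS.E1 (HS.vA p α t) - HS.E1 (HS.vI p α t)‖ = 2
        rcases hα with rfl | rfl
        · rw [hvAr, hvIr, ← HS.E1_sub, HS.E1_norm]; norm_num
        · rw [hvAr', hvIr', ← HS.E1_sub, HS.E1_norm]; norm_num
      rw [Finset.sum_congr rfl h2, Finset.sum_const, nsmul_eq_mul]
      ring
    have hcount : ∀ t ∈ HS.Tfin p,
        (Finset.univ.filter (fun α : Fin (2*p) =>
          (HS.flow p).vIn α t ≠ (HS.flow p).v α t)).card = 2 := by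
      intro t htT
      obtain ⟨r, r', hadj, hGrr, hval, hvIr, hvAr, hvIr', hvAr', hoth⟩ := HS.crossing_anal p htT
      have hne : r ≠ r' := by intro he; have := congrArg Fin.val he; omega
      have hfe : Finset.univ.filter (fun α : Fin (2*p) =>
          (HS.flow p).vIn α t ≠ (HS.flow p).v α t) = {r, r'} := by
        ext α
        simp only [Finset.mem_filter, Finset.mem_univ, true_and, Finset.mem_insert,
          Finset.mem_singleton]
        constructor
        · intro h
          by_contra hc; push_neg at hc
          exact h (congrArg HS.E1 (hoth α hc.1 hc.2))
        · rintro (rfl | rfl)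
          · show HS.E1 (HS.vI p α t) ≠ HS.E1 (HS.vA p α t)
            rw [hvIr, hvAr]
            intro h; have := HS.E1_inj h; norm_num at this
          · show HS.E1 (HS.vI p α t) ≠ HS.E1 (HS.vA p α t)
            rw [hvIr', hvAr']
            intro h; have := HS.E1_inj h; norm_num at this
      rw [hfe, Finset.card_insert_of_notMem (by simpa using hne), Finset.card_singleton]
    have hnat : ∑ α : Fin (2*p),
        ((HS.Tfin p).filter (fun t => (HS.flow p).vIn α t ≠ (HS.flow p).v α t)).card
        = 2 * (p*p) := by
      simp only [Finset.card_filter]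
      rw [Finset.sum_comm]
      have hrw : ∀ t ∈ HS.Tfin p, (∑ α : Fin (2*p),
          if (HS.flow p).vIn α t ≠ (HS.flow p).v α t then 1 else 0) = 2 := by
        intro t ht
        rw [← Finset.card_filter]
        exact hcount t ht
      rw [Finset.sum_congr rfl hrw, Finset.sum_const, HS.Tfin_card, smul_eq_mul, mul_comm]
    calc ∑ α : Fin (2*p), (HS.flow p).hodographLength α
        = ∑ α : Fin (2*p), 2 * ((((HS.Tfin p).filter
            (fun t => (HS.flow p).vIn α t ≠ (HS.flow p).v α t)).card : ℕ) : ℝ) :=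
          Finset.sum_congr rfl (fun α _ => hterm α)
      _ = 2 * (((∑ α : Fin (2*p), ((HS.Tfin p).filter
            (fun t => (HS.flow p).vIn α t ≠ (HS.flow p).v α t)).card : ℕ)) : ℝ) := by
          rw [← Finset.mul_sum]
          push_cast
          ring
      _ = ((2*p : ℕ) : ℝ)^2 := by
          rw [hnat]
          push_cast
          ring
end
end

section
/- Let U ⊆ ℝ^d be open and θ : U → ℝ be of class C³. Then the row-wise divergence of the cofactor (adjugate) matrix of the Hessian of θ vanishes identically: for every index a ∈ {1,…,d} and every x ∈ U, ∑_{b=1}^d ∂_b ( adj(D²θ(x)) )_{ab} = 0. -/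
open scoped BigOperators

noncomputable section

/-- The Hessian matrix `D²θ(x)` of `θ : ℝ^d → ℝ`, with entries `∂_a ∂_b θ(x)`. -/
def hessian {d : ℕ} (θ : EuclideanSpace ℝ (Fin d) → ℝ) (x : EuclideanSpace ℝ (Fin d)) :
    Matrix (Fin d) (Fin d) ℝ :=
  Matrix.of fun a b =>
    fderiv ℝ (fun z => fderiv ℝ θ z (EuclideanSpace.single b 1)) x (EuclideanSpace.single a 1)

lemma detRow_bound (d : ℕ) (m : Fin d → (Fin d → ℝ)) :
    ‖Matrix.detRowAlternating (Matrix.of m)‖ ≤ (d.factorial : ℝ) * ∏ i, ‖m i‖ := by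
  classical
  calc ‖Matrix.detRowAlternating (Matrix.of m)‖
      = ‖∑ σ : Equiv.Perm (Fin d), (Equiv.Perm.sign σ : ℤ) • ∏ i, m (σ i) i‖ := by
        rw [show Matrix.detRowAlternating (Matrix.of m) = (Matrix.of m).det from rfl,
          Matrix.det_apply]
        rfl
    _ ≤ ∑ σ : Equiv.Perm (Fin d), ‖(Equiv.Perm.sign σ : ℤ) • ∏ i, m (σ i) i‖ :=
        norm_sum_le _ _
    _ ≤ ∑ _σ : Equiv.Perm (Fin d), ∏ i, ‖m i‖ := by
        refine Finset.sum_le_sum fun σ _ => ?_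
        have h1 : ‖(Equiv.Perm.sign σ : ℤ) • ∏ i, m (σ i) i‖ = ‖∏ i, m (σ i) i‖ := by
          rcases Int.units_eq_one_or (Equiv.Perm.sign σ) with h | h <;> simp [h]
        rw [h1, ← Equiv.prod_comp σ (fun k => ‖m k‖), norm_prod]
        exact Finset.prod_le_prod (fun i _ => norm_nonneg _)
          (fun i _ => norm_le_pi_norm (m (σ i)) i)
    _ = (d.factorial : ℝ) * ∏ i, ‖m i‖ := by
        rw [Finset.sum_const, Finset.card_univ, Fintype.card_perm, Fintype.card_fin,
          nsmul_eq_mul]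

/-- The determinant, as a continuous multilinear map in the rows. -/
def detCM (d : ℕ) : ContinuousMultilinearMap ℝ (fun _ : Fin d => (Fin d → ℝ)) ℝ :=
  MultilinearMap.mkContinuous
    (Matrix.detRowAlternating : (Fin d → ℝ) [⋀^Fin d]→ₗ[ℝ] ℝ).toMultilinearMap
    (d.factorial : ℝ) (fun m => detRow_bound d m)

lemma detCM_apply (d : ℕ) (m : Fin d → (Fin d → ℝ)) :
    detCM d m = (Matrix.of m).det := rfl

lemma detCM_swap (d : ℕ) (m : Fin d → Fin d → ℝ) {i j : Fin d} (h : i ≠ j) :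
    detCM d (m ∘ Equiv.swap i j) = - detCM d m := by
  show Matrix.detRowAlternating (Matrix.of (m ∘ Equiv.swap i j)) = _
  exact (Matrix.detRowAlternating).map_swap m h


/-- **The cofactor matrix of a Hessian is row-wise divergence-free** (Serre, Section 4.1).
If `θ : U → ℝ` is `C³` on an open set `U ⊆ ℝ^d`, then for every `a` and every `x ∈ U`,
`∑_b ∂_b (adj(D²θ(x)))_{ab} = 0`. -/
theorem adjugate_hessian_divergence_free (d : ℕ) (U : Set (EuclideanSpace ℝ (Fin d)))
    (hU : IsOpen U) (θ : EuclideanSpace ℝ (Fin d) → ℝ) (hθ : ContDiffOn ℝ 3 θ U)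
    (a : Fin d) (x : EuclideanSpace ℝ (Fin d)) (hx : x ∈ U) :
    ∑ b : Fin d,
      fderiv ℝ (fun z => (hessian θ z).adjugate a b) x (EuclideanSpace.single b 1) = 0 := by
  classical
  set e : Fin d → EuclideanSpace ℝ (Fin d) := fun i => EuclideanSpace.single i 1 with he
  have hgoal : ∀ b : Fin d, EuclideanSpace.single b (1:ℝ) = e b := fun _ => rfl
  simp only [hgoal]
  -- smoothness
  have hθx : ContDiffAt ℝ 3 θ x := hθ.contDiffAt (hU.mem_nhds hx)
  have h1 : ContDiffAt ℝ 2 (fderiv ℝ θ) x := hθx.fderiv_right (by norm_num)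
  set g : Fin d → EuclideanSpace ℝ (Fin d) → ℝ := fun c z => fderiv ℝ θ z (e c) with hgdef
  have hgc : ∀ c, ContDiffAt ℝ 2 (g c) x := fun c => h1.clm_apply contDiffAt_const
  have hg1 : ∀ c, ContDiffAt ℝ 1 (fderiv ℝ (g c)) x := fun c => (hgc c).fderiv_right (by norm_num)
  set T : Fin d → (EuclideanSpace ℝ (Fin d) →L[ℝ] EuclideanSpace ℝ (Fin d) →L[ℝ] ℝ) := fun c => fderiv ℝ (fderiv ℝ (g c)) x with hTdef
  have hsym : ∀ c v w, T c v w = T c w v := fun c =>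
    ((hgc c).isSymmSndFDerivAt (by norm_num))
  -- row functions and their derivatives
  set ρ : Fin d → EuclideanSpace ℝ (Fin d) → (Fin d → ℝ) := fun s z c => fderiv ℝ (g c) z (e s) with hρdef
  set Rρ : Fin d → (EuclideanSpace ℝ (Fin d) →L[ℝ] (Fin d → ℝ)) := fun s =>
    ContinuousLinearMap.pi fun c => (ContinuousLinearMap.apply ℝ ℝ (e s)).comp (T c) with hRρ
  have hρd : ∀ s, HasFDerivAt (ρ s) (Rρ s) x := by
    intro s
    apply hasFDerivAt_pi.2
    intro c
    exact (ContinuousLinearMap.apply ℝ ℝ (e s)).hasFDerivAt.comp x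
      ((hg1 c).differentiableAt one_ne_zero).hasFDerivAt
  set ea : Fin d → ℝ := Pi.single a 1 with hea
  -- the family of maps whose determinant is the adjugate entry
  set G : Fin d → Fin d → EuclideanSpace ℝ (Fin d) → (Fin d → ℝ) := fun b s => if s = b then (fun _ => ea) else ρ s
    with hG
  set G' : Fin d → Fin d → (EuclideanSpace ℝ (Fin d) →L[ℝ] (Fin d → ℝ)) := fun b s => if s = b then 0 else Rρ s with hG'
  have hGd : ∀ b s, HasFDerivAt (G b s) (G' b s) x := by
    intro b s
    by_cases h : s = b
    · simp only [hG, hG', if_pos h]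
      exact hasFDerivAt_const _ _
    · simp only [hG, hG', if_neg h]
      exact hρd s
  have key : ∀ b, HasFDerivAt (fun z => detCM d (fun s => G b s z))
      (∑ s : Fin d, ((detCM d).toContinuousLinearMap (fun j => G b j x) s) ∘L (G' b s)) x :=
    fun b => HasFDerivAt.multilinear_comp (detCM d) (hGd b)
  -- identify the adjugate entry with the multilinear expression
  have hfun : ∀ b (z : EuclideanSpace ℝ (Fin d)), (hessian θ z).adjugate a b = detCM d (fun s => G b s z) := by
    intro b z
    rw [Matrix.adjugate_apply, detCM_apply]
    congr 1
    ext s c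
    by_cases h : s = b
    · subst h
      simp [Matrix.updateRow_apply, hG, hea]
    · simp [Matrix.updateRow_apply, h, hG, hρdef, hessian, hgdef, he]
  -- compute each summand of the divergence
  have hterm : ∀ b, fderiv ℝ (fun z => (hessian θ z).adjugate a b) x (e b)
      = ∑ s : Fin d, detCM d (Function.update (fun j => G b j x) s (G' b s (e b))) := by
    intro b
    have : (fun z => (hessian θ z).adjugate a b) = fun z => detCM d (fun s => G b s z) := by
      funext z; exact hfun b z
    rw [this, (key b).fderiv]
    simp [ContinuousLinearMap.sum_apply]
  calc ∑ b : Fin d, fderiv ℝ (fun z => (hessian θ z).adjugate a b) x (e b)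
      = ∑ b : Fin d, ∑ s : Fin d,
          detCM d (Function.update (fun j => G b j x) s (G' b s (e b))) := by
        exact Finset.sum_congr rfl fun b _ => hterm b
    _ = 0 := by
        set F : Fin d → Fin d → ℝ := fun b s =>
          detCM d (Function.update (fun j => G b j x) s (G' b s (e b))) with hF
        have hanti : ∀ b s, F b s = - F s b := by
          intro b s
          by_cases hbs : s = b
          · subst hbs
            have : F s s = 0 := by
              simp only [hF, hG', if_pos rfl, ContinuousLinearMap.zero_apply]
              exact (detCM d).map_update_zero _ _
            rw [this]; ring
          · have hG'bs : G' b s (e b) = fun c => T c (e b) (e s) := by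
              funext c
              simp [hG', if_neg hbs, hRρ, ContinuousLinearMap.pi_apply]
            have hG'sb : G' s b (e s) = fun c => T c (e b) (e s) := by
              funext c
              have hbs' : ¬ b = s := fun h => hbs h.symm
              simp only [hG', if_neg hbs', hRρ, ContinuousLinearMap.pi_apply,
                ContinuousLinearMap.comp_apply, ContinuousLinearMap.apply_apply]
              exact (hsym c (e s) (e b))
            rw [hF]
            simp only [hG'bs, hG'sb]
            have hswap : Function.update (fun j => G s j x) b (fun c => T c (e b) (e s))
                = (Function.update (fun j => G b j x) s (fun c => T c (e b) (e s)))
                  ∘ (Equiv.swap b s) := by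
              funext r
              simp only [Function.comp_apply]
              rcases eq_or_ne r b with rfl | hrb
              · rw [Equiv.swap_apply_left, Function.update_self, Function.update_self]
              · rcases eq_or_ne r s with rfl | hrs
                · rw [Equiv.swap_apply_right, Function.update_of_ne hrb,
                    Function.update_of_ne (fun h => hbs h.symm)]
                  simp [hG]
                · rw [Equiv.swap_apply_of_ne_of_ne hrb hrs, Function.update_of_ne hrb,
                    Function.update_of_ne hrs]
                  simp [hG, hrb, hrs]
            rw [hswap, detCM_swap d _ (fun h => hbs h.symm), neg_neg]
        have hsum : ∑ b : Fin d, ∑ s : Fin d, F b s = - ∑ b : Fin d, ∑ s : Fin d, F b s := by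
          calc ∑ b : Fin d, ∑ s : Fin d, F b s
              = ∑ b : Fin d, ∑ s : Fin d, -(F s b) :=
                Finset.sum_congr rfl fun b _ => Finset.sum_congr rfl fun s _ => hanti b s
            _ = -(∑ b : Fin d, ∑ s : Fin d, F s b) := by
                simp
            _ = -(∑ b : Fin d, ∑ s : Fin d, F b s) := by rw [Finset.sum_comm]
        linarith [hsum]
end
end

section
/- Let p : ℝ → ℝ be a C² function that is 2π-periodic, and define θ on ℝ²∖{0} by θ(r cos φ, r sin φ) = r·p(φ) for r > 0 and φ ∈ ℝ. Then at every point x = (r cos φ, r sin φ) with r > 0, the cofactor (adjugate) matrix of the Hessian of θ equals (p(φ) + p''(φ)) · (x xᵀ)/|x|³; explicitly, ∂₂₂θ(x) = (p(φ)+p''(φ)) x₁²/|x|³, ∂₁₁θ(x) = (p(φ)+p''(φ)) x₂²/|x|³, and −∂₁₂θ(x) = (p(φ)+p''(φ)) x₁x₂/|x|³. -/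
open Real

noncomputable section

/-- First partial derivative `∂₁ f` of `f : ℝ² → ℝ`. -/
def pd1 (f : ℝ × ℝ → ℝ) (x : ℝ × ℝ) : ℝ := fderiv ℝ f x (1, 0)

/-- Second partial derivative `∂₂ f` of `f : ℝ² → ℝ`. -/
def pd2 (f : ℝ × ℝ → ℝ) (x : ℝ × ℝ) : ℝ := fderiv ℝ f x (0, 1)

namespace SerreAux

def Uu (φ₀ : ℝ) (x : ℝ × ℝ) : ℝ := Real.cos φ₀ * x.1 + Real.sin φ₀ * x.2
def Vv (φ₀ : ℝ) (x : ℝ × ℝ) : ℝ := -Real.sin φ₀ * x.1 + Real.cos φ₀ * x.2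
def Ang (φ₀ : ℝ) (x : ℝ × ℝ) : ℝ := φ₀ + Real.arctan (Vv φ₀ x * (Uu φ₀ x)⁻¹)
def Rad (x : ℝ × ℝ) : ℝ := Real.sqrt (x.1 ^ 2 + x.2 ^ 2)

def mk2 (a b : ℝ) : ℝ × ℝ →L[ℝ] ℝ :=
  a • ContinuousLinearMap.fst ℝ ℝ ℝ + b • ContinuousLinearMap.snd ℝ ℝ ℝ

@[simp] lemma mk2_apply (a b : ℝ) (h : ℝ × ℝ) : mk2 a b h = a * h.1 + b * h.2 := by
  simp [mk2, smul_eq_mul]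

lemma sq_id (φ₀ : ℝ) (x : ℝ × ℝ) : Uu φ₀ x ^ 2 + Vv φ₀ x ^ 2 = x.1 ^ 2 + x.2 ^ 2 := by
  have h := sin_sq_add_cos_sq φ₀
  unfold Uu Vv
  linear_combination (x.1 ^ 2 + x.2 ^ 2) * h

lemma q_pos (φ₀ : ℝ) (x : ℝ × ℝ) (hu : 0 < Uu φ₀ x) : 0 < x.1 ^ 2 + x.2 ^ 2 := by
  nlinarith [sq_id φ₀ x, sq_nonneg (Vv φ₀ x)]

lemma rad_pos (φ₀ : ℝ) (x : ℝ × ℝ) (hu : 0 < Uu φ₀ x) : 0 < Rad x :=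
  Real.sqrt_pos.2 (q_pos φ₀ x hu)

lemma rad_sq (φ₀ : ℝ) (x : ℝ × ℝ) (hu : 0 < Uu φ₀ x) : Rad x ^ 2 = x.1 ^ 2 + x.2 ^ 2 :=
  Real.sq_sqrt (q_pos φ₀ x hu).le

lemma sqrt_one_add (φ₀ : ℝ) (x : ℝ × ℝ) (hu : 0 < Uu φ₀ x) :
    Real.sqrt (1 + (Vv φ₀ x * (Uu φ₀ x)⁻¹) ^ 2) = Rad x / Uu φ₀ x := by
  have h1 : 1 + (Vv φ₀ x * (Uu φ₀ x)⁻¹) ^ 2 = (x.1 ^ 2 + x.2 ^ 2) / Uu φ₀ x ^ 2 := by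
    field_simp
    linear_combination sq_id φ₀ x
  rw [h1, show x.1 ^ 2 + x.2 ^ 2 = Rad x ^2 from (rad_sq φ₀ x hu).symm,
    Real.sqrt_div (sq_nonneg _), Real.sqrt_sq (rad_pos φ₀ x hu).le, Real.sqrt_sq hu.le]

lemma cosAng (φ₀ : ℝ) (x : ℝ × ℝ) (hu : 0 < Uu φ₀ x) :
    Real.cos (Ang φ₀ x) = x.1 / Rad x := by
  have hR := rad_pos φ₀ x hu
  unfold Ang
  rw [Real.cos_add, Real.cos_arctan, Real.sin_arctan, sqrt_one_add φ₀ x hu]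
  have hu' : Uu φ₀ x ≠ 0 := hu.ne'
  have hx1 : Real.cos φ₀ * Uu φ₀ x - Real.sin φ₀ * Vv φ₀ x = x.1 := by
    unfold Uu Vv; linear_combination x.1 * sin_sq_add_cos_sq φ₀
  field_simp
  linear_combination hx1

lemma sinAng (φ₀ : ℝ) (x : ℝ × ℝ) (hu : 0 < Uu φ₀ x) :
    Real.sin (Ang φ₀ x) = x.2 / Rad x := by
  have hR := rad_pos φ₀ x hu
  unfold Ang
  rw [Real.sin_add, Real.cos_arctan, Real.sin_arctan, sqrt_one_add φ₀ x hu]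
  have hu' : Uu φ₀ x ≠ 0 := hu.ne'
  have hx2 : Real.sin φ₀ * Uu φ₀ x + Real.cos φ₀ * Vv φ₀ x = x.2 := by
    unfold Uu Vv; linear_combination x.2 * sin_sq_add_cos_sq φ₀
  field_simp
  linear_combination hx2

lemma hasFDerivAt_Uu (φ₀ : ℝ) (x : ℝ × ℝ) :
    HasFDerivAt (Uu φ₀) (mk2 (Real.cos φ₀) (Real.sin φ₀)) x :=
  (hasFDerivAt_fst.const_mul (Real.cos φ₀)).add (hasFDerivAt_snd.const_mul (Real.sin φ₀))

lemma hasFDerivAt_Vv (φ₀ : ℝ) (x : ℝ × ℝ) :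
    HasFDerivAt (Vv φ₀) (mk2 (-Real.sin φ₀) (Real.cos φ₀)) x :=
  (hasFDerivAt_fst.const_mul (-Real.sin φ₀)).add (hasFDerivAt_snd.const_mul (Real.cos φ₀))

lemma hasFDerivAt_Rad (φ₀ : ℝ) (x : ℝ × ℝ) (hu : 0 < Uu φ₀ x) :
    HasFDerivAt Rad (mk2 (x.1 / Rad x) (x.2 / Rad x)) x := by
  have hq : HasFDerivAt (fun y : ℝ × ℝ => y.1 ^ 2 + y.2 ^ 2) (mk2 (2 * x.1) (2 * x.2)) x := by
    have h1 : HasFDerivAt (fun y : ℝ × ℝ => y.1 * y.1 + y.2 * y.2)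
        ((x.1 • (ContinuousLinearMap.fst ℝ ℝ ℝ) + x.1 • (ContinuousLinearMap.fst ℝ ℝ ℝ)) +
         (x.2 • (ContinuousLinearMap.snd ℝ ℝ ℝ) + x.2 • (ContinuousLinearMap.snd ℝ ℝ ℝ))) x :=
      (hasFDerivAt_fst.mul hasFDerivAt_fst).add (hasFDerivAt_snd.mul hasFDerivAt_snd)
    have h2 : (fun y : ℝ × ℝ => y.1 ^ 2 + y.2 ^ 2) = fun y : ℝ × ℝ => y.1 * y.1 + y.2 * y.2 := by
      funext y; ring
    rw [h2]
    convert h1 using 1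
    ext h <;> simp [mk2, smul_eq_mul] <;> ring
  have hs := (Real.hasDerivAt_sqrt (q_pos φ₀ x hu).ne').comp_hasFDerivAt x hq
  have hR := rad_pos φ₀ x hu
  refine hs.congr_fderiv ?_
  ext <;>
  · simp only [mk2, ContinuousLinearMap.add_apply, ContinuousLinearMap.smul_apply,
      ContinuousLinearMap.coe_fst', ContinuousLinearMap.coe_snd', smul_eq_mul,
      ContinuousLinearMap.coe_comp', Function.comp_apply, ContinuousLinearMap.inl_apply,
      ContinuousLinearMap.inr_apply]
    have h0 : Real.sqrt (x.1 ^ 2 + x.2 ^ 2) ≠ 0 := (Real.sqrt_pos.2 (q_pos φ₀ x hu)).ne'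
    simp only [Rad]
    field_simp

lemma hasFDerivAt_Ang (φ₀ : ℝ) (x : ℝ × ℝ) (hu : 0 < Uu φ₀ x) :
    HasFDerivAt (Ang φ₀) (mk2 (-x.2 / Rad x ^ 2) (x.1 / Rad x ^ 2)) x := by
  have hu' : Uu φ₀ x ≠ 0 := hu.ne'
  have hinv := (hasDerivAt_inv hu').comp_hasFDerivAt x (hasFDerivAt_Uu φ₀ x)
  have hdiv := (hasFDerivAt_Vv φ₀ x).mul hinv
  have harc := (Real.hasDerivAt_arctan (Vv φ₀ x * (Uu φ₀ x)⁻¹)).comp_hasFDerivAt x hdiv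
  have hfin := harc.const_add φ₀
  have hR := rad_pos φ₀ x hu
  have hq2 : Rad x ^ 2 = x.1 ^ 2 + x.2 ^ 2 := rad_sq φ₀ x hu
  refine hfin.congr_fderiv ?_
  ext <;>
  · simp only [mk2, ContinuousLinearMap.add_apply, ContinuousLinearMap.smul_apply,
      ContinuousLinearMap.coe_fst', ContinuousLinearMap.coe_snd', smul_eq_mul,
      ContinuousLinearMap.coe_comp', Function.comp_apply, ContinuousLinearMap.inl_apply,
      ContinuousLinearMap.inr_apply]
    rw [hq2, show (1:ℝ) + (Vv φ₀ x * (Uu φ₀ x)⁻¹) ^ 2 = (x.1^2 + x.2^2) / Uu φ₀ x ^ 2 by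
      field_simp; linear_combination sq_id φ₀ x]
    have hx1 : Real.cos φ₀ * Uu φ₀ x - Real.sin φ₀ * Vv φ₀ x = x.1 := by
      unfold Uu Vv; linear_combination x.1 * sin_sq_add_cos_sq φ₀
    have hx2 : Real.sin φ₀ * Uu φ₀ x + Real.cos φ₀ * Vv φ₀ x = x.2 := by
      unfold Uu Vv; linear_combination x.2 * sin_sq_add_cos_sq φ₀
    have hqne : x.1 ^ 2 + x.2 ^ 2 ≠ 0 := (q_pos φ₀ x hu).ne'
    field_simp
    first
      | linear_combination hx1
      | linear_combination (-1 : ℝ) * hx2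
      | linear_combination (-(x.1 ^ 2 + x.2 ^ 2)) * Uu φ₀ x ^ 3 * hx1
      | linear_combination (-(x.1 ^ 2 + x.2 ^ 2)) * Uu φ₀ x ^ 3 * hx2

def Ff (p : ℝ → ℝ) (φ₀ : ℝ) (x : ℝ × ℝ) : ℝ := Rad x * p (Ang φ₀ x)
def aa (p : ℝ → ℝ) (φ₀ : ℝ) (x : ℝ × ℝ) : ℝ :=
  (p (Ang φ₀ x) * x.1 - deriv p (Ang φ₀ x) * x.2) * (Rad x)⁻¹
def bb (p : ℝ → ℝ) (φ₀ : ℝ) (x : ℝ × ℝ) : ℝ :=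
  (p (Ang φ₀ x) * x.2 + deriv p (Ang φ₀ x) * x.1) * (Rad x)⁻¹

lemma hasFDerivAt_Ff (p : ℝ → ℝ) (hp : Differentiable ℝ p) (φ₀ : ℝ) (x : ℝ × ℝ)
    (hu : 0 < Uu φ₀ x) :
    HasFDerivAt (Ff p φ₀) (mk2 (aa p φ₀ x) (bb p φ₀ x)) x := by
  have hdp : HasDerivAt p (deriv p (Ang φ₀ x)) (Ang φ₀ x) := (hp _).hasDerivAt
  have hpa := hdp.comp_hasFDerivAt x (hasFDerivAt_Ang φ₀ x hu)
  have hF := (hasFDerivAt_Rad φ₀ x hu).mul hpa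
  have hR := rad_pos φ₀ x hu
  refine hF.congr_fderiv ?_
  ext <;>
  · simp only [mk2, ContinuousLinearMap.add_apply, ContinuousLinearMap.smul_apply,
      ContinuousLinearMap.coe_fst', ContinuousLinearMap.coe_snd', smul_eq_mul,
      ContinuousLinearMap.coe_comp', Function.comp_apply, ContinuousLinearMap.inl_apply,
      ContinuousLinearMap.inr_apply, aa, bb]
    field_simp
    ring

lemma theta_eq (p : ℝ → ℝ) (hper : Function.Periodic p (2 * π)) (θ : ℝ × ℝ → ℝ)
    (hθ : ∀ r : ℝ, 0 < r → ∀ φ : ℝ, θ (r * Real.cos φ, r * Real.sin φ) = r * p φ)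
    (φ₀ : ℝ) (x : ℝ × ℝ) (hu : 0 < Uu φ₀ x) : θ x = Ff p φ₀ x := by
  have hq := q_pos φ₀ x hu
  have hR := rad_pos φ₀ x hu
  set z : ℂ := ⟨x.1, x.2⟩ with hz
  have habs : ‖z‖ = Rad x := by
    rw [Complex.norm_def, Complex.normSq_apply]
    unfold Rad
    norm_num [hz]
    ring_nf
  have h1 : Rad x * Real.cos (Complex.arg z) = x.1 := by
    rw [← habs]; exact Complex.norm_mul_cos_arg z
  have h2 : Rad x * Real.sin (Complex.arg z) = x.2 := by
    rw [← habs]; exact Complex.norm_mul_sin_arg z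
  have hθx : θ x = Rad x * p (Complex.arg z) := by
    have := hθ (Rad x) hR (Complex.arg z)
    rw [h1, h2] at this
    simpa using this
  have hcos : Real.cos (Complex.arg z) = Real.cos (Ang φ₀ x) := by
    rw [cosAng φ₀ x hu, ← h1]; field_simp
  have hsin : Real.sin (Complex.arg z) = Real.sin (Ang φ₀ x) := by
    rw [sinAng φ₀ x hu, ← h2]; field_simp
  have hangle : ((Complex.arg z : ℝ) : Real.Angle) = (Ang φ₀ x : ℝ) :=
    Real.Angle.cos_sin_inj hcos hsin
  obtain ⟨k, hk⟩ := Real.Angle.angle_eq_iff_two_pi_dvd_sub.mp hangle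
  have hpk : p (Complex.arg z) = p (Ang φ₀ x) := by
    have h := (hper.int_mul k) (Ang φ₀ x)
    rw [show Complex.arg z = Ang φ₀ x + (k : ℝ) * (2 * π) by linarith [hk]]
    exact h
  rw [hθx, hpk]; rfl

end SerreAux

open SerreAux

/-- **The cofactor of the Hessian of a 1-homogeneous planar potential**
(Serre, Proposition 4.1). Let `p` be `C²` and `2π`-periodic, and let
`θ(r cos φ, r sin φ) = r p(φ)` be the associated positively 1-homogeneous function.
Then at every `x = (r cos φ, r sin φ)` with `r > 0`, the adjugate of the Hessian of `θ`
equals `(p(φ) + p''(φ)) (x xᵀ)/|x|³`: explicitly `∂₂₂θ = (p+p'') x₁²/|x|³`,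
`∂₁₁θ = (p+p'') x₂²/|x|³` and `-∂₁₂θ = (p+p'') x₁x₂/|x|³`. -/

theorem adjugate_hessian_one_homogeneous_planar
    (p : ℝ → ℝ) (hp : ContDiff ℝ 2 p) (hper : Function.Periodic p (2 * π))
    (θ : ℝ × ℝ → ℝ)
    (hθ : ∀ r : ℝ, 0 < r → ∀ φ : ℝ, θ (r * cos φ, r * sin φ) = r * p φ)
    (r : ℝ) (hr : 0 < r) (φ : ℝ) :
    pd2 (pd2 θ) (r * cos φ, r * sin φ)
        = (p φ + deriv (deriv p) φ) * (r * cos φ) ^ 2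
            / Real.sqrt ((r * cos φ) ^ 2 + (r * sin φ) ^ 2) ^ 3 ∧
    pd1 (pd1 θ) (r * cos φ, r * sin φ)
        = (p φ + deriv (deriv p) φ) * (r * sin φ) ^ 2
            / Real.sqrt ((r * cos φ) ^ 2 + (r * sin φ) ^ 2) ^ 3 ∧
    -pd1 (pd2 θ) (r * cos φ, r * sin φ)
        = (p φ + deriv (deriv p) φ) * ((r * cos φ) * (r * sin φ))
            / Real.sqrt ((r * cos φ) ^ 2 + (r * sin φ) ^ 2) ^ 3 := by
  have hpyth := sin_sq_add_cos_sq φ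
  set x₀ : ℝ × ℝ := (r * cos φ, r * sin φ) with hx₀
  have hu₀ : 0 < Uu φ x₀ := by
    have : Uu φ x₀ = r := by unfold Uu; simp [hx₀]; linear_combination r * hpyth
    rw [this]; exact hr
  have hUopen : IsOpen {x : ℝ × ℝ | 0 < Uu φ x} :=
    isOpen_lt continuous_const (by unfold Uu; fun_prop)
  have hmem : x₀ ∈ {x : ℝ × ℝ | 0 < Uu φ x} := hu₀
  have hdiffp : Differentiable ℝ p := hp.differentiable (by norm_num)
  have hdiffdp : Differentiable ℝ (deriv p) := by
    have h2 : ContDiff ℝ ((1 : ℕ) + 1) p := by exact_mod_cast hp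
    exact (contDiff_succ_iff_deriv.mp h2).2.2.differentiable (by norm_num)
  have hFa : ∀ x ∈ {x : ℝ × ℝ | 0 < Uu φ x}, fderiv ℝ θ x = mk2 (aa p φ x) (bb p φ x) := by
    intro x hx
    have h1 : θ =ᶠ[nhds x] Ff p φ :=
      Filter.eventuallyEq_of_mem (hUopen.mem_nhds hx) (fun y hy => theta_eq p hper θ hθ φ y hy)
    rw [h1.fderiv_eq, (hasFDerivAt_Ff p hdiffp φ x hx).fderiv]
  have hpd1 : pd1 θ =ᶠ[nhds x₀] aa p φ :=
    Filter.eventuallyEq_of_mem (hUopen.mem_nhds hmem) (fun y hy => by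
      show fderiv ℝ θ y (1, 0) = _
      rw [hFa y hy]; simp)
  have hpd2 : pd2 θ =ᶠ[nhds x₀] bb p φ :=
    Filter.eventuallyEq_of_mem (hUopen.mem_nhds hmem) (fun y hy => by
      show fderiv ℝ θ y (0, 1) = _
      rw [hFa y hy]; simp)
  -- second derivatives
  have hR : 0 < Rad x₀ := rad_pos φ x₀ hu₀
  have hAng := hasFDerivAt_Ang φ x₀ hu₀
  have hRadD := hasFDerivAt_Rad φ x₀ hu₀
  have hdp : HasDerivAt p (deriv p (Ang φ x₀)) (Ang φ x₀) := (hdiffp _).hasDerivAt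
  have hdp2 : HasDerivAt (deriv p) (deriv (deriv p) (Ang φ x₀)) (Ang φ x₀) := (hdiffdp _).hasDerivAt
  have hpa := hdp.comp_hasFDerivAt x₀ hAng
  have hp'a := hdp2.comp_hasFDerivAt x₀ hAng
  have hinvR := (hasDerivAt_inv hR.ne').comp_hasFDerivAt x₀ hRadD
  have haa := ((hpa.mul hasFDerivAt_fst).sub (hp'a.mul hasFDerivAt_snd)).mul hinvR
  have hbb := ((hpa.mul hasFDerivAt_snd).add (hp'a.mul hasFDerivAt_fst)).mul hinvR
  have haa' : HasFDerivAt (aa p φ) _ x₀ := haa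
  have hbb' : HasFDerivAt (bb p φ) _ x₀ := hbb
  have hV0 : Vv φ x₀ = 0 := by unfold Vv; simp [hx₀]; ring
  have hang0 : Ang φ x₀ = φ := by unfold Ang; rw [hV0]; simp
  have hrad0 : Rad x₀ = r := by
    unfold Rad
    rw [show x₀.1 ^ 2 + x₀.2 ^ 2 = r ^ 2 by simp [hx₀]; linear_combination r ^ 2 * hpyth]
    exact Real.sqrt_sq hr.le
  have hsqrt : Real.sqrt ((r * cos φ) ^ 2 + (r * sin φ) ^ 2) = r := by
    rw [show (r * cos φ) ^ 2 + (r * sin φ) ^ 2 = r ^ 2 by linear_combination r ^ 2 * hpyth]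
    exact Real.sqrt_sq hr.le
  refine ⟨?_, ?_, ?_⟩
  · show fderiv ℝ (pd2 θ) x₀ (0, 1) = _
    rw [hpd2.fderiv_eq, hbb'.fderiv]
    simp only [mk2, ContinuousLinearMap.add_apply, ContinuousLinearMap.smul_apply,
      ContinuousLinearMap.coe_fst', ContinuousLinearMap.coe_snd', smul_eq_mul,
      ContinuousLinearMap.coe_comp', Function.comp_apply, ContinuousLinearMap.inl_apply,
      ContinuousLinearMap.inr_apply, ContinuousLinearMap.sub_apply, ContinuousLinearMap.neg_apply,
      Pi.add_apply, Pi.sub_apply, Pi.mul_apply]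
    rw [hang0, hrad0, hsqrt]
    have hrne : r ≠ 0 := hr.ne'
    field_simp
    first
      | linear_combination (-(p φ * r ^ 2)) * hpyth
      | linear_combination (r ^ 2 * deriv p φ) * hpyth
  · show fderiv ℝ (pd1 θ) x₀ (1, 0) = _
    rw [hpd1.fderiv_eq, haa'.fderiv]
    simp only [mk2, ContinuousLinearMap.add_apply, ContinuousLinearMap.smul_apply,
      ContinuousLinearMap.coe_fst', ContinuousLinearMap.coe_snd', smul_eq_mul,
      ContinuousLinearMap.coe_comp', Function.comp_apply, ContinuousLinearMap.inl_apply,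
      ContinuousLinearMap.inr_apply, ContinuousLinearMap.sub_apply, ContinuousLinearMap.neg_apply,
      Pi.add_apply, Pi.sub_apply, Pi.mul_apply]
    rw [hang0, hrad0, hsqrt]
    have hrne : r ≠ 0 := hr.ne'
    field_simp
    first
      | linear_combination (-(p φ * r ^ 2)) * hpyth
      | linear_combination (r ^ 2 * deriv p φ) * hpyth
  · show -(fderiv ℝ (pd2 θ) x₀ (1, 0)) = _
    rw [hpd2.fderiv_eq, hbb'.fderiv]
    simp only [mk2, ContinuousLinearMap.add_apply, ContinuousLinearMap.smul_apply,
      ContinuousLinearMap.coe_fst', ContinuousLinearMap.coe_snd', smul_eq_mul,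
      ContinuousLinearMap.coe_comp', Function.comp_apply, ContinuousLinearMap.inl_apply,
      ContinuousLinearMap.inr_apply, ContinuousLinearMap.sub_apply, ContinuousLinearMap.neg_apply,
      Pi.add_apply, Pi.sub_apply, Pi.mul_apply]
    rw [hang0, hrad0, hsqrt]
    have hrne : r ≠ 0 := hr.ne'
    field_simp
    first
      | linear_combination (-(p φ * r ^ 2)) * hpyth
      | linear_combination (r ^ 2 * deriv p φ) * hpyth
end
end
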